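/- arXiv:1708.08538 — 5 statements merged into one kernel-verified Lean document; each statement's English description precedes it below -/
import Mathlib

section
/- Let X be a complex Banach space and Δ : S(c₀(Γ)) → S(X) a surjective isometry. If for some n ∈ Γ one has Δ(λe_n) = λΔ(e_n) for some λ ∈ 𝕋 \ {±1}, then Δ(μe_n) = μΔ(e_n) for all μ ∈ 𝕋. Similarly, if Δ(λe_n) = λ̄Δ(e_n) for some λ ∈ 𝕋 \ {±1}, then Δ(μe_n) = μ̄Δ(e_n) for all μ ∈ 𝕋. -/
open ZeroAtInfty Metric

/-- The canonical basis vector `e n` of `c₀(Γ)`. -/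
noncomputable def stdBasis {Γ : Type*} [TopologicalSpace Γ] [DiscreteTopology Γ] [DecidableEq Γ]
    (n : Γ) : C₀(Γ, ℂ) where
  toFun := fun k => if k = n then 1 else 0
  continuous_toFun := continuous_of_discreteTopology
  zero_at_infty' := by
    have h : (fun k => if k = n then (1 : ℂ) else 0) =ᶠ[Filter.cocompact Γ] 0 := by
      refine Filter.mem_cocompact.2 ⟨{n}, isCompact_singleton, ?_⟩
      intro k hk
      simp only [Set.mem_compl_iff, Set.mem_singleton_iff] at hk
      simp [hk]
    exact Filter.Tendsto.congr' h.symm tendsto_const_nhds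
section Aux
set_option linter.unusedSectionVars false
variable {Γ : Type*} [TopologicalSpace Γ] [DiscreteTopology Γ] [DecidableEq Γ]

lemma c0_norm_le (f : C₀(Γ, ℂ)) {C : ℝ} (hC : 0 ≤ C) : ‖f‖ ≤ C ↔ ∀ k, ‖f k‖ ≤ C := by
  rw [← ZeroAtInftyContinuousMap.norm_toBCF_eq_norm]
  exact BoundedContinuousFunction.norm_le hC

lemma c0_coord_le (f : C₀(Γ, ℂ)) (k : Γ) : ‖f k‖ ≤ ‖f‖ := by
  have := BoundedContinuousFunction.norm_coe_le_norm f.toBCF k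
  rwa [ZeroAtInftyContinuousMap.norm_toBCF_eq_norm] at this

lemma stdBasis_apply (n k : Γ) : stdBasis n k = if k = n then 1 else 0 := rfl

lemma norm_stdBasis (n : Γ) : ‖(stdBasis n : C₀(Γ, ℂ))‖ = 1 := by
  refine le_antisymm ((c0_norm_le _ zero_le_one).2 fun k => ?_) ?_
  · rw [stdBasis_apply]; split <;> simp
  · have := c0_coord_le (stdBasis n) n
    simpa [stdBasis_apply] using this

lemma eq_one_of_norm_add_one {a : ℂ} (h1 : ‖a‖ ≤ 1) (h2 : ‖a + 1‖ = 2) : a = 1 := by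
  have ha : Complex.normSq a ≤ 1 := by
    rw [← Complex.sq_norm]
    nlinarith [norm_nonneg a]
  have hb : Complex.normSq (a + 1) = 4 := by
    rw [← Complex.sq_norm, h2]; norm_num
  simp only [Complex.normSq_apply, Complex.add_re, Complex.add_im, Complex.one_re,
    Complex.one_im] at ha hb
  refine Complex.ext ?_ ?_ <;> simp only [Complex.one_re, Complex.one_im] <;>
    nlinarith [sq_nonneg a.im, sq_nonneg (a.re - 1)]

lemma center_stdBasis (n : Γ) (f : C₀(Γ, ℂ)) (hf : ‖f‖ = 1)
    (hC : ∀ h : C₀(Γ, ℂ), ‖h‖ = 1 → ‖h - stdBasis n‖ = 2 → ‖f - h‖ = 2) :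
    ‖f - stdBasis n‖ ≤ 1 := by
  have hsn : ‖(stdBasis n : C₀(Γ, ℂ))‖ = 1 := norm_stdBasis n
  have h2 : ‖(-(stdBasis n) : C₀(Γ, ℂ)) - stdBasis n‖ = 2 := by
    refine le_antisymm ((c0_norm_le _ (by norm_num)).2 fun k => ?_) ?_
    · simp only [ZeroAtInftyContinuousMap.coe_sub, ZeroAtInftyContinuousMap.coe_neg,
        Pi.sub_apply, Pi.neg_apply, stdBasis_apply]
      split <;> norm_num
    · have := c0_coord_le (-(stdBasis n) - stdBasis n) n
      refine le_trans (le_of_eq ?_) this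
      simp only [ZeroAtInftyContinuousMap.coe_sub, ZeroAtInftyContinuousMap.coe_neg,
        Pi.sub_apply, Pi.neg_apply, stdBasis_apply, if_pos rfl]
      norm_num
  have hfe : ‖f + stdBasis n‖ = 2 := by
    have := hC (-(stdBasis n)) (by rw [norm_neg, hsn]) h2
    rwa [sub_neg_eq_add] at this
  have hfn1 : ‖f n‖ ≤ 1 := by rw [← hf]; exact c0_coord_le f n
  have hfn : f n = 1 := by
    have hle : ‖f n + 1‖ ≤ 2 := by
      have h1n : ‖(1:ℂ)‖ = 1 := by norm_num
      calc ‖f n + 1‖ ≤ ‖f n‖ + ‖(1:ℂ)‖ := norm_add_le _ _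
        _ ≤ 2 := by rw [h1n]; linarith
    have hge : 2 ≤ ‖f n + 1‖ := by
      by_contra hlt
      push_neg at hlt
      set δ := min (2 - ‖f n + 1‖) 1 with hδ
      have hδ1 : δ ≤ 1 := min_le_right _ _
      have hδ2 : δ ≤ 2 - ‖f n + 1‖ := min_le_left _ _
      have hδpos : 0 < δ := lt_min (by linarith) one_pos
      have hnot : ¬ (‖f + stdBasis n‖ ≤ 2 - δ/2) := by rw [hfe]; linarith
      rw [c0_norm_le _ (by linarith)] at hnot
      push_neg at hnot
      obtain ⟨k, hk⟩ := hnot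
      by_cases hkn : k = n
      · subst hkn
        have hval : (f + stdBasis k) k = f k + 1 := by
          simp [stdBasis_apply]
        rw [hval] at hk
        linarith
      · have : ‖(f + stdBasis n) k‖ ≤ 1 := by
          simp only [ZeroAtInftyContinuousMap.coe_add, Pi.add_apply, stdBasis_apply,
            if_neg hkn, add_zero]
          rw [← hf]; exact c0_coord_le f k
        linarith
    exact eq_one_of_norm_add_one hfn1 (le_antisymm hle hge)
  rw [c0_norm_le _ zero_le_one]
  intro k
  by_cases hkn : k = n
  · subst hkn
    simp [ZeroAtInftyContinuousMap.coe_sub, stdBasis_apply, hfn]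
  · simp only [ZeroAtInftyContinuousMap.coe_sub, Pi.sub_apply, stdBasis_apply,
      if_neg hkn, sub_zero]
    rw [← hf]; exact c0_coord_le f k

lemma badpoint (g : C₀(Γ, ℂ)) (hg : ‖g‖ = 1) (k₀ : Γ) (h0 : g k₀ ≠ 0) (h1 : ‖g k₀‖ < 1) :
    ∃ f : C₀(Γ, ℂ), ‖f‖ = 1 ∧ (∀ h : C₀(Γ, ℂ), ‖h‖ = 1 → ‖h - g‖ = 2 → ‖f - h‖ = 2) ∧
      1 < ‖f - g‖ := by
  set r : ℝ := ‖g k₀‖ with hr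
  have hrpos : 0 < r := norm_pos_iff.2 h0
  set v : ℂ := -((r⁻¹ : ℝ) : ℂ) * g k₀ with hv
  have hvnorm : ‖v‖ = 1 := by
    rw [hv, norm_mul, norm_neg, Complex.norm_real, Real.norm_eq_abs,
      abs_of_pos (inv_pos.2 hrpos), ← hr]
    field_simp
  set f : C₀(Γ, ℂ) := g + (v - g k₀) • stdBasis k₀ with hf
  have hfk : ∀ k, k ≠ k₀ → f k = g k := by
    intro k hk
    simp [hf, stdBasis_apply, hk]
  have hfk₀ : f k₀ = v := by
    simp [hf, stdBasis_apply]
  have hfnorm : ‖f‖ = 1 := by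
    refine le_antisymm ((c0_norm_le _ zero_le_one).2 fun k => ?_) ?_
    · by_cases hk : k = k₀
      · subst hk; rw [hfk₀, hvnorm]
      · rw [hfk k hk, ← hg]; exact c0_coord_le g k
    · have := c0_coord_le f k₀
      rwa [hfk₀, hvnorm] at this
  have hdiff : ‖f k₀ - g k₀‖ = 1 + r := by
    have : f k₀ - g k₀ = -(((r⁻¹ + 1 : ℝ)) : ℂ) * g k₀ := by
      rw [hfk₀, hv]; push_cast; ring
    rw [this, norm_mul, norm_neg, Complex.norm_real, Real.norm_eq_abs,
      abs_of_pos (by positivity), ← hr]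
    field_simp
  refine ⟨f, hfnorm, ?_, ?_⟩
  · intro h hh hd2
    refine le_antisymm ?_ ?_
    · calc ‖f - h‖ ≤ ‖f‖ + ‖h‖ := norm_sub_le _ _
        _ = 2 := by rw [hfnorm, hh]; norm_num
    · by_contra hlt
      push_neg at hlt
      set δ := min (2 - ‖f - h‖) (1 - r) with hδ
      have hδ1 : δ ≤ 1 - r := min_le_right _ _
      have hδ2 : δ ≤ 2 - ‖f - h‖ := min_le_left _ _
      have hδpos : 0 < δ := lt_min (by linarith) (by linarith)
      have hnot : ¬ (‖h - g‖ ≤ 2 - δ/2) := by rw [hd2]; linarith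
      rw [c0_norm_le _ (by linarith)] at hnot
      push_neg at hnot
      obtain ⟨k, hk⟩ := hnot
      have hkval : (h - g) k = h k - g k := by
        simp [ZeroAtInftyContinuousMap.coe_sub]
      rw [hkval] at hk
      by_cases hkk : k = k₀
      · subst hkk
        have : ‖h k - g k‖ ≤ 1 + r := by
          calc ‖h k - g k‖ ≤ ‖h k‖ + ‖g k‖ := norm_sub_le _ _
            _ ≤ 1 + r := by
                have := c0_coord_le h k
                rw [hh] at this
                rw [← hr]
                linarith
        linarith
      · have hle : ‖f k - h k‖ ≤ ‖f - h‖ := by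
          have := c0_coord_le (f - h) k
          rwa [show (f - h) k = f k - h k from by simp [ZeroAtInftyContinuousMap.coe_sub]]
            at this
        rw [hfk k hkk] at hle
        have : ‖g k - h k‖ = ‖h k - g k‖ := norm_sub_rev _ _
        linarith
  · have hle : ‖f k₀ - g k₀‖ ≤ ‖f - g‖ := by
      have := c0_coord_le (f - g) k₀
      rwa [show (f - g) k₀ = f k₀ - g k₀ from by simp [ZeroAtInftyContinuousMap.coe_sub]]
        at this
    rw [hdiff] at hle
    linarith

end Aux

section Scalar

lemma normSq_of_norm {a : ℂ} {r : ℝ} (h : ‖a‖ = r) : Complex.normSq a = r^2 := by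
  rw [← Complex.sq_norm, h]

lemma dichotomy_scalar {c μ : ℂ} (hc : ‖c‖ = 1) (hμ : ‖μ‖ = 1)
    (h : ‖c - 1‖ = ‖μ - 1‖) : c = μ ∨ c = starRingEnd ℂ μ := by
  have hc' := normSq_of_norm hc
  have hμ' := normSq_of_norm hμ
  have h' : Complex.normSq (c - 1) = Complex.normSq (μ - 1) := by
    rw [normSq_of_norm h, normSq_of_norm rfl]
  simp only [Complex.normSq_apply, Complex.sub_re, Complex.sub_im, Complex.one_re,
    Complex.one_im] at hc' hμ' h'
  have hre : c.re = μ.re := by nlinarith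
  have him : |c.im| = |μ.im| := by
    rw [← sq_eq_sq_iff_abs_eq_abs]; nlinarith
  rcases abs_eq_abs.1 him with h | h
  · exact Or.inl (Complex.ext hre h)
  · exact Or.inr (Complex.ext (by simpa [Complex.conj_re]) (by simpa [Complex.conj_im]))

lemma im_eq_zero_of_norm_conj_sub {μ lam : ℂ}
    (h : ‖starRingEnd ℂ μ - lam‖ = ‖μ - lam‖) (hlam : lam.im ≠ 0) : μ.im = 0 := by
  have h' : Complex.normSq (starRingEnd ℂ μ - lam) = Complex.normSq (μ - lam) := by
    rw [normSq_of_norm h, normSq_of_norm rfl]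
  simp only [Complex.normSq_apply, Complex.sub_re, Complex.sub_im, Complex.conj_re,
    Complex.conj_im] at h'
  have : μ.im * lam.im = 0 := by nlinarith
  rcases mul_eq_zero.1 this with h | h
  · exact h
  · exact absurd h hlam

lemma im_ne_zero_of {lam : ℂ} (h : ‖lam‖ = 1) (h1 : lam ≠ 1) (h2 : lam ≠ -1) : lam.im ≠ 0 := by
  intro him
  have hn := normSq_of_norm h
  simp only [Complex.normSq_apply, him] at hn
  have : |lam.re| = |(1:ℝ)| := by rw [← sq_eq_sq_iff_abs_eq_abs]; nlinarith
  rcases abs_eq_abs.1 this with h' | h'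
  · exact h1 (Complex.ext (by simpa using h') him)
  · refine h2 (Complex.ext ?_ ?_) <;> simp [h', him]

end Scalar

section Main
set_option linter.unusedSectionVars false
set_option maxHeartbeats 1000000
variable {Γ : Type*} [TopologicalSpace Γ] [DiscreteTopology Γ] [DecidableEq Γ]
  {X : Type*} [NormedAddCommGroup X] [NormedSpace ℂ X]

lemma c0_norm_smul (c : ℂ) (f : C₀(Γ,ℂ)) : ‖c • f‖ = ‖c‖ * ‖f‖ := norm_smul c f

lemma c0_sub_smul (c d : ℂ) (f : C₀(Γ,ℂ)) : (c - d) • f = c • f - d • f := sub_smul c d f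

lemma c0_one_smul (f : C₀(Γ,ℂ)) : (1:ℂ) • f = f := one_smul ℂ f

theorem tingley_dichotomy
    (Δ : sphere (0 : C₀(Γ, ℂ)) 1 → sphere (0 : X) 1)
    (hΔiso : Isometry Δ) (hΔsurj : Function.Surjective Δ)
    (n : Γ) (y : sphere (0 : C₀(Γ, ℂ)) 1) (hy : (y : C₀(Γ, ℂ)) = stdBasis n)
    (μ : ℂ) (hμ : ‖μ‖ = 1) (w : sphere (0 : C₀(Γ, ℂ)) 1)
    (hw : (Δ w : X) = μ • (Δ y : X)) :
    ∃ c : ℂ, (c = μ ∨ c = starRingEnd ℂ μ) ∧ (w : C₀(Γ, ℂ)) = c • stdBasis n := by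
  classical
  have hone : ‖(1:ℂ)‖ = 1 := norm_one
  set e := Equiv.ofBijective Δ ⟨hΔiso.injective, hΔsurj⟩ with he
  have heapp : ∀ x, e x = Δ x := fun _ => rfl
  have hΔy1 : ‖(Δ y : X)‖ = 1 := mem_sphere_zero_iff_norm.1 (Δ y).2
  have hmem : ∀ ν : ℂ, ‖ν‖ = 1 → ∀ v : sphere (0:X) 1, ν • (v : X) ∈ sphere (0:X) 1 := by
    intro ν hν v
    rw [mem_sphere_zero_iff_norm, norm_smul, hν, mem_sphere_zero_iff_norm.1 v.2, one_mul]
  set ψ : ∀ ν : ℂ, ‖ν‖ = 1 → sphere (0 : C₀(Γ, ℂ)) 1 :=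
    fun ν hν => e.symm ⟨ν • (Δ y : X), hmem ν hν (Δ y)⟩ with hψdef
  have hΔψ : ∀ ν (hν : ‖ν‖ = 1), (Δ (ψ ν hν) : X) = ν • (Δ y : X) := by
    intro ν hν
    have h := e.apply_symm_apply ⟨ν • (Δ y : X), hmem ν hν (Δ y)⟩
    rw [heapp] at h
    exact congrArg Subtype.val h
  have hdistΔ : ∀ a b : sphere (0 : C₀(Γ,ℂ)) 1, dist (Δ a) (Δ b) = dist a b :=
    fun a b => hΔiso.dist_eq a b
  have hψdist : ∀ ν₁ (h₁ : ‖ν₁‖=1) ν₂ (h₂ : ‖ν₂‖=1),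
      ‖((ψ ν₁ h₁ : _) : C₀(Γ,ℂ)) - ((ψ ν₂ h₂ : _) : C₀(Γ,ℂ))‖ = ‖ν₁ - ν₂‖ := by
    intro ν₁ h₁ ν₂ h₂
    rw [← dist_eq_norm, ← Subtype.dist_eq, ← hdistΔ, Subtype.dist_eq, dist_eq_norm,
      hΔψ ν₁ h₁, hΔψ ν₂ h₂, ← sub_smul, norm_smul, hΔy1, mul_one]
  have hψcong : ∀ ν₁ ν₂ (h₁ : ‖ν₁‖=1) (h₂ : ‖ν₂‖=1), ν₁ = ν₂ → ψ ν₁ h₁ = ψ ν₂ h₂ := by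
    intro ν₁ ν₂ h₁ h₂ hh
    subst hh
    rfl
  -- every ψ value has coordinates of modulus 0 or 1
  have hE : ∀ ν (hν : ‖ν‖ = 1) (k : Γ),
      ((ψ ν hν : _) : C₀(Γ,ℂ)) k = 0 ∨
        ‖((ψ ν hν : _) : C₀(Γ,ℂ)) k‖ = 1 := by
    intro ν hν k₀
    by_contra hcon
    push_neg at hcon
    obtain ⟨hne0, hne1⟩ := hcon
    have hgnorm : ‖((ψ ν hν : _) : C₀(Γ,ℂ))‖ = 1 :=
      mem_sphere_zero_iff_norm.1 (ψ ν hν).2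
    have hlt1 : ‖((ψ ν hν : _) : C₀(Γ,ℂ)) k₀‖ < 1 :=
      lt_of_le_of_ne (le_trans (c0_coord_le _ k₀) (le_of_eq hgnorm)) hne1
    obtain ⟨f, hf1, hfC, hfgt⟩ := badpoint _ hgnorm k₀ hne0 hlt1
    have hconj1 : ‖starRingEnd ℂ ν‖ = 1 := by rwa [RCLike.norm_conj]
    have hconjmul : starRingEnd ℂ ν * ν = 1 := by rw [Complex.conj_mul', hν]; norm_num
    have key : ∀ a b : X, ‖(starRingEnd ℂ ν) • a - b‖ = ‖a - ν • b‖ := by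
      intro a b
      have h1 : (starRingEnd ℂ ν) • a - b = (starRingEnd ℂ ν) • (a - ν • b) := by
        rw [smul_sub, smul_smul, hconjmul, one_smul]
      rw [h1, norm_smul, hconj1, one_mul]
    set fhat : sphere (0 : C₀(Γ,ℂ)) 1 := ⟨f, mem_sphere_zero_iff_norm.2 hf1⟩ with hfhat
    set w' := e.symm ⟨(starRingEnd ℂ ν) • (Δ fhat : X), hmem _ hconj1 (Δ fhat)⟩ with hw'def
    have hΔw' : (Δ w' : X) = (starRingEnd ℂ ν) • (Δ fhat : X) := by
      have h := e.apply_symm_apply ⟨(starRingEnd ℂ ν) • (Δ fhat : X), hmem _ hconj1 (Δ fhat)⟩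
      rw [heapp] at h
      exact congrArg Subtype.val h
    have hw'norm : ‖(w' : C₀(Γ,ℂ))‖ = 1 := mem_sphere_zero_iff_norm.1 w'.2
    have hA : ‖(w' : C₀(Γ,ℂ)) - stdBasis n‖ = ‖f - ((ψ ν hν : _) : C₀(Γ,ℂ))‖ := by
      calc ‖(w' : C₀(Γ,ℂ)) - stdBasis n‖
          = dist w' y := by rw [← hy, Subtype.dist_eq, dist_eq_norm]
        _ = dist (Δ w') (Δ y) := (hdistΔ _ _).symm
        _ = ‖(Δ fhat : X) - ν • (Δ y : X)‖ := by
            rw [Subtype.dist_eq, dist_eq_norm, hΔw', key]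
        _ = dist (Δ fhat) (Δ (ψ ν hν)) := by
            rw [Subtype.dist_eq, dist_eq_norm, hΔψ ν hν]
        _ = dist fhat (ψ ν hν) := hdistΔ _ _
        _ = ‖f - ((ψ ν hν : _) : C₀(Γ,ℂ))‖ := by
            rw [Subtype.dist_eq, dist_eq_norm]
    have hB : ∀ h : C₀(Γ,ℂ), ‖h‖ = 1 → ‖h - stdBasis n‖ = 2 → ‖(w' : C₀(Γ,ℂ)) - h‖ = 2 := by
      intro h hh hd2
      set hhat : sphere (0 : C₀(Γ,ℂ)) 1 := ⟨h, mem_sphere_zero_iff_norm.2 hh⟩ with hhhat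
      set h' := e.symm ⟨ν • (Δ hhat : X), hmem ν hν (Δ hhat)⟩ with hh'def
      have hΔh' : (Δ h' : X) = ν • (Δ hhat : X) := by
        have hq := e.apply_symm_apply ⟨ν • (Δ hhat : X), hmem ν hν (Δ hhat)⟩
        rw [heapp] at hq
        exact congrArg Subtype.val hq
      have hh'g : ‖((h' : _) : C₀(Γ,ℂ)) - ((ψ ν hν : _) : C₀(Γ,ℂ))‖ = 2 := by
        calc ‖((h' : _) : C₀(Γ,ℂ)) - ((ψ ν hν : _) : C₀(Γ,ℂ))‖
            = dist (Δ h') (Δ (ψ ν hν)) := by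
              rw [hdistΔ, Subtype.dist_eq, dist_eq_norm]
          _ = ‖ν • ((Δ hhat : X) - (Δ y : X))‖ := by
              rw [Subtype.dist_eq, dist_eq_norm, hΔh', hΔψ ν hν, smul_sub]
          _ = ‖(Δ hhat : X) - (Δ y : X)‖ := by rw [norm_smul, hν, one_mul]
          _ = dist hhat y := by
              rw [← dist_eq_norm, ← Subtype.dist_eq, hdistΔ]
          _ = ‖h - stdBasis n‖ := by rw [Subtype.dist_eq, dist_eq_norm, hy]
          _ = 2 := hd2
      have hf2 := hfC ((h' : _) : C₀(Γ,ℂ))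
        (mem_sphere_zero_iff_norm.1 h'.2) hh'g
      calc ‖(w' : C₀(Γ,ℂ)) - h‖
          = dist (Δ w') (Δ hhat) := by rw [hdistΔ, Subtype.dist_eq, dist_eq_norm]
        _ = ‖(Δ fhat : X) - ν • (Δ hhat : X)‖ := by
            rw [Subtype.dist_eq, dist_eq_norm, hΔw', key]
        _ = dist (Δ fhat) (Δ h') := by rw [Subtype.dist_eq, dist_eq_norm, hΔh']
        _ = ‖f - ((h' : _) : C₀(Γ,ℂ))‖ := by
            rw [hdistΔ, Subtype.dist_eq, dist_eq_norm]
        _ = 2 := hf2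
    have := center_stdBasis n (w' : C₀(Γ,ℂ)) hw'norm hB
    rw [hA] at this
    linarith
  -- base point
  have hψone : ψ 1 hone = y := by
    have h1 : (⟨(1:ℂ) • (Δ y : X), hmem 1 hone (Δ y)⟩ : sphere (0:X) 1) = Δ y :=
      Subtype.ext (one_smul ℂ _)
    show e.symm ⟨(1:ℂ) • (Δ y : X), hmem 1 hone (Δ y)⟩ = y
    rw [h1, ← heapp, e.symm_apply_apply]
  -- step
  have hstep : ∀ (ν₁ : ℂ) (h₁ : ‖ν₁‖=1) (ν₂ : ℂ) (h₂ : ‖ν₂‖=1) (c : ℂ),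
      ((ψ ν₁ h₁ : _) : C₀(Γ,ℂ)) = c • stdBasis n →
      ‖ν₂ - ν₁‖ < 1 →
      ∃ c' : ℂ, ‖c'‖ = 1 ∧ ((ψ ν₂ h₂ : _) : C₀(Γ,ℂ)) = c' • stdBasis n := by
    intro ν₁ h₁ ν₂ h₂ c hc hd
    have hcnorm : ‖c‖ = 1 := by
      have h3 : ‖((ψ ν₁ h₁ : _) : C₀(Γ,ℂ))‖ = 1 :=
        mem_sphere_zero_iff_norm.1 (ψ ν₁ h₁).2
      rwa [hc, c0_norm_smul, norm_stdBasis, mul_one] at h3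
    have hdlt : ‖((ψ ν₂ h₂ : _) : C₀(Γ,ℂ)) - ((ψ ν₁ h₁ : _) : C₀(Γ,ℂ))‖ < 1 := by
      rw [hψdist ν₂ h₂ ν₁ h₁]; exact hd
    have hcoord : ∀ k, ‖((ψ ν₂ h₂ : _) : C₀(Γ,ℂ)) k - (c • stdBasis n) k‖ < 1 := by
      intro k
      have h3 := c0_coord_le (((ψ ν₂ h₂ : _) : C₀(Γ,ℂ)) - ((ψ ν₁ h₁ : _) : C₀(Γ,ℂ))) k
      rw [show (((ψ ν₂ h₂ : _) : C₀(Γ,ℂ)) - ((ψ ν₁ h₁ : _) : C₀(Γ,ℂ))) k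
          = ((ψ ν₂ h₂ : _) : C₀(Γ,ℂ)) k - ((ψ ν₁ h₁ : _) : C₀(Γ,ℂ)) k from by
            simp [ZeroAtInftyContinuousMap.coe_sub]] at h3
      rw [← hc]
      exact lt_of_le_of_lt h3 hdlt
    have hcn : (c • stdBasis n : C₀(Γ,ℂ)) n = c := by
      simp [stdBasis_apply]
    have hn0 : ((ψ ν₂ h₂ : _) : C₀(Γ,ℂ)) n ≠ 0 := by
      intro h0
      have h4 := hcoord n
      rw [h0, hcn, zero_sub, norm_neg, hcnorm] at h4
      exact lt_irrefl 1 h4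
    have hn1 : ‖((ψ ν₂ h₂ : _) : C₀(Γ,ℂ)) n‖ = 1 :=
      (hE ν₂ h₂ n).resolve_left hn0
    refine ⟨((ψ ν₂ h₂ : _) : C₀(Γ,ℂ)) n, hn1, ?_⟩
    ext k
    by_cases hk : k = n
    · subst hk
      simp [stdBasis_apply]
    · have h4 := hcoord k
      have hck : (c • stdBasis n : C₀(Γ,ℂ)) k = 0 := by simp [stdBasis_apply, hk]
      have hzero : ((ψ ν₂ h₂ : _) : C₀(Γ,ℂ)) k = 0 := by
        rcases hE ν₂ h₂ k with h5 | h5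
        · exact h5
        · exfalso
          rw [hck, sub_zero, h5] at h4
          exact lt_irrefl 1 h4
      rw [hzero]
      simp [stdBasis_apply, hk]
  -- the chain along the circle
  have hμarg : Complex.exp ((μ.arg : ℂ) * Complex.I) = μ := by
    have h := Complex.norm_mul_exp_arg_mul_I μ
    rw [hμ] at h
    simpa using h
  have hu1 : ∀ j : ℕ, ‖Complex.exp ((μ.arg * j / 8 : ℝ) * Complex.I)‖ = 1 := by
    intro j
    rw [Complex.norm_exp_ofReal_mul_I]
  have hustep : ∀ j : ℕ, ‖Complex.exp ((μ.arg * (j+1 : ℕ) / 8 : ℝ) * Complex.I)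
      - Complex.exp ((μ.arg * j / 8 : ℝ) * Complex.I)‖ < 1 := by
    intro j
    have hsplit : Complex.exp ((μ.arg * (j+1 : ℕ) / 8 : ℝ) * Complex.I)
        = Complex.exp ((μ.arg * j / 8 : ℝ) * Complex.I) * Complex.exp ((μ.arg / 8 : ℝ) * Complex.I) := by
      rw [← Complex.exp_add]
      congr 1
      push_cast
      ring
    have habs : ‖((μ.arg / 8 : ℝ) : ℂ) * Complex.I‖ = |μ.arg| / 8 := by
      rw [norm_mul, Complex.norm_I, mul_one, Complex.norm_real, Real.norm_eq_abs, abs_div]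
      norm_num
    have hargle : |μ.arg| ≤ Real.pi := Complex.abs_arg_le_pi μ
    have hpi : Real.pi < 3.15 := Real.pi_lt_d2
    have hle1 : ‖((μ.arg / 8 : ℝ) : ℂ) * Complex.I‖ ≤ 1 := by
      rw [habs]; linarith
    have hexp := Complex.norm_exp_sub_one_le hle1
    calc ‖Complex.exp ((μ.arg * (j+1 : ℕ) / 8 : ℝ) * Complex.I)
        - Complex.exp ((μ.arg * j / 8 : ℝ) * Complex.I)‖
        = ‖Complex.exp ((μ.arg * j / 8 : ℝ) * Complex.I)
            * (Complex.exp ((μ.arg / 8 : ℝ) * Complex.I) - 1)‖ := by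
          rw [hsplit]; ring_nf
      _ = ‖Complex.exp ((μ.arg / 8 : ℝ) * Complex.I) - 1‖ := by
          rw [norm_mul, hu1 j, one_mul]
      _ ≤ 2 * (|μ.arg| / 8) := by
          calc ‖Complex.exp ((μ.arg / 8 : ℝ) * Complex.I) - 1‖
              ≤ 2 * ‖((μ.arg / 8 : ℝ) : ℂ) * Complex.I‖ := hexp
            _ = 2 * (|μ.arg| / 8) := by rw [habs]
      _ < 1 := by linarith
  have hchain : ∀ j : ℕ, ∃ c : ℂ, ‖c‖ = 1 ∧
      ((ψ (Complex.exp ((μ.arg * j / 8 : ℝ) * Complex.I)) (hu1 j) : _) : C₀(Γ,ℂ)) = c • stdBasis n := by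
    intro j
    induction j with
    | zero =>
      refine ⟨1, hone, ?_⟩
      have h0 : Complex.exp ((μ.arg * (0:ℕ) / 8 : ℝ) * Complex.I) = 1 := by
        norm_num
      rw [hψcong _ _ (hu1 0) hone h0, hψone, hy, one_smul]
    | succ j ih =>
      obtain ⟨c, hc1, hc2⟩ := ih
      exact hstep _ (hu1 j) _ (hu1 (j+1)) c hc2 (hustep j)
  obtain ⟨c, hc1, hc2⟩ := hchain 8
  have h8 : Complex.exp ((μ.arg * (8:ℕ) / 8 : ℝ) * Complex.I) = μ := by
    rw [show (μ.arg * (8:ℕ) / 8 : ℝ) = μ.arg from by push_cast; ring]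
    exact hμarg
  rw [hψcong _ _ (hu1 8) hμ h8] at hc2
  -- pin down c
  have hcpin : ‖c - 1‖ = ‖μ - 1‖ := by
    have hd := hψdist μ hμ 1 hone
    rw [hc2, hψone, hy] at hd
    calc ‖c - 1‖ = ‖(c - 1) • (stdBasis n : C₀(Γ,ℂ))‖ := by
          rw [c0_norm_smul, norm_stdBasis, mul_one]
      _ = ‖c • (stdBasis n : C₀(Γ,ℂ)) - stdBasis n‖ := by rw [c0_sub_smul, c0_one_smul]
      _ = ‖μ - 1‖ := hd
  have hwψ : w = ψ μ hμ := by
    apply hΔiso.injective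
    apply Subtype.ext
    rw [hw, hΔψ μ hμ]
  refine ⟨c, dichotomy_scalar hc1 hμ hcpin, ?_⟩
  rw [hwψ]
  exact hc2

end Main

/-- If `Δ(λ eₙ) = λ Δ(eₙ)` (resp. `Δ(λ eₙ) = conj λ • Δ(eₙ)`) for a single
`λ ∈ 𝕋 \ {±1}`, then the same behaviour holds for every unimodular `μ`. -/
theorem unimodular_behaviour_propagates {Γ : Type*} [TopologicalSpace Γ] [DiscreteTopology Γ]
    [DecidableEq Γ] [Infinite Γ]
    {X : Type*} [NormedAddCommGroup X] [NormedSpace ℂ X] [CompleteSpace X]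
    (Δ : sphere (0 : C₀(Γ, ℂ)) 1 → sphere (0 : X) 1)
    (hΔiso : Isometry Δ) (hΔsurj : Function.Surjective Δ)
    (n : Γ) (lam : ℂ) (hlam : ‖lam‖ = 1) (hlam1 : lam ≠ 1) (hlam2 : lam ≠ -1) :
    ((∀ x y : sphere (0 : C₀(Γ, ℂ)) 1, (x : C₀(Γ, ℂ)) = lam • stdBasis n →
        (y : C₀(Γ, ℂ)) = stdBasis n → (Δ x : X) = lam • (Δ y : X)) →
      ∀ μ : ℂ, ‖μ‖ = 1 → ∀ x y : sphere (0 : C₀(Γ, ℂ)) 1,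
        (x : C₀(Γ, ℂ)) = μ • stdBasis n → (y : C₀(Γ, ℂ)) = stdBasis n →
          (Δ x : X) = μ • (Δ y : X)) ∧
    ((∀ x y : sphere (0 : C₀(Γ, ℂ)) 1, (x : C₀(Γ, ℂ)) = lam • stdBasis n →
        (y : C₀(Γ, ℂ)) = stdBasis n → (Δ x : X) = (starRingEnd ℂ) lam • (Δ y : X)) →
      ∀ μ : ℂ, ‖μ‖ = 1 → ∀ x y : sphere (0 : C₀(Γ, ℂ)) 1,
        (x : C₀(Γ, ℂ)) = μ • stdBasis n → (y : C₀(Γ, ℂ)) = stdBasis n →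
          (Δ x : X) = (starRingEnd ℂ) μ • (Δ y : X)) := by
  have hIm : lam.im ≠ 0 := im_ne_zero_of hlam hlam1 hlam2
  have hbasis_mem : ∀ c : ℂ, ‖c‖ = 1 → c • stdBasis n ∈ sphere (0 : C₀(Γ,ℂ)) 1 := by
    intro c hc
    rw [mem_sphere_zero_iff_norm, c0_norm_smul, norm_stdBasis, hc, mul_one]
  constructor
  · intro hyp μ hμ x y hx hy
    have hΔy1 : ‖(Δ y : X)‖ = 1 := mem_sphere_zero_iff_norm.1 (Δ y).2
    set xl : sphere (0 : C₀(Γ,ℂ)) 1 := ⟨lam • stdBasis n, hbasis_mem lam hlam⟩ with hxldef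
    have hDxl : (Δ xl : X) = lam • (Δ y : X) := hyp xl y rfl hy
    obtain ⟨w, hw⟩ := hΔsurj ⟨μ • (Δ y : X), by
      rw [mem_sphere_zero_iff_norm, norm_smul, hμ, hΔy1, mul_one]⟩
    have hw' : (Δ w : X) = μ • (Δ y : X) := by rw [hw]
    obtain ⟨c, hcor, hwc⟩ := tingley_dichotomy Δ hΔiso hΔsurj n y hy μ hμ w hw'
    have hceq : c = μ := by
      rcases hcor with h | h
      · exact h
      · by_cases him : μ.im = 0
        · rw [h]; exact Complex.conj_eq_iff_im.2 him
        · exfalso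
          have hd1 : ‖(w : C₀(Γ,ℂ)) - (xl : C₀(Γ,ℂ))‖ = ‖μ - lam‖ := by
            rw [← dist_eq_norm, ← Subtype.dist_eq, ← hΔiso.dist_eq, Subtype.dist_eq,
              dist_eq_norm, hw', hDxl, ← sub_smul, norm_smul, hΔy1, mul_one]
          have hd2 : ‖(w : C₀(Γ,ℂ)) - (xl : C₀(Γ,ℂ))‖ = ‖starRingEnd ℂ μ - lam‖ := by
            rw [hwc, h]
            rw [show (starRingEnd ℂ μ) • stdBasis n - lam • stdBasis n
                = (starRingEnd ℂ μ - lam) • (stdBasis n : C₀(Γ,ℂ)) from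
                  (c0_sub_smul _ _ _).symm, c0_norm_smul, norm_stdBasis, mul_one]
          exact him (im_eq_zero_of_norm_conj_sub (by rw [← hd2, hd1]) hIm)
    have hwx : w = x := Subtype.ext (by rw [hwc, hceq, hx])
    rw [← hwx, hw']
  · intro hyp μ hμ x y hx hy
    have hΔy1 : ‖(Δ y : X)‖ = 1 := mem_sphere_zero_iff_norm.1 (Δ y).2
    set xl : sphere (0 : C₀(Γ,ℂ)) 1 := ⟨lam • stdBasis n, hbasis_mem lam hlam⟩ with hxldef
    have hDxl : (Δ xl : X) = (starRingEnd ℂ lam) • (Δ y : X) := hyp xl y rfl hy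
    have hμc : ‖starRingEnd ℂ μ‖ = 1 := by rwa [RCLike.norm_conj]
    obtain ⟨w, hw⟩ := hΔsurj ⟨(starRingEnd ℂ μ) • (Δ y : X), by
      rw [mem_sphere_zero_iff_norm, norm_smul, hμc, hΔy1, mul_one]⟩
    have hw' : (Δ w : X) = (starRingEnd ℂ μ) • (Δ y : X) := by rw [hw]
    obtain ⟨c, hcor, hwc⟩ := tingley_dichotomy Δ hΔiso hΔsurj n y hy _ hμc w hw'
    rw [Complex.conj_conj] at hcor
    have hceq : c = μ := by
      rcases hcor with h | h
      · by_cases him : μ.im = 0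
        · rw [h]; exact (Complex.conj_eq_iff_im.2 him)
        · exfalso
          have hd1 : ‖(w : C₀(Γ,ℂ)) - (xl : C₀(Γ,ℂ))‖ = ‖μ - lam‖ := by
            rw [← dist_eq_norm, ← Subtype.dist_eq, ← hΔiso.dist_eq, Subtype.dist_eq,
              dist_eq_norm, hw', hDxl, ← sub_smul, norm_smul, hΔy1, mul_one,
              ← map_sub, RCLike.norm_conj]
          have hd2 : ‖(w : C₀(Γ,ℂ)) - (xl : C₀(Γ,ℂ))‖ = ‖starRingEnd ℂ μ - lam‖ := by
            rw [hwc, h]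
            rw [show (starRingEnd ℂ μ) • stdBasis n - lam • stdBasis n
                = (starRingEnd ℂ μ - lam) • (stdBasis n : C₀(Γ,ℂ)) from
                  (c0_sub_smul _ _ _).symm, c0_norm_smul, norm_stdBasis, mul_one]
          exact him (im_eq_zero_of_norm_conj_sub (by rw [← hd2, hd1]) hIm)
      · exact h
    have hwx : w = x := Subtype.ext (by rw [hwc, hceq, hx])
    rw [← hwx, hw']
end

section
/- Let {x₁, …, x_m} be a subset of the unit sphere of a complex normed space X. Then {x₁, …, x_m} is completely M-orthogonal (i.e., ‖∑_{j=1}^m α_j x_j‖ = max_j |α_j| for all α₁,…,α_m ∈ ℂ) if and only if ‖∑_{j=1}^m α_j x_j‖ = 1 for every choice of α₁,…,α_m in the unit circle 𝕋. -/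
/-- Key lemma: if `‖∑ αⱼ xⱼ‖ = 1` for all unimodular `αⱼ`, then for any functional `f`
of norm at most one, `∑ ‖f (xⱼ)‖ ≤ 1`. -/
lemma sum_norm_dual_le_one {X : Type*} [NormedAddCommGroup X] [NormedSpace ℂ X] {m : ℕ}
    (x : Fin m → X)
    (H : ∀ α : Fin m → ℂ, (∀ j, ‖α j‖ = 1) → ‖∑ j, α j • x j‖ = 1)
    (f : X →L[ℂ] ℂ) (hf : ‖f‖ ≤ 1) : ∑ j, ‖f (x j)‖ ≤ 1 := by
  set α : Fin m → ℂ := fun j => if f (x j) = 0 then 1 else (‖f (x j)‖ : ℂ) / f (x j) with hαdef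
  have hα : ∀ j, ‖α j‖ = 1 := by
    intro j
    by_cases h : f (x j) = 0 <;> simp [α, h, norm_div]
  have hmul : ∀ j, α j * f (x j) = (‖f (x j)‖ : ℂ) := by
    intro j
    by_cases h : f (x j) = 0 <;> simp [α, h, div_mul_cancel₀]
  have hsum : ((∑ j, ‖f (x j)‖ : ℝ) : ℂ) = f (∑ j, α j • x j) := by
    rw [map_sum]
    push_cast
    refine Finset.sum_congr rfl fun j _ => ?_
    rw [map_smul, smul_eq_mul, hmul]
  calc ∑ j, ‖f (x j)‖ = ‖((∑ j, ‖f (x j)‖ : ℝ) : ℂ)‖ := by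
        rw [Complex.norm_real, Real.norm_of_nonneg
          (Finset.sum_nonneg fun j _ => norm_nonneg _)]
    _ = ‖f (∑ j, α j • x j)‖ := by rw [hsum]
    _ ≤ ‖f‖ * ‖∑ j, α j • x j‖ := f.le_opNorm _
    _ ≤ 1 * 1 := by
        have := H α hα
        rw [this]
        exact mul_le_mul_of_nonneg_right hf zero_le_one
    _ = 1 := one_mul 1

/-- A family `x₁, …, x_m` of norm-one elements of a complex normed space is completely
`M`-orthogonal if and only if `‖∑ αⱼ xⱼ‖ = 1` for all unimodular coefficients `αⱼ`. -/
theorem completely_M_orthogonal_iff_unimodular {X : Type*} [NormedAddCommGroup X]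
    [NormedSpace ℂ X] (m : ℕ) (hm : 0 < m) (x : Fin m → X) (hx : ∀ j, ‖x j‖ = 1) :
    (∀ α : Fin m → ℂ, ‖∑ j, α j • x j‖ =
        Finset.univ.sup' (Finset.univ_nonempty_iff.mpr (Fin.pos_iff_nonempty.mp hm))
          (fun j => ‖α j‖)) ↔
      (∀ α : Fin m → ℂ, (∀ j, ‖α j‖ = 1) → ‖∑ j, α j • x j‖ = 1) := by
  have hne : (Finset.univ : Finset (Fin m)).Nonempty :=
    Finset.univ_nonempty_iff.mpr (Fin.pos_iff_nonempty.mp hm)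
  constructor
  · intro h α hα
    rw [h α]
    refine le_antisymm (Finset.sup'_le _ _ fun j _ => (hα j).le) ?_
    obtain ⟨j, _⟩ := hne
    exact (hα j) ▸ Finset.le_sup' (fun j => ‖α j‖) (Finset.mem_univ j)
  · intro H α
    obtain ⟨k, -, hkM⟩ := Finset.exists_mem_eq_sup' hne (fun j => ‖α j‖)
    rw [hkM]
    have hxk0 : x k ≠ 0 := ne_zero_of_norm_ne_zero (by rw [hx k]; norm_num)
    have : Nontrivial X := nontrivial_of_ne (x k) 0 hxk0
    set y := ∑ j, α j • x j with hy
    refine le_antisymm ?_ ?_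
    · -- upper bound: ‖y‖ ≤ ‖α k‖
      obtain ⟨f, hf1, hfy⟩ := exists_dual_vector' ℂ y
      have hfle : ‖f‖ ≤ 1 := hf1.le
      have hkey := sum_norm_dual_le_one x H f hfle
      have : ‖y‖ = ‖f y‖ := by rw [hfy]; simp
      rw [this, hy, map_sum]
      calc ‖∑ j, f (α j • x j)‖ ≤ ∑ j, ‖f (α j • x j)‖ := norm_sum_le _ _
        _ = ∑ j, ‖α j‖ * ‖f (x j)‖ := by
            refine Finset.sum_congr rfl fun j _ => ?_
            rw [map_smul, norm_smul]
        _ ≤ ∑ j, ‖α k‖ * ‖f (x j)‖ := by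
            refine Finset.sum_le_sum fun j _ => ?_
            exact mul_le_mul_of_nonneg_right
              (hkM ▸ Finset.le_sup' (fun j => ‖α j‖) (Finset.mem_univ j)) (norm_nonneg _)
        _ = ‖α k‖ * ∑ j, ‖f (x j)‖ := (Finset.mul_sum _ _ _).symm
        _ ≤ ‖α k‖ * 1 := mul_le_mul_of_nonneg_left hkey (norm_nonneg _)
        _ = ‖α k‖ := mul_one _
    · -- lower bound: ‖α k‖ ≤ ‖y‖
      obtain ⟨f, hf1, hfxk⟩ := exists_dual_vector ℂ (x k) (norm_ne_zero_iff.mpr hxk0)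
      have hfle : ‖f‖ ≤ 1 := hf1.le
      have hkey := sum_norm_dual_le_one x H f hfle
      have hfk : f (x k) = 1 := by rw [hfxk, hx k]; norm_num
      have hrest : ∀ j, j ≠ k → f (x j) = 0 := by
        intro j hjk
        have hsplit : ∑ j ∈ Finset.univ.erase k, ‖f (x j)‖
            = (∑ j, ‖f (x j)‖) - ‖f (x k)‖ :=
          Finset.sum_erase_eq_sub (Finset.mem_univ k)
        rw [hfk, norm_one] at hsplit
        have hle0 : ∑ j ∈ Finset.univ.erase k, ‖f (x j)‖ ≤ 0 := by
          rw [hsplit]; linarith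
        have := Finset.sum_nonneg (fun j (_ : j ∈ Finset.univ.erase k) => norm_nonneg (f (x j)))
        have hzero : ∀ j ∈ Finset.univ.erase k, ‖f (x j)‖ = 0 :=
          (Finset.sum_eq_zero_iff_of_nonneg fun j _ => norm_nonneg _).mp (le_antisymm hle0 this)
        have := hzero j (Finset.mem_erase.mpr ⟨hjk, Finset.mem_univ j⟩)
        exact norm_eq_zero.mp this
      have hfy : f y = α k := by
        rw [hy, map_sum]
        rw [Finset.sum_eq_single k]
        · rw [map_smul, smul_eq_mul, hfk, mul_one]
        · intro j _ hjk
          rw [map_smul, smul_eq_mul, hrest j hjk, mul_zero]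
        · intro h; exact absurd (Finset.mem_univ k) h
      calc ‖α k‖ = ‖f y‖ := by rw [hfy]
        _ ≤ ‖f‖ * ‖y‖ := f.le_opNorm _
        _ ≤ 1 * ‖y‖ := mul_le_mul_of_nonneg_right hfle (norm_nonneg _)
        _ = ‖y‖ := one_mul _
end

section
/- Let X be a complex Banach space and Δ : S(c₀(Γ)) → S(X) a surjective isometry. Then for n ≠ m in Γ, the elements Δ(e_n) and Δ(e_m) are completely M-orthogonal: ‖αΔ(e_n) + βΔ(e_m)‖ = max{|α|, |β|} for all α, β ∈ ℂ. -/
open ZeroAtInfty Metric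

namespace TingleyAux

open Function

/-! ### Basic facts about `C₀(Γ, ℂ)` -/

section CnullBasics

variable {Γ : Type*} [TopologicalSpace Γ] [DiscreteTopology Γ]

omit [DiscreteTopology Γ] in
lemma apply_le_norm (f : C₀(Γ, ℂ)) (k : Γ) : ‖f k‖ ≤ ‖f‖ := by
  rw [← ZeroAtInftyContinuousMap.norm_toBCF_eq_norm]
  exact BoundedContinuousFunction.norm_coe_le_norm f.toBCF k

omit [DiscreteTopology Γ] in
lemma norm_le_of (f : C₀(Γ, ℂ)) {C : ℝ} (hC : 0 ≤ C) (h : ∀ k, ‖f k‖ ≤ C) : ‖f‖ ≤ C := by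
  rw [← ZeroAtInftyContinuousMap.norm_toBCF_eq_norm]
  exact BoundedContinuousFunction.norm_le hC |>.2 h

lemma finite_level (f : C₀(Γ, ℂ)) {ε : ℝ} (hε : 0 < ε) : {k | ε ≤ ‖f k‖}.Finite := by
  have h := zero_at_infty f
  have hb : Metric.ball (0:ℂ) ε ∈ nhds (0:ℂ) := Metric.ball_mem_nhds _ hε
  have h2 : {k | f k ∈ Metric.ball (0:ℂ) ε} ∈ Filter.cocompact Γ := h hb
  obtain ⟨K, hK, hKs⟩ := Filter.mem_cocompact.1 h2
  have hsub : {k | ε ≤ ‖f k‖} ⊆ K := by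
    intro k hk
    by_contra hkK
    have := hKs hkK
    simp only [Set.mem_setOf_eq, Metric.mem_ball, dist_zero_right] at this
    exact absurd hk (not_le.2 this)
  exact (hK.finite_of_discrete).subset hsub

lemma exists_attain (f : C₀(Γ, ℂ)) (hf : f ≠ 0) : ∃ k, ‖f k‖ = ‖f‖ := by
  have hn : 0 < ‖f‖ := norm_pos_iff.2 hf
  have hfin : {k | ‖f‖/2 ≤ ‖f k‖}.Finite := finite_level f (by linarith)
  have hne : {k | ‖f‖/2 ≤ ‖f k‖}.Nonempty := by
    by_contra hcon
    rw [Set.not_nonempty_iff_eq_empty] at hcon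
    have hlt : ∀ k, ‖f k‖ ≤ ‖f‖/2 := by
      intro k
      by_contra hk
      have : k ∈ {k | ‖f‖/2 ≤ ‖f k‖} := le_of_lt (not_le.1 hk)
      rw [hcon] at this
      exact this
    have := norm_le_of f (by linarith) hlt
    linarith
  obtain ⟨k₀, hk₀mem, hmax⟩ := Set.Finite.exists_maximalFor (fun k => ‖f k‖)
    {k | ‖f‖/2 ≤ ‖f k‖} hfin hne
  refine ⟨k₀, le_antisymm (apply_le_norm f k₀) ?_⟩
  apply norm_le_of f (norm_nonneg _)
  intro k
  by_cases hk : ‖f‖/2 ≤ ‖f k‖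
  · rcases le_total ‖f k‖ ‖f k₀‖ with h | h
    · exact h
    · exact hmax hk h
  · exact le_trans (le_of_lt (not_le.1 hk)) hk₀mem

end CnullBasics

/-! ### A fact about complex numbers -/

lemma cx_eq_neg {a b : ℂ} (ha : ‖a‖ ≤ 1) (hb : ‖b‖ ≤ 1) (h : ‖b - a‖ = 2) :
    ‖a‖ = 1 ∧ b = -a := by
  have htri : ‖b - a‖ ≤ ‖b‖ + ‖a‖ := norm_sub_le b a
  have ha1 : ‖a‖ = 1 := by linarith
  have hb1 : ‖b‖ = 1 := by linarith
  refine ⟨ha1, ?_⟩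
  have hsq : Complex.normSq (b - a) = 4 := by
    have h2 : ‖b - a‖^2 = 4 := by rw [h]; norm_num
    rw [← Complex.sq_norm]
    exact h2
  have hna : Complex.normSq a = 1 := by
    rw [← Complex.sq_norm, ha1]; norm_num
  have hnb : Complex.normSq b = 1 := by
    rw [← Complex.sq_norm, hb1]; norm_num
  have hre : (b * (starRingEnd ℂ) a).re = -1 := by
    have := Complex.normSq_sub b a
    rw [hsq, hna, hnb] at this
    linarith
  have habs : Complex.normSq (b * (starRingEnd ℂ) a) = 1 := by
    rw [Complex.normSq_mul, Complex.normSq_conj, hna, hnb]; norm_num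
  have him : (b * (starRingEnd ℂ) a).im = 0 := by
    have := Complex.normSq_apply (b * (starRingEnd ℂ) a)
    rw [habs, hre] at this
    nlinarith [this]
  have hmul : b * (starRingEnd ℂ) a = -1 := by
    apply Complex.ext
    · simpa using hre
    · simpa using him
  have haa : (starRingEnd ℂ) a * a = 1 := by
    rw [mul_comm, Complex.mul_conj, hna]; norm_num
  calc b = b * ((starRingEnd ℂ) a * a) := by rw [haa, mul_one]
    _ = (b * (starRingEnd ℂ) a) * a := by ring
    _ = -a := by rw [hmul]; ring

/-! ### Abstract metric predicates on unit spheres -/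

section Abstract

variable {E : Type*} [NormedAddCommGroup E] {F : Type*} [NormedAddCommGroup F]

def far (a b : sphere (0:E) 1) : Prop := dist a b = 2
def sameFar (a b : sphere (0:E) 1) : Prop := ∀ z, far z a ↔ far z b
def vgood (a : sphere (0:E) 1) : Prop := ∀ w, sameFar a w → dist a w ≤ 1
def farmin (a : sphere (0:E) 1) : Prop := ∀ w, (∀ z, far z w → far z a) → sameFar a w
def vert (a : sphere (0:E) 1) : Prop := vgood a ∧ farmin a
def step (a b : sphere (0:E) 1) : Prop := vert a ∧ vert b ∧ dist a b < 1
def conn : sphere (0:E) 1 → sphere (0:E) 1 → Prop := Relation.ReflTransGen step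

lemma step_symm {a b : sphere (0:E) 1} (h : step a b) : step b a :=
  ⟨h.2.1, h.1, by rw [dist_comm]; exact h.2.2⟩

lemma conn_symm {a b : sphere (0:E) 1} (h : conn a b) : conn b a := by
  induction h with
  | refl => exact Relation.ReflTransGen.refl
  | tail _ h2 ih => exact Relation.ReflTransGen.head (step_symm h2) ih

lemma conn_trans {a b c : sphere (0:E) 1} (h1 : conn a b) (h2 : conn b c) : conn a c :=
  Relation.ReflTransGen.trans h1 h2

variable {Θ : sphere (0:E) 1 → sphere (0:F) 1} (hI : Isometry Θ) (hS : Surjective Θ)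

section
include hI

lemma far_map {a b : sphere (0:E) 1} : far (Θ a) (Θ b) ↔ far a b := by
  unfold far; rw [hI.dist_eq]

include hS

lemma sameFar_map {a b : sphere (0:E) 1} : sameFar (Θ a) (Θ b) ↔ sameFar a b := by
  constructor
  · intro h z
    have := h (Θ z); rwa [far_map hI, far_map hI] at this
  · intro h z
    obtain ⟨c, rfl⟩ := hS z
    rw [far_map hI, far_map hI]; exact h c

lemma vgood_map {a : sphere (0:E) 1} : vgood (Θ a) ↔ vgood a := by
  constructor
  · intro h w hw
    have := h (Θ w) ((sameFar_map hI hS).2 hw)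
    rwa [hI.dist_eq] at this
  · intro h w hw
    obtain ⟨c, rfl⟩ := hS w
    rw [hI.dist_eq]; exact h c ((sameFar_map hI hS).1 hw)

lemma farmin_map {a : sphere (0:E) 1} : farmin (Θ a) ↔ farmin a := by
  constructor
  · intro h w hw
    refine (sameFar_map hI hS).1 (h (Θ w) ?_)
    intro z hz
    obtain ⟨c, rfl⟩ := hS z
    exact (far_map hI).2 (hw c ((far_map hI).1 hz))
  · intro h w hw
    obtain ⟨c, rfl⟩ := hS w
    refine (sameFar_map hI hS).2 (h c ?_)
    intro z hz
    exact (far_map hI).1 (hw (Θ z) ((far_map hI).2 hz))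

lemma vert_map {a : sphere (0:E) 1} : vert (Θ a) ↔ vert a := by
  unfold vert; rw [vgood_map hI hS, farmin_map hI hS]

lemma step_map {a b : sphere (0:E) 1} : step (Θ a) (Θ b) ↔ step a b := by
  unfold step; rw [vert_map hI hS, vert_map hI hS, hI.dist_eq]

lemma conn_map {a b : sphere (0:E) 1} : conn (Θ a) (Θ b) ↔ conn a b := by
  constructor
  · intro h
    have key : ∀ p q : sphere (0:F) 1, Relation.ReflTransGen step p q →
        ∀ a b : sphere (0:E) 1, Θ a = p → Θ b = q → conn a b := by
      intro p q hpq
      induction hpq with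
      | refl =>
        intro a b ha hb
        have : a = b := hI.injective (by rw [ha, hb])
        rw [this]
        exact Relation.ReflTransGen.refl
      | tail h1 h2 ih =>
        intro a b ha hb
        rename_i mid c _
        obtain ⟨d, hd⟩ := hS c
        refine Relation.ReflTransGen.tail (ih a d ha hd) ?_
        exact (step_map hI hS).1 (by rw [hd, hb]; exact h2)
    exact key _ _ h a b rfl rfl
  · intro h
    induction h with
    | refl => exact Relation.ReflTransGen.refl
    | tail h1 h2 ih => exact Relation.ReflTransGen.tail ih ((step_map hI hS).2 h2)

end

end Abstract

/-! ### Rotations of the sphere of a complex normed space -/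

section Rotation

variable {E : Type*} [NormedAddCommGroup E] [NormedSpace ℂ E]

noncomputable def rot (θ : ℂ) (hθ : ‖θ‖ = 1) (a : sphere (0:E) 1) : sphere (0:E) 1 :=
  ⟨θ • (a : E), by
    have ha : ‖(a:E)‖ = 1 := mem_sphere_zero_iff_norm.1 a.2
    rw [mem_sphere_zero_iff_norm, norm_smul, hθ, ha, one_mul]⟩

lemma rot_coe (θ : ℂ) (hθ : ‖θ‖ = 1) (a : sphere (0:E) 1) : (rot θ hθ a : E) = θ • a := rfl

lemma rot_isometry (θ : ℂ) (hθ : ‖θ‖ = 1) : Isometry (rot (E := E) θ hθ) := by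
  apply Isometry.of_dist_eq
  intro a b
  rw [Subtype.dist_eq, Subtype.dist_eq, rot_coe, rot_coe, dist_eq_norm, dist_eq_norm,
    ← smul_sub, norm_smul, hθ, one_mul]

lemma rot_surjective (θ : ℂ) (hθ : ‖θ‖ = 1) : Surjective (rot (E := E) θ hθ) := by
  intro w
  have hθ0 : θ ≠ 0 := by intro h; rw [h] at hθ; simp at hθ
  have h1 : ‖θ⁻¹‖ = 1 := by rw [norm_inv, hθ]; norm_num
  exact ⟨rot θ⁻¹ h1 w, Subtype.ext (by
    simp only [rot_coe, smul_smul]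
    rw [mul_inv_cancel₀ hθ0, one_smul])⟩

lemma dist_rot (θ η : ℂ) (hθ : ‖θ‖ = 1) (hη : ‖η‖ = 1) (a : sphere (0:E) 1) :
    dist (rot θ hθ a) (rot η hη a) = ‖θ - η‖ := by
  have ha : ‖(a:E)‖ = 1 := mem_sphere_zero_iff_norm.1 a.2
  rw [Subtype.dist_eq, rot_coe, rot_coe, dist_eq_norm, ← sub_smul, norm_smul, ha, mul_one]

/-- quarter root of a unimodular complex number is within distance < 1 of 1 -/
lemma exists_quarter_root (lam : ℂ) (hlam : ‖lam‖ = 1) :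
    ∃ ω : ℂ, ‖ω‖ = 1 ∧ ω ^ 4 = lam ∧ ‖ω - 1‖ < 1 := by
  set t : ℝ := lam.arg / 4 with htdef
  refine ⟨Complex.exp ((t : ℂ) * Complex.I), ?_, ?_, ?_⟩
  · exact Complex.norm_exp_ofReal_mul_I _
  · rw [← Complex.exp_nat_mul]
    have h4 : ((4:ℕ):ℂ) * ((t:ℂ) * Complex.I) = (lam.arg : ℂ) * Complex.I := by
      push_cast [htdef]; ring
    rw [h4]
    have := Complex.norm_mul_exp_arg_mul_I lam
    rw [hlam] at this
    simpa using this
  · have harg1 : |lam.arg| ≤ Real.pi := Complex.abs_arg_le_pi lam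
    have hpi : 0 < Real.pi := Real.pi_pos
    have h4 : |t| ≤ Real.pi / 4 := by
      rw [htdef, abs_div, abs_of_nonneg (by norm_num : (0:ℝ) ≤ 4)]
      linarith
    have hcos : Real.cos t > 1/2 := by
      have h2 : Real.cos (Real.pi/4) ≤ Real.cos |t| := by
        apply Real.cos_le_cos_of_nonneg_of_le_pi (abs_nonneg t) ?_ h4
        linarith
      rw [Real.cos_abs] at h2
      rw [Real.cos_pi_div_four] at h2
      nlinarith [Real.sq_sqrt (by norm_num : (0:ℝ) ≤ 2), Real.sqrt_nonneg 2]
    have hexp : Complex.exp ((t:ℂ) * Complex.I)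
        = Complex.ofReal (Real.cos t) + Complex.ofReal (Real.sin t) * Complex.I := by
      rw [Complex.exp_mul_I]; push_cast [Complex.ofReal_cos, Complex.ofReal_sin]; ring
    rw [hexp]
    have hre : (Complex.ofReal (Real.cos t) + Complex.ofReal (Real.sin t) * Complex.I - 1).re
        = Real.cos t - 1 := by simp [Complex.cos_ofReal_re]
    have him : (Complex.ofReal (Real.cos t) + Complex.ofReal (Real.sin t) * Complex.I - 1).im
        = Real.sin t := by simp [Complex.sin_ofReal_re]
    have hsq : ‖Complex.ofReal (Real.cos t) + Complex.ofReal (Real.sin t) * Complex.I - 1‖^2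
        = (Real.cos t - 1)^2 + (Real.sin t)^2 := by
      rw [Complex.sq_norm, Complex.normSq_apply, hre, him]
      ring
    have htrig : (Real.sin t)^2 + (Real.cos t)^2 = 1 := Real.sin_sq_add_cos_sq t
    have hlt : ‖Complex.ofReal (Real.cos t) + Complex.ofReal (Real.sin t) * Complex.I - 1‖^2
        < 1 := by
      rw [hsq]; nlinarith
    nlinarith [norm_nonneg
      (Complex.ofReal (Real.cos t) + Complex.ofReal (Real.sin t) * Complex.I - 1)]

lemma conn_rot (a : sphere (0:E) 1)
    (hv : ∀ (θ : ℂ) (hθ : ‖θ‖ = 1), vert (rot θ hθ a))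
    (lam : ℂ) (hlam : ‖lam‖ = 1) : conn a (rot lam hlam a) := by
  obtain ⟨ω, hω1, hω4, hωd⟩ := exists_quarter_root lam hlam
  have hpow : ∀ k : ℕ, ‖ω ^ k‖ = 1 := fun k => by rw [norm_pow, hω1, one_pow]
  have hstep : ∀ k : ℕ, step (rot (ω^k) (hpow k) a) (rot (ω^(k+1)) (hpow (k+1)) a) := by
    intro k
    refine ⟨hv _ _, hv _ _, ?_⟩
    rw [dist_rot]
    have hid : ω^k - ω^(k+1) = ω^k * (1 - ω) := by ring
    rw [hid, norm_mul, hpow, one_mul]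
    rwa [norm_sub_rev] at hωd
  have h0 : rot (ω^0) (hpow 0) a = a := Subtype.ext (by simp [rot_coe])
  have h4' : rot (ω^4) (hpow 4) a = rot lam hlam a := Subtype.ext (by
    rw [rot_coe, rot_coe, hω4])
  have hc : conn (rot (ω^0) (hpow 0) a) (rot (ω^4) (hpow 4) a) := by
    refine Relation.ReflTransGen.tail (Relation.ReflTransGen.tail
      (Relation.ReflTransGen.tail (Relation.ReflTransGen.tail
        Relation.ReflTransGen.refl (hstep 0)) (hstep 1)) (hstep 2)) (hstep 3)
  rw [h0, h4'] at hc
  exact hc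

end Rotation


/-! ### Vertices of the sphere of `c₀` -/

section CnullVert

variable {Γ : Type*} [TopologicalSpace Γ] [DiscreteTopology Γ] [DecidableEq Γ]

lemma stdBasis_apply (n k : Γ) : stdBasis n k = if k = n then 1 else 0 := rfl

lemma smul_stdBasis_apply (lam : ℂ) (n k : Γ) :
    (lam • stdBasis n) k = if k = n then lam else 0 := by
  by_cases h : k = n <;> simp [stdBasis_apply, h]

lemma norm_smul_stdBasis (lam : ℂ) (n : Γ) : ‖lam • stdBasis n‖ = ‖lam‖ := by
  apply le_antisymm
  · apply norm_le_of _ (norm_nonneg lam)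
    intro k
    rw [smul_stdBasis_apply]
    by_cases h : k = n <;> simp [h]
  · have h := apply_le_norm (lam • stdBasis n) n
    rwa [smul_stdBasis_apply, if_pos rfl] at h

noncomputable def vtx (lam : ℂ) (hlam : ‖lam‖ = 1) (n : Γ) : sphere (0 : C₀(Γ, ℂ)) 1 :=
  ⟨lam • stdBasis n, by rw [mem_sphere_zero_iff_norm, norm_smul_stdBasis, hlam]⟩

lemma vtx_coe (lam : ℂ) (hlam : ‖lam‖ = 1) (n : Γ) :
    (vtx lam hlam n : C₀(Γ, ℂ)) = lam • stdBasis n := rfl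

lemma sphere_norm (a : sphere (0 : C₀(Γ, ℂ)) 1) : ‖(a : C₀(Γ, ℂ))‖ = 1 :=
  mem_sphere_zero_iff_norm.1 a.2

lemma sphere_ne_zero (a : sphere (0 : C₀(Γ, ℂ)) 1) : (a : C₀(Γ, ℂ)) ≠ 0 := by
  intro h
  have h2 := sphere_norm a
  rw [h] at h2
  simp at h2

lemma sphere_apply_le (a : sphere (0 : C₀(Γ, ℂ)) 1) (k : Γ) : ‖(a : C₀(Γ, ℂ)) k‖ ≤ 1 := by
  have h := apply_le_norm (a : C₀(Γ, ℂ)) k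
  rwa [sphere_norm] at h

lemma far_iff (z a : sphere (0 : C₀(Γ, ℂ)) 1) :
    far z a ↔ ∃ k, ‖(a : C₀(Γ, ℂ)) k‖ = 1 ∧ (z : C₀(Γ, ℂ)) k = -((a : C₀(Γ, ℂ)) k) := by
  unfold far
  rw [Subtype.dist_eq, dist_eq_norm]
  constructor
  · intro h
    have hne : (z : C₀(Γ, ℂ)) - (a : C₀(Γ, ℂ)) ≠ 0 := by
      intro h0
      rw [h0] at h
      simp at h
    obtain ⟨k, hk⟩ := exists_attain _ hne
    rw [h] at hk
    have hzk : (((z : C₀(Γ, ℂ)) : C₀(Γ, ℂ)) - (a : C₀(Γ, ℂ))) k = (z : C₀(Γ, ℂ)) k - (a : C₀(Γ, ℂ)) k := by simp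
    rw [hzk] at hk
    obtain ⟨h1, h2⟩ := cx_eq_neg (sphere_apply_le a k) (sphere_apply_le z k) hk
    exact ⟨k, h1, h2⟩
  · rintro ⟨k, h1, h2⟩
    apply le_antisymm
    · apply norm_le_of _ (by norm_num : (0:ℝ) ≤ 2)
      intro j
      have hj : (((z : C₀(Γ, ℂ)) : C₀(Γ, ℂ)) - (a : C₀(Γ, ℂ))) j = (z : C₀(Γ, ℂ)) j - (a : C₀(Γ, ℂ)) j := by simp
      rw [hj]
      calc ‖(z : C₀(Γ, ℂ)) j - (a : C₀(Γ, ℂ)) j‖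
          ≤ ‖(z : C₀(Γ, ℂ)) j‖ + ‖(a : C₀(Γ, ℂ)) j‖ := norm_sub_le _ _
        _ ≤ 2 := by linarith [sphere_apply_le a j, sphere_apply_le z j]
    · have hk := apply_le_norm ((z : C₀(Γ, ℂ)) - (a : C₀(Γ, ℂ))) k
      have hzk : (((z : C₀(Γ, ℂ)) : C₀(Γ, ℂ)) - (a : C₀(Γ, ℂ))) k = (z : C₀(Γ, ℂ)) k - (a : C₀(Γ, ℂ)) k := by simp
      rw [hzk, h2] at hk
      have h2' : ‖-(a : C₀(Γ, ℂ)) k - (a : C₀(Γ, ℂ)) k‖ = 2 := by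
        have hx : -(a : C₀(Γ, ℂ)) k - (a : C₀(Γ, ℂ)) k = (-2 : ℂ) * (a : C₀(Γ, ℂ)) k := by
          ring
        rw [hx, norm_mul, h1, mul_one]
        norm_num
      rw [h2'] at hk
      exact hk

lemma sameFar_iff (a b : sphere (0 : C₀(Γ, ℂ)) 1) :
    sameFar a b ↔ ∀ k, (‖(a : C₀(Γ, ℂ)) k‖ = 1 ∨ ‖(b : C₀(Γ, ℂ)) k‖ = 1) →
      (a : C₀(Γ, ℂ)) k = (b : C₀(Γ, ℂ)) k := by
  constructor
  · intro h k hk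
    rcases hk with hk | hk
    · have hnk : ‖-((a : C₀(Γ, ℂ)) k)‖ = 1 := by rwa [norm_neg]
      have hfa : far (vtx _ hnk k) a := by
        rw [far_iff]
        exact ⟨k, hk, by rw [vtx_coe, smul_stdBasis_apply, if_pos rfl]⟩
      have hfb : far (vtx _ hnk k) b := (h _).1 hfa
      rw [far_iff] at hfb
      obtain ⟨j, hj1, hj2⟩ := hfb
      rw [vtx_coe, smul_stdBasis_apply] at hj2
      by_cases hjk : j = k
      · subst hjk
        rw [if_pos rfl] at hj2
        exact neg_inj.1 hj2
      · rw [if_neg hjk] at hj2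
        exfalso
        have : (b : C₀(Γ, ℂ)) j = 0 := by
          have := hj2.symm
          rwa [neg_eq_zero] at this
        rw [this] at hj1
        simp at hj1
    · have hnk : ‖-((b : C₀(Γ, ℂ)) k)‖ = 1 := by rwa [norm_neg]
      have hfb : far (vtx _ hnk k) b := by
        rw [far_iff]
        exact ⟨k, hk, by rw [vtx_coe, smul_stdBasis_apply, if_pos rfl]⟩
      have hfa : far (vtx _ hnk k) a := (h _).2 hfb
      rw [far_iff] at hfa
      obtain ⟨j, hj1, hj2⟩ := hfa
      rw [vtx_coe, smul_stdBasis_apply] at hj2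
      by_cases hjk : j = k
      · subst hjk
        rw [if_pos rfl] at hj2
        exact neg_inj.1 hj2.symm
      · rw [if_neg hjk] at hj2
        exfalso
        have : (a : C₀(Γ, ℂ)) j = 0 := by
          have := hj2.symm
          rwa [neg_eq_zero] at this
        rw [this] at hj1
        simp at hj1
  · intro h z
    rw [far_iff, far_iff]
    constructor
    · rintro ⟨k, h1, h2⟩
      have hab := h k (Or.inl h1)
      refine ⟨k, ?_, ?_⟩
      · rwa [← hab]
      · rwa [← hab]
    · rintro ⟨k, h1, h2⟩
      have hab := h k (Or.inr h1)
      refine ⟨k, ?_, ?_⟩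
      · rwa [hab]
      · rwa [hab]

end CnullVert


section CnullVert2

variable {Γ : Type*} [TopologicalSpace Γ] [DiscreteTopology Γ] [DecidableEq Γ]

lemma vtx_coord (lam : ℂ) (hlam : ‖lam‖ = 1) (n k : Γ) :
    (vtx lam hlam n : C₀(Γ, ℂ)) k = if k = n then lam else 0 := by
  rw [vtx_coe, smul_stdBasis_apply]

lemma vert_vtx (lam : ℂ) (hlam : ‖lam‖ = 1) (n : Γ) : vert (vtx lam hlam n) := by
  constructor
  · -- vgood
    intro w hw
    rw [sameFar_iff] at hw
    rw [Subtype.dist_eq, dist_eq_norm]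
    apply norm_le_of _ (by norm_num : (0:ℝ) ≤ 1)
    intro k
    have hk : ((vtx lam hlam n : C₀(Γ, ℂ)) - (w : C₀(Γ, ℂ))) k
        = (vtx lam hlam n : C₀(Γ, ℂ)) k - (w : C₀(Γ, ℂ)) k := by simp
    rw [hk, vtx_coord]
    by_cases h : k = n
    · subst h
      rw [if_pos rfl]
      have heq := hw k (Or.inl (by rw [vtx_coord, if_pos rfl]; exact hlam))
      rw [vtx_coord, if_pos rfl] at heq
      rw [← heq]
      simp
    · rw [if_neg h, zero_sub, norm_neg]
      exact sphere_apply_le w k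
  · -- farmin
    intro w hsub
    have hW : ∀ k, ‖(w : C₀(Γ, ℂ)) k‖ = 1 → k = n ∧ (w : C₀(Γ, ℂ)) n = lam := by
      intro k hk
      have hnk : ‖-((w : C₀(Γ, ℂ)) k)‖ = 1 := by rwa [norm_neg]
      have hfw : far (vtx _ hnk k) w := by
        rw [far_iff]
        exact ⟨k, hk, by rw [vtx_coord, if_pos rfl]⟩
      have hfa := hsub _ hfw
      rw [far_iff] at hfa
      obtain ⟨j, hj1, hj2⟩ := hfa
      simp only [vtx_coord] at hj1 hj2
      by_cases hjn : j = n
      · subst hjn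
        rw [if_pos rfl] at hj2
        by_cases hjk : j = k
        · rw [if_pos hjk] at hj2
          refine ⟨hjk.symm, ?_⟩
          rw [hjk]
          exact neg_inj.1 hj2
        · rw [if_neg hjk] at hj2
          exfalso
          have hl0 : lam = 0 := by
            have h0 := hj2.symm
            rwa [neg_eq_zero] at h0
          rw [hl0] at hlam
          simp at hlam
      · rw [if_neg hjn] at hj1
        simp at hj1
    rw [sameFar_iff]
    obtain ⟨k₀, hk₀⟩ := exists_attain _ (sphere_ne_zero w)
    rw [sphere_norm] at hk₀
    obtain ⟨hk₀n, hwn⟩ := hW k₀ hk₀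
    intro k hk
    rcases hk with hk | hk
    · rw [vtx_coord] at hk ⊢
      by_cases h : k = n
      · subst h
        rw [if_pos rfl]
        exact hwn.symm
      · rw [if_neg h] at hk
        simp at hk
    · obtain ⟨hkn, _⟩ := hW k hk
      subst hkn
      rw [vtx_coord, if_pos rfl]
      exact hwn.symm

lemma vert_eq (a : sphere (0 : C₀(Γ, ℂ)) 1) (hv : vert a) :
    ∃ (n : Γ) (lam : ℂ), ‖lam‖ = 1 ∧ (a : C₀(Γ, ℂ)) = lam • stdBasis n := by
  obtain ⟨hvg, hfm⟩ := hv
  obtain ⟨n, hn⟩ := exists_attain _ (sphere_ne_zero a)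
  rw [sphere_norm] at hn
  refine ⟨n, (a : C₀(Γ, ℂ)) n, hn, ?_⟩
  -- Step 1: `n` is the unique coordinate of modulus one
  have hM : ∀ j, ‖(a : C₀(Γ, ℂ)) j‖ = 1 → j = n := by
    intro j hj
    by_contra hjn
    have hsub : ∀ z, far z (vtx _ hn n) → far z a := by
      intro z hz
      rw [far_iff] at hz ⊢
      obtain ⟨k, hk1, hk2⟩ := hz
      rw [vtx_coord] at hk1 hk2
      by_cases hkn : k = n
      · subst hkn
        rw [if_pos rfl] at hk2
        exact ⟨k, hn, hk2⟩
      · rw [if_neg hkn] at hk1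
        simp at hk1
    have hsf := hfm _ hsub
    rw [sameFar_iff] at hsf
    have heq := hsf j (Or.inl hj)
    rw [vtx_coord, if_neg hjn] at heq
    rw [heq] at hj
    simp at hj
  -- Step 2: all other coordinates vanish
  have hzero : ∀ j, j ≠ n → (a : C₀(Γ, ℂ)) j = 0 := by
    intro j hjn
    by_contra hj0
    set r : ℝ := ‖(a : C₀(Γ, ℂ)) j‖ with hrdef
    have hrpos : 0 < r := norm_pos_iff.2 hj0
    have hrlt : r < 1 := lt_of_le_of_ne (sphere_apply_le a j) (fun h => hjn (hM j h))
    set s : ℂ := (a : C₀(Γ, ℂ)) j / (r : ℂ) with hsdef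
    have hrne : ((r:ℝ) : ℂ) ≠ 0 := by
      simp only [ne_eq, Complex.ofReal_eq_zero]
      exact ne_of_gt hrpos
    have hs1 : ‖s‖ = 1 := by
      rw [hsdef, norm_div, Complex.norm_real, Real.norm_eq_abs, abs_of_pos hrpos, ← hrdef]
      exact div_self (ne_of_gt hrpos)
    have hsr : s * (r : ℂ) = (a : C₀(Γ, ℂ)) j := by
      rw [hsdef]
      field_simp
    set wval : ℂ := -s * (((1 - r/2 : ℝ)) : ℂ) with hwval
    set d : ℂ := wval - (a : C₀(Γ, ℂ)) j with hddef
    set w' : C₀(Γ, ℂ) := (a : C₀(Γ, ℂ)) + d • stdBasis j with hw'def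
    have hw'co : ∀ k, w' k = if k = j then wval else (a : C₀(Γ, ℂ)) k := by
      intro k
      rw [hw'def]
      have : ((a : C₀(Γ, ℂ)) + d • stdBasis j) k
          = (a : C₀(Γ, ℂ)) k + (d • stdBasis j) k := by simp
      rw [this, smul_stdBasis_apply]
      by_cases h : k = j
      · subst h
        rw [if_pos rfl, if_pos rfl, hddef]
        ring
      · rw [if_neg h, if_neg h, add_zero]
    have hwvnorm : ‖wval‖ = 1 - r/2 := by
      rw [hwval, norm_mul, norm_neg, hs1, one_mul, Complex.norm_real, Real.norm_eq_abs]
      rw [abs_of_pos (by linarith)]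
    have hw'sphere : w' ∈ sphere (0 : C₀(Γ, ℂ)) 1 := by
      rw [mem_sphere_zero_iff_norm]
      apply le_antisymm
      · apply norm_le_of _ (by norm_num : (0:ℝ) ≤ 1)
        intro k
        rw [hw'co]
        by_cases h : k = j
        · rw [if_pos h, hwvnorm]; linarith
        · rw [if_neg h]; exact sphere_apply_le a k
      · have h1 := apply_le_norm w' n
        rw [hw'co, if_neg (Ne.symm hjn)] at h1
        rw [hn] at h1
        exact h1
    set wsp : sphere (0 : C₀(Γ, ℂ)) 1 := ⟨w', hw'sphere⟩ with hwsp
    have hwspco : (wsp : C₀(Γ, ℂ)) = w' := rfl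
    have hsf : sameFar a wsp := by
      rw [sameFar_iff]
      intro k hk
      rcases hk with hk | hk
      · have hkn := hM k hk
        subst hkn
        rw [hwspco, hw'co, if_neg (Ne.symm hjn)]
      · rw [hwspco, hw'co] at hk ⊢
        by_cases h : k = j
        · exfalso
          rw [if_pos h, hwvnorm] at hk
          linarith
        · rw [if_neg h] at hk
          rw [if_neg h]
    have hd := hvg wsp hsf
    rw [Subtype.dist_eq, dist_eq_norm] at hd
    have hcontr : (1 : ℝ) + r/2 ≤ ‖(a : C₀(Γ, ℂ)) - (wsp : C₀(Γ, ℂ))‖ := by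
      have h1 := apply_le_norm ((a : C₀(Γ, ℂ)) - (wsp : C₀(Γ, ℂ))) j
      have h2 : ((a : C₀(Γ, ℂ)) - (wsp : C₀(Γ, ℂ))) j
          = (a : C₀(Γ, ℂ)) j - (wsp : C₀(Γ, ℂ)) j := by simp
      rw [h2, hwspco, hw'co, if_pos rfl, hwval] at h1
      have h3 : (a : C₀(Γ, ℂ)) j - -s * (((1 - r/2 : ℝ)) : ℂ)
          = s * (((r + (1 - r/2) : ℝ)) : ℂ) := by
        rw [← hsr]
        push_cast
        ring
      rw [h3, norm_mul, hs1, one_mul, Complex.norm_real, Real.norm_eq_abs,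
        abs_of_pos (by linarith)] at h1
      calc (1:ℝ) + r/2 = r + (1 - r/2) := by ring
        _ ≤ _ := h1
    linarith
  -- conclude
  ext k
  rw [smul_stdBasis_apply]
  by_cases h : k = n
  · subst h
    rw [if_pos rfl]
  · rw [if_neg h]
    exact hzero k h

lemma norm_vtx_sub_ne {n m : Γ} (hnm : n ≠ m) {lam mu : ℂ} (hl : ‖lam‖ = 1) (hm : ‖mu‖ = 1) :
    ‖lam • stdBasis n - mu • stdBasis m‖ = 1 := by
  apply le_antisymm
  · apply norm_le_of _ (by norm_num : (0:ℝ) ≤ 1)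
    intro k
    have hk : (lam • stdBasis n - mu • stdBasis m) k
        = (lam • stdBasis n) k - (mu • stdBasis m) k := by simp
    rw [hk, smul_stdBasis_apply, smul_stdBasis_apply]
    by_cases h1 : k = n
    · subst h1
      rw [if_pos rfl, if_neg (by exact fun h => hnm (by rw [← h]) : ¬ k = m)]
      rw [sub_zero, hl]
    · rw [if_neg h1]
      by_cases h2 : k = m
      · rw [if_pos h2, zero_sub, norm_neg, hm]
      · rw [if_neg h2, sub_zero, norm_zero]; norm_num
  · have h1 := apply_le_norm (lam • stdBasis n - mu • stdBasis m) n
    have hk : (lam • stdBasis n - mu • stdBasis m) n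
        = (lam • stdBasis n) n - (mu • stdBasis m) n := by simp
    rw [hk, smul_stdBasis_apply, smul_stdBasis_apply, if_pos rfl, if_neg hnm, sub_zero, hl] at h1
    exact h1

lemma axis_eq {n m : Γ} {lam mu : ℂ} (hl : lam ≠ 0)
    (h : lam • stdBasis n = mu • stdBasis m) : n = m := by
  by_contra hnm
  have := congrArg (fun f : C₀(Γ, ℂ) => f n) h
  rw [smul_stdBasis_apply, smul_stdBasis_apply, if_pos rfl, if_neg hnm] at this
  exact hl this

lemma conn_same_axis (n : Γ) {lam mu : ℂ} (hl : ‖lam‖ = 1) (hm : ‖mu‖ = 1)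
    (a b : sphere (0 : C₀(Γ, ℂ)) 1) (ha : (a : C₀(Γ, ℂ)) = lam • stdBasis n)
    (hb : (b : C₀(Γ, ℂ)) = mu • stdBasis n) : conn a b := by
  have hl0 : lam ≠ 0 := by intro h; rw [h] at hl; simp at hl
  have hv : ∀ (θ : ℂ) (hθ : ‖θ‖ = 1), vert (rot θ hθ a) := by
    intro θ hθ
    have hco : (rot θ hθ a : C₀(Γ, ℂ)) = (θ * lam) • stdBasis n := by
      rw [rot_coe, ha, smul_smul]
    have he : rot θ hθ a = vtx (θ * lam) (by rw [norm_mul, hθ, hl, one_mul]) n :=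
      Subtype.ext (by rw [hco, vtx_coe])
    rw [he]
    exact vert_vtx _ _ n
  have hηn : ‖mu * lam⁻¹‖ = 1 := by
    rw [norm_mul, norm_inv, hl, hm]; norm_num
  have hrot : rot (mu * lam⁻¹) hηn a = b := Subtype.ext (by
    rw [rot_coe, ha, hb, smul_smul]
    congr 1
    field_simp)
  rw [← hrot]
  exact conn_rot a hv _ hηn

lemma conn_axis {a b : sphere (0 : C₀(Γ, ℂ)) 1} (h : conn a b) :
    ∀ {n m : Γ} {lam mu : ℂ}, ‖lam‖ = 1 → ‖mu‖ = 1 →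
      (a : C₀(Γ, ℂ)) = lam • stdBasis n → (b : C₀(Γ, ℂ)) = mu • stdBasis m → n = m := by
  induction h with
  | refl =>
    intro n m lam mu hl hm ha hb
    have hl0 : lam ≠ 0 := by intro h0; rw [h0] at hl; simp at hl
    exact axis_eq hl0 (ha.symm.trans hb)
  | tail h1 h2 ih =>
    intro n m lam mu hl hm ha hb
    rename_i c b'
    obtain ⟨hvc, hvb, hdist⟩ := h2
    obtain ⟨j, nu, hnu, hc⟩ := vert_eq c hvc
    have hjm : j = m := by
      by_contra hjm
      have : dist c b' = 1 := by
        rw [Subtype.dist_eq, hc, hb, dist_eq_norm]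
        exact norm_vtx_sub_ne hjm hnu hm
      rw [this] at hdist
      exact lt_irrefl _ hdist
    subst hjm
    exact ih hl hnu ha hc

end CnullVert2


/-! ### From unimodular coefficients to all coefficients -/

lemma pair_norm {X : Type*} [NormedAddCommGroup X] [NormedSpace ℂ X] {u v : X}
    (hu : ‖u‖ = 1)
    (key : ∀ lam mu : ℂ, ‖lam‖ = 1 → ‖mu‖ = 1 → ‖lam • u + mu • v‖ = 1)
    {α β : ℂ} (hba : ‖β‖ ≤ ‖α‖) : ‖α • u + β • v‖ = ‖α‖ := by
  rcases eq_or_ne α 0 with rfl | hα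
  · have hb0 : β = 0 := by
      rw [norm_zero] at hba
      exact norm_le_zero_iff.1 hba
    subst hb0
    simp
  have hαpos : 0 < ‖α‖ := norm_pos_iff.2 hα
  -- upper bound for a unit-disc coefficient
  have upper1 : ∀ c : ℂ, ‖c‖ ≤ 1 → ‖u + c • v‖ ≤ 1 := by
    intro c hc
    rcases eq_or_ne c 0 with rfl | hc0
    · simp [hu]
    · set r : ℝ := ‖c‖ with hrdef
      have hr0 : 0 < r := norm_pos_iff.2 hc0
      have hrne : ((r : ℝ) : ℂ) ≠ 0 := by
        simp only [ne_eq, Complex.ofReal_eq_zero]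
        exact ne_of_gt hr0
      set s : ℝ := Real.sqrt (1 - r^2) with hsdef
      have hs2 : s^2 = 1 - r^2 := Real.sq_sqrt (by nlinarith)
      set τ : ℂ := c / (r : ℂ) with hτdef
      have hτ : ‖τ‖ = 1 := by
        rw [hτdef, norm_div, Complex.norm_real, Real.norm_eq_abs, abs_of_pos hr0, ← hrdef]
        exact div_self (ne_of_gt hr0)
      have hθn : ∀ ε : ℝ, ε^2 = 1 - r^2 → ‖τ * ((r:ℂ) + (ε:ℂ) * Complex.I)‖ = 1 := by
        intro ε hε
        rw [norm_mul, hτ, one_mul, Complex.norm_def,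
          Complex.normSq_add_mul_I, hε]
        have : r^2 + (1 - r^2) = 1 := by ring
        rw [this, Real.sqrt_one]
      set θ₁ : ℂ := τ * ((r:ℂ) + (s:ℂ) * Complex.I) with hθ₁
      set θ₂ : ℂ := τ * ((r:ℂ) + ((-s : ℝ):ℂ) * Complex.I) with hθ₂
      have h1 := key 1 θ₁ (by norm_num) (hθn s hs2)
      have h2 := key 1 θ₂ (by norm_num) (hθn (-s) (by rw [neg_pow]; simp [hs2]))
      rw [one_smul] at h1 h2
      have hsum : θ₁ + θ₂ = 2 * c := by
        rw [hθ₁, hθ₂, hτdef]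
        push_cast
        field_simp
        ring
      have hXY : (u + θ₁ • v) + (u + θ₂ • v) = (2 : ℂ) • (u + c • v) := by
        have hv2 : θ₁ • v + θ₂ • v = ((2:ℂ) * c) • v := by
          rw [← add_smul, hsum]
        calc (u + θ₁ • v) + (u + θ₂ • v) = (u + u) + (θ₁ • v + θ₂ • v) := by abel
          _ = (2:ℂ) • u + ((2:ℂ) * c) • v := by
              rw [hv2, two_smul]
          _ = (2 : ℂ) • (u + c • v) := by
              rw [smul_add, smul_smul]
      have hle : ‖(2 : ℂ) • (u + c • v)‖ ≤ 2 := by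
        rw [← hXY]
        calc ‖(u + θ₁ • v) + (u + θ₂ • v)‖ ≤ ‖u + θ₁ • v‖ + ‖u + θ₂ • v‖ := norm_add_le _ _
          _ = 2 := by rw [h1, h2]; norm_num
      rw [norm_smul] at hle
      have h2n : ‖(2:ℂ)‖ = 2 := by norm_num
      rw [h2n] at hle
      linarith
  -- upper bound
  have upper2 : ∀ β' : ℂ, ‖β'‖ ≤ ‖α‖ → ‖α • u + β' • v‖ ≤ ‖α‖ := by
    intro β' hb'
    have hfac : α • u + β' • v = α • (u + (β'/α) • v) := by
      rw [smul_add, smul_smul, mul_div_cancel₀ _ hα]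
    rw [hfac, norm_smul]
    have hd1 : ‖β'/α‖ ≤ 1 := by
      rw [norm_div, div_le_one hαpos]
      exact hb'
    calc ‖α‖ * ‖u + (β'/α) • v‖ ≤ ‖α‖ * 1 :=
      mul_le_mul_of_nonneg_left (upper1 _ hd1) (norm_nonneg α)
      _ = ‖α‖ := mul_one _
  -- lower bound
  have hsum2 : (α • u + β • v) + (α • u + (-β) • v) = ((2:ℂ) * α) • u := by
    have hz : β • v + (-β) • v = 0 := by
      rw [← add_smul, add_neg_cancel, zero_smul]
    calc (α • u + β • v) + (α • u + (-β) • v) = (α • u + α • u) + (β • v + (-β) • v) := by abel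
      _ = ((2:ℂ) * α) • u := by
          rw [hz, add_zero, ← add_smul, two_mul]
  have hlow : 2 * ‖α‖ ≤ ‖α • u + β • v‖ + ‖α‖ := by
    have h2n : ‖((2:ℂ) * α) • u‖ = 2 * ‖α‖ := by
      rw [norm_smul, hu, mul_one, norm_mul]
      norm_num
    have hneg : ‖α • u + (-β) • v‖ ≤ ‖α‖ := upper2 (-β) (by rwa [norm_neg])
    calc 2 * ‖α‖ = ‖(α • u + β • v) + (α • u + (-β) • v)‖ := by rw [hsum2, h2n]
      _ ≤ ‖α • u + β • v‖ + ‖α • u + (-β) • v‖ := norm_add_le _ _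
      _ ≤ ‖α • u + β • v‖ + ‖α‖ := by linarith
  exact le_antisymm (upper2 β hba) (by linarith)

end TingleyAux


open TingleyAux in
/-- The images `Δ(eₙ)` and `Δ(eₘ)`, `n ≠ m`, are completely `M`-orthogonal. -/
theorem images_completely_M_orthogonal {Γ : Type*} [TopologicalSpace Γ] [DiscreteTopology Γ]
    [DecidableEq Γ] [Infinite Γ]
    {X : Type*} [NormedAddCommGroup X] [NormedSpace ℂ X] [CompleteSpace X]
    (Δ : sphere (0 : C₀(Γ, ℂ)) 1 → sphere (0 : X) 1)
    (hΔiso : Isometry Δ) (hΔsurj : Function.Surjective Δ)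
    (n m : Γ) (hnm : n ≠ m)
    (x y : sphere (0 : C₀(Γ, ℂ)) 1)
    (hx : (x : C₀(Γ, ℂ)) = stdBasis n) (hy : (y : C₀(Γ, ℂ)) = stdBasis m) :
    ∀ α β : ℂ, ‖α • (Δ x : X) + β • (Δ y : X)‖ = max ‖α‖ ‖β‖ := by
  intro α β
  have hu : ‖(Δ x : X)‖ = 1 := mem_sphere_zero_iff_norm.1 (Δ x).2
  have hv : ‖(Δ y : X)‖ = 1 := mem_sphere_zero_iff_norm.1 (Δ y).2
  have hone : ‖(1:ℂ)‖ = 1 := by norm_num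
  have hx1 : (x : C₀(Γ, ℂ)) = (1:ℂ) • stdBasis n := by rw [one_smul, hx]
  have hy1 : (y : C₀(Γ, ℂ)) = (1:ℂ) • stdBasis m := by rw [one_smul, hy]
  have hvx : vert x := by
    have hex : x = vtx 1 hone n := Subtype.ext (by rw [vtx_coe, one_smul, hx])
    rw [hex]; exact vert_vtx _ _ _
  have hvy : vert y := by
    have hey : y = vtx 1 hone m := Subtype.ext (by rw [vtx_coe, one_smul, hy])
    rw [hey]; exact vert_vtx _ _ _
  have hncxy : ¬ conn x y := by
    intro hc
    exact hnm (conn_axis hc hone hone hx1 hy1)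
  have key : ∀ lam mu : ℂ, ‖lam‖ = 1 → ‖mu‖ = 1 →
      ‖lam • (Δ x : X) + mu • (Δ y : X)‖ = 1 := by
    intro lam mu hl hm
    have hvu : ∀ (θ : ℂ) (hθ : ‖θ‖ = 1), vert (rot θ hθ (Δ x)) := fun θ hθ =>
      (vert_map (rot_isometry θ hθ) (rot_surjective θ hθ)).2
        ((vert_map hΔiso hΔsurj).2 hvx)
    have hvv : ∀ (θ : ℂ) (hθ : ‖θ‖ = 1), vert (rot θ hθ (Δ y)) := fun θ hθ =>
      (vert_map (rot_isometry θ hθ) (rot_surjective θ hθ)).2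
        ((vert_map hΔiso hΔsurj).2 hvy)
    have hneg : ‖(-mu : ℂ)‖ = 1 := by rwa [norm_neg]
    have hcu : conn (Δ x) (rot lam hl (Δ x)) := conn_rot _ hvu lam hl
    have hcv : conn (Δ y) (rot (-mu) hneg (Δ y)) := conn_rot _ hvv _ hneg
    obtain ⟨a', ha'⟩ := hΔsurj (rot lam hl (Δ x))
    obtain ⟨b', hb'⟩ := hΔsurj (rot (-mu) hneg (Δ y))
    have hva' : vert a' := (vert_map hΔiso hΔsurj).1 (by rw [ha']; exact hvu lam hl)
    have hvb' : vert b' := (vert_map hΔiso hΔsurj).1 (by rw [hb']; exact hvv (-mu) hneg)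
    obtain ⟨n', lam', hl', ha'c⟩ := vert_eq a' hva'
    obtain ⟨m', mu', hm', hb'c⟩ := vert_eq b' hvb'
    have hnc' : ¬ conn a' b' := by
      intro hc
      apply hncxy
      have h1 : conn x a' := (conn_map hΔiso hΔsurj).1 (by rw [ha']; exact hcu)
      have h2 : conn y b' := (conn_map hΔiso hΔsurj).1 (by rw [hb']; exact hcv)
      exact conn_trans (conn_trans h1 hc) (conn_symm h2)
    have hne' : n' ≠ m' := by
      intro he
      subst he
      exact hnc' (conn_same_axis n' hl' hm' a' b' ha'c hb'c)
    have hdist : dist a' b' = 1 := by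
      rw [Subtype.dist_eq, ha'c, hb'c, dist_eq_norm]
      exact norm_vtx_sub_ne hne' hl' hm'
    have hdist2 : dist (rot lam hl (Δ x)) (rot (-mu) hneg (Δ y)) = 1 := by
      rw [← ha', ← hb', hΔiso.dist_eq]
      exact hdist
    rw [Subtype.dist_eq, rot_coe, rot_coe, dist_eq_norm, neg_smul, sub_neg_eq_add] at hdist2
    exact hdist2
  rcases le_total ‖β‖ ‖α‖ with h | h
  · rw [pair_norm hu key h, max_eq_left h]
  · have key2 : ∀ lam mu : ℂ, ‖lam‖ = 1 → ‖mu‖ = 1 →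
        ‖lam • (Δ y : X) + mu • (Δ x : X)‖ = 1 := by
      intro lam mu hl hm
      rw [add_comm]
      exact key mu lam hm hl
    rw [add_comm, pair_norm hv key2 h, max_eq_right h]
end

section
/- Let X be a complex Banach space and Δ : S(c₀(Γ)) → S(X) a surjective isometry. Let n₁,…,n_k be distinct elements of Γ. Then ∑_{j=1}^k Δ(α_j e_{n_j}) = Δ(∑_{j=1}^k α_j e_{n_j}) for all α₁,…,α_k ∈ 𝕋. Consequently, {Δ(e_{n₁}),…,Δ(e_{n_k})} is completely M-orthogonal: ‖∑_{j=1}^k α_j Δ(e_{n_j})‖ = max_j |α_j| for all α₁,…,α_k ∈ ℂ. -/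
open ZeroAtInfty Metric

namespace TingleyC0

section Scalars

lemma normSq_le_one_of {a : ℂ} (ha : ‖a‖ ≤ 1) : Complex.normSq a ≤ 1 := by
  have ha' : ‖a‖ ≤ 1 := by exact ha
  have := Complex.sq_norm a
  nlinarith [norm_nonneg a]

lemma sc_neg_of {a b : ℂ} (h2 : 2 ≤ ‖a - b‖) (ha : ‖a‖ ≤ 1) (hb : ‖b‖ ≤ 1) : a = -b := by
  have h2' : 2 ≤ ‖a - b‖ := by exact h2
  have hsq : 4 ≤ Complex.normSq (a - b) := by
    have := Complex.sq_norm (a - b)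
    nlinarith [norm_nonneg (a - b)]
  have hna : Complex.normSq a ≤ 1 := normSq_le_one_of ha
  have hnb : Complex.normSq b ≤ 1 := normSq_le_one_of hb
  have hre : (a * (starRingEnd ℂ) b).re ≤ -1 := by
    have := Complex.normSq_sub a b; nlinarith
  have habs : -1 ≤ (a * (starRingEnd ℂ) b).re := by
    have h1 : |(a * (starRingEnd ℂ) b).re| ≤ ‖a * (starRingEnd ℂ) b‖ := Complex.abs_re_le_norm _
    have h2'' : ‖a * (starRingEnd ℂ) b‖ ≤ 1 := by
      rw [norm_mul]
      have hbb : ‖(starRingEnd ℂ) b‖ ≤ 1 := by simpa using hb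
      calc ‖a‖ * ‖(starRingEnd ℂ) b‖ ≤ 1 * 1 :=
            mul_le_mul ha hbb (norm_nonneg _) zero_le_one
        _ = 1 := by ring
    have := abs_le.1 (h1.trans h2'')
    linarith [this.1]
  have hre' : (a * (starRingEnd ℂ) b).re = -1 := le_antisymm hre habs
  have hz : Complex.normSq (a + b) = 0 := by
    have h5 := Complex.normSq_add a b
    have h6 := Complex.normSq_sub a b
    nlinarith [Complex.normSq_nonneg (a+b)]
  have := Complex.normSq_eq_zero.1 hz
  linear_combination this

lemma sc_one_of {a b : ℂ} (hs : a + b = 2) (ha : ‖a‖ ≤ 1) (hb : ‖b‖ ≤ 1) : a = 1 ∧ b = 1 := by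
  have hb' : b = 2 - a := by linear_combination hs
  have hna : Complex.normSq a ≤ 1 := normSq_le_one_of ha
  have hnb : Complex.normSq (2 - a) ≤ 1 := normSq_le_one_of (hb' ▸ hb)
  have hre : (3 : ℝ) + Complex.normSq a ≤ 4 * a.re := by
    have h7 := Complex.normSq_sub 2 a
    have h2 : Complex.normSq 2 = 4 := by
      rw [Complex.normSq_apply]; norm_num
    have h3 : ((2:ℂ) * (starRingEnd ℂ) a).re = 2 * a.re := by simp
    nlinarith
  have hz : Complex.normSq (a - 1) ≤ 0 := by
    have h8 := Complex.normSq_sub a 1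
    have h3 : ((a:ℂ) * (starRingEnd ℂ) 1).re = a.re := by simp
    have h1 : Complex.normSq (1:ℂ) = 1 := by simp
    nlinarith
  have ha1 : a = 1 := by
    have := Complex.normSq_eq_zero.1 (le_antisymm hz (Complex.normSq_nonneg _))
    linear_combination this
  exact ⟨ha1, by rw [hb', ha1]; ring⟩

lemma sc_zero_of {x : ℂ} (hre : x.re = 0) (h : ‖x + 1‖ ≤ 1) : x = 0 := by
  have hn : Complex.normSq (x + 1) ≤ 1 := normSq_le_one_of h
  have h9 := Complex.normSq_add x 1
  have h3 : ((x:ℂ) * (starRingEnd ℂ) 1).re = x.re := by simp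
  have h1 : Complex.normSq (1:ℂ) = 1 := by simp
  have hz : Complex.normSq x ≤ 0 := by nlinarith
  exact Complex.normSq_eq_zero.1 (le_antisymm hz (Complex.normSq_nonneg _))

lemma sc_small_of {a : ℂ} {r : ℝ} (h : ∀ lam : ℂ, ‖lam‖ = 1 → ‖a + lam‖ ≤ 1 + r) : ‖a‖ ≤ r := by
  by_cases ha : a = 0
  · have := h 1 (by simp)
    simp only [ha, zero_add] at this ⊢
    simp only [norm_one] at this
    simpa using by linarith
  · have hpos : 0 < ‖a‖ := norm_pos_iff.2 ha
    have hlam : ‖(‖a‖:ℂ)⁻¹ * a‖ = 1 := by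
      rw [norm_mul, norm_inv, Complex.norm_real, Real.norm_eq_abs, abs_of_pos hpos]
      exact inv_mul_cancel₀ (ne_of_gt hpos)
    have hh := h ((‖a‖:ℂ)⁻¹ * a) hlam
    have heq : a + (‖a‖:ℂ)⁻¹ * a = (1 + (‖a‖:ℂ)⁻¹) * a := by ring
    rw [heq, norm_mul] at hh
    have h1 : ‖(1 + (‖a‖:ℂ)⁻¹)‖ = 1 + ‖a‖⁻¹ := by
      have he : (1 + (‖a‖:ℂ)⁻¹) = ((1 + ‖a‖⁻¹ : ℝ) : ℂ) := by push_cast; ring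
      rw [he, Complex.norm_real]
      exact abs_of_nonneg (by positivity)
    rw [h1] at hh
    have hfe : (1 + ‖a‖⁻¹) * ‖a‖ = ‖a‖ + 1 := by
      rw [add_mul, one_mul, inv_mul_cancel₀ (ne_of_gt hpos)]
    nlinarith

end Scalars

section C0

variable {Γ : Type*} [TopologicalSpace Γ] [DiscreteTopology Γ] [DecidableEq Γ]
set_option linter.unusedSectionVars false

lemma apply_le_norm (f : C₀(Γ, ℂ)) (γ : Γ) : ‖f γ‖ ≤ ‖f‖ := by
  rw [← ZeroAtInftyContinuousMap.norm_toBCF_eq_norm]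
  exact BoundedContinuousFunction.norm_coe_le_norm f.toBCF γ

lemma norm_le_iff (f : C₀(Γ, ℂ)) {C : ℝ} (hC : 0 ≤ C) : ‖f‖ ≤ C ↔ ∀ γ, ‖f γ‖ ≤ C := by
  rw [← ZeroAtInftyContinuousMap.norm_toBCF_eq_norm]
  exact BoundedContinuousFunction.norm_le hC

lemma exists_gt_of_lt_norm (f : C₀(Γ, ℂ)) {C : ℝ} (hC : 0 ≤ C) (h : C < ‖f‖) :
    ∃ γ, C < ‖f γ‖ := by
  by_contra hcon
  push_neg at hcon
  exact absurd ((norm_le_iff f hC).2 hcon) (not_le.2 h)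

/-- coordinates ≥ 1/2 form a finite set -/
lemma finite_large (f : C₀(Γ, ℂ)) : {γ : Γ | (1:ℝ)/2 ≤ ‖f γ‖}.Finite := by
  have hz := f.zero_at_infty'
  have hb : Metric.ball (0:ℂ) (1/2) ∈ nhds (0:ℂ) := Metric.ball_mem_nhds 0 (by norm_num)
  have hmem := hz hb
  rw [Filter.mem_map, Filter.mem_cocompact] at hmem
  obtain ⟨K, hK, hsub⟩ := hmem
  refine (hK.finite_of_discrete).subset ?_
  intro γ hγ
  by_contra hcon
  have : γ ∈ Kᶜ := hcon
  have := hsub this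
  simp only [Set.mem_preimage, Metric.mem_ball, dist_zero_right] at this
  simp only [Set.mem_setOf_eq] at hγ
  have h' : ‖f γ‖ < 1/2 := this
  linarith

lemma exists_eq_one_off (f : C₀(Γ, ℂ)) (A : Finset Γ) {ε₀ : ℝ} (hε₀ : 0 < ε₀)
    (hb : ∀ γ, ‖f γ‖ ≤ 1)
    (h : ∀ ε : ℝ, 0 < ε → ε ≤ ε₀ → ∃ γ, γ ∉ A ∧ 1 - ε < ‖f γ‖) :
    ∃ γ, γ ∉ A ∧ ‖f γ‖ = 1 := by
  classical
  set ε₁ : ℝ := min ε₀ (1/4) with hε₁def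
  have hε₁ : 0 < ε₁ := lt_min hε₀ (by norm_num)
  have hε₁' : ε₁ ≤ ε₀ := min_le_left _ _
  set K : Finset Γ := (finite_large f).toFinset \ A with hKdef
  have hKmem : ∀ γ, γ ∉ A → (1:ℝ)/2 ≤ ‖f γ‖ → γ ∈ K := by
    intro γ hγA hγ
    rw [hKdef, Finset.mem_sdiff]
    exact ⟨(finite_large f).mem_toFinset.2 hγ, hγA⟩
  obtain ⟨γ₀, hγ₀A, hγ₀⟩ := h ε₁ hε₁ hε₁'
  have hγ₀K : γ₀ ∈ K := hKmem γ₀ hγ₀A (by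
    have : ε₁ ≤ 1/4 := min_le_right _ _
    linarith)
  have hKne : K.Nonempty := ⟨γ₀, hγ₀K⟩
  obtain ⟨gmax, hgmaxK, hmax⟩ := K.exists_max_image (fun γ => ‖f γ‖) hKne
  have hgmaxA : gmax ∉ A := by
    rw [hKdef, Finset.mem_sdiff] at hgmaxK; exact hgmaxK.2
  refine ⟨gmax, hgmaxA, le_antisymm (hb _) ?_⟩
  by_contra hcon
  push_neg at hcon
  set ε₂ : ℝ := min ε₁ (1 - ‖f gmax‖) with hε₂def
  have hε₂ : 0 < ε₂ := lt_min hε₁ (by linarith)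
  obtain ⟨γ₁, hγ₁A, hγ₁⟩ := h ε₂ hε₂ ((min_le_left _ _).trans hε₁')
  have hγ₁K : γ₁ ∈ K := hKmem γ₁ hγ₁A (by
    have h1 : ε₂ ≤ 1/4 := (min_le_left _ _).trans (min_le_right _ _)
    linarith)
  have := hmax γ₁ hγ₁K
  have h2 : ε₂ ≤ 1 - ‖f gmax‖ := min_le_right _ _
  linarith

lemma norm_le_max_of (f : C₀(Γ, ℂ)) (γ₀ : Γ) {C : ℝ} (hC : 0 ≤ C)
    (h : ∀ γ, γ ≠ γ₀ → ‖f γ‖ ≤ C) : ‖f‖ ≤ max ‖f γ₀‖ C := by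
  rw [norm_le_iff f (le_max_of_le_right hC)]
  intro γ
  by_cases hγ : γ = γ₀
  · subst hγ; exact le_max_left _ _
  · exact le_max_of_le_right (h γ hγ)

@[simp] lemma stdBasis_apply (n γ : Γ) : stdBasis n γ = if γ = n then 1 else 0 := rfl

lemma norm_stdBasis (n : Γ) : ‖stdBasis (Γ := Γ) n‖ = 1 := by
  refine le_antisymm ((norm_le_iff _ zero_le_one).2 ?_) ?_
  · intro γ; by_cases h : γ = n <;> simp [h]
  · have := apply_le_norm (stdBasis (Γ := Γ) n) n
    simpa using this

end C0

end TingleyC0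
section C0sum

variable {Γ : Type*} [TopologicalSpace Γ] [DiscreteTopology Γ] [DecidableEq Γ]
set_option linter.unusedSectionVars false

lemma c0_sum_apply {ι : Type*} (s : Finset ι) (F : ι → C₀(Γ, ℂ)) (γ : Γ) :
    (∑ i ∈ s, F i) γ = ∑ i ∈ s, F i γ := by
  classical
  induction s using Finset.induction with
  | empty => simp
  | insert _ _ h ih =>
    rw [Finset.sum_insert h, Finset.sum_insert h, ← ih]
    simp [ZeroAtInftyContinuousMap.coe_add]

/-- finitely supported vector with coefficients `c` on `F` -/
noncomputable def usum (F : Finset Γ) (c : Γ → ℂ) : C₀(Γ, ℂ) :=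
  ∑ γ ∈ F, c γ • stdBasis γ

lemma usum_apply (F : Finset Γ) (c : Γ → ℂ) (γ : Γ) :
    usum F c γ = if γ ∈ F then c γ else 0 := by
  classical
  rw [usum, c0_sum_apply]
  by_cases h : γ ∈ F
  · rw [Finset.sum_eq_single γ]
    · simp [h, ZeroAtInftyContinuousMap.coe_smul]
    · intro b _ hb
      simp [ZeroAtInftyContinuousMap.coe_smul, Ne.symm hb]
    · intro hγ; exact absurd h hγ
  · rw [Finset.sum_eq_zero, if_neg h]
    intro b hb
    have : γ ≠ b := fun hc => h (hc ▸ hb)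
    simp [ZeroAtInftyContinuousMap.coe_smul, this]

lemma usum_apply_mem {F : Finset Γ} {c : Γ → ℂ} {γ : Γ} (h : γ ∈ F) : usum F c γ = c γ := by
  rw [usum_apply, if_pos h]

lemma usum_apply_not_mem {F : Finset Γ} {c : Γ → ℂ} {γ : Γ} (h : γ ∉ F) : usum F c γ = 0 := by
  rw [usum_apply, if_neg h]

lemma norm_usum_le (F : Finset Γ) (c : Γ → ℂ) (h : ∀ γ ∈ F, ‖c γ‖ ≤ 1) : ‖usum F c‖ ≤ 1 := by
  rw [TingleyC0.norm_le_iff _ zero_le_one]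
  intro γ
  rw [usum_apply]
  by_cases hγ : γ ∈ F
  · rw [if_pos hγ]; exact h γ hγ
  · simp [hγ]

lemma norm_usum (F : Finset Γ) (c : Γ → ℂ) (hne : F.Nonempty) (h : ∀ γ ∈ F, ‖c γ‖ = 1) :
    ‖usum F c‖ = 1 := by
  obtain ⟨γ₀, hγ₀⟩ := hne
  refine le_antisymm (norm_usum_le F c fun γ hγ => le_of_eq (h γ hγ)) ?_
  have := TingleyC0.apply_le_norm (usum F c) γ₀
  rw [usum_apply_mem hγ₀, h γ₀ hγ₀] at this
  exact this

end C0sum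
section Main

open TingleyC0

variable {Γ : Type*} [TopologicalSpace Γ] [DiscreteTopology Γ] [DecidableEq Γ]
  {X : Type*} [NormedAddCommGroup X] [NormedSpace ℂ X]

set_option linter.unusedSectionVars false

lemma sphere_norm {W : Type*} [NormedAddCommGroup W] (a : sphere (0:W) 1) : ‖(a : W)‖ = 1 :=
  mem_sphere_zero_iff_norm.1 a.2

/-- sphere element constructor -/
noncomputable def sph (f : C₀(Γ,ℂ)) (hf : ‖f‖ = 1) : sphere (0 : C₀(Γ,ℂ)) 1 :=
  ⟨f, by rwa [mem_sphere_zero_iff_norm]⟩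

@[simp] lemma sph_val (f : C₀(Γ,ℂ)) (hf : ‖f‖ = 1) : ((sph f hf) : C₀(Γ,ℂ)) = f := rfl

lemma norm_bvec (n : Γ) (μ : ℂ) (hμ : ‖μ‖ = 1) : ‖μ • stdBasis (Γ := Γ) n‖ = 1 := by
  refine le_antisymm ((norm_le_iff _ zero_le_one).2 ?_) ?_
  · intro γ
    rw [ZeroAtInftyContinuousMap.coe_smul]
    by_cases h : γ = n <;> simp [h, hμ]
  · have := apply_le_norm (μ • stdBasis (Γ := Γ) n) n
    rw [ZeroAtInftyContinuousMap.coe_smul] at this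
    simpa [hμ] using this

/-- basis sphere vector -/
noncomputable def bvec (n : Γ) (μ : ℂ) (hμ : ‖μ‖ = 1) : sphere (0 : C₀(Γ,ℂ)) 1 :=
  sph (μ • stdBasis n) (norm_bvec n μ hμ)

@[simp] lemma bvec_val (n : Γ) (μ : ℂ) (hμ : ‖μ‖ = 1) :
    ((bvec n μ hμ) : C₀(Γ,ℂ)) = μ • stdBasis n := rfl

lemma smul_basis_apply (n : Γ) (μ : ℂ) (γ : Γ) :
    (μ • stdBasis (Γ := Γ) n) γ = if γ = n then μ else 0 := by
  rw [ZeroAtInftyContinuousMap.coe_smul]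
  by_cases h : γ = n <;> simp [h]

variable (Δ : sphere (0 : C₀(Γ, ℂ)) 1 → sphere (0 : X) 1)
  (hΔiso : Isometry Δ) (hΔsurj : Function.Surjective Δ)

include hΔiso in
lemma iso_norm (a b : sphere (0 : C₀(Γ,ℂ)) 1) :
    ‖(Δ a : X) - (Δ b : X)‖ = ‖(a : C₀(Γ,ℂ)) - (b : C₀(Γ,ℂ))‖ := by
  have := hΔiso.dist_eq a b
  rw [Subtype.dist_eq, Subtype.dist_eq, dist_eq_norm, dist_eq_norm] at this
  exact this

/-- the antipode preimage map -/
noncomputable def Jm (z : sphere (0 : C₀(Γ,ℂ)) 1) : sphere (0 : C₀(Γ,ℂ)) 1 :=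
  Function.surjInv hΔsurj
    ⟨-(Δ z : X), by rw [mem_sphere_zero_iff_norm, norm_neg]; exact sphere_norm _⟩

lemma Jm_spec (z : sphere (0 : C₀(Γ,ℂ)) 1) : (Δ (Jm Δ hΔsurj z) : X) = -(Δ z : X) := by
  have := Function.surjInv_eq hΔsurj
    (⟨-(Δ z : X), by rw [mem_sphere_zero_iff_norm, norm_neg]; exact sphere_norm _⟩ :
      sphere (0:X) 1)
  exact congrArg Subtype.val this

/-- if a sphere vector is at distance `≥ 2` from `μ • e n` then its `n`-th coordinate is `-μ` -/
lemma coord_pin (g : sphere (0 : C₀(Γ,ℂ)) 1) (n : Γ) (μ : ℂ) (hμ : ‖μ‖ ≤ 1)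
    (h2 : 2 ≤ ‖(g : C₀(Γ,ℂ)) - μ • stdBasis n‖) : (g : C₀(Γ,ℂ)) n = -μ := by
  set f : C₀(Γ,ℂ) := (g : C₀(Γ,ℂ)) - μ • stdBasis n with hf
  have hoff : ∀ γ, γ ≠ n → ‖f γ‖ ≤ 1 := by
    intro γ hγ
    have : f γ = (g : C₀(Γ,ℂ)) γ := by
      rw [hf, ZeroAtInftyContinuousMap.coe_sub]
      simp [smul_basis_apply, hγ]
    rw [this]
    exact (apply_le_norm _ γ).trans (le_of_eq (sphere_norm g))
  have hmax := norm_le_max_of f n zero_le_one hoff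
  have h2' : 2 ≤ max ‖f n‖ 1 := le_trans h2 hmax
  have hfn : 2 ≤ ‖f n‖ := by
    rcases max_cases ‖f n‖ 1 with ⟨he, _⟩ | ⟨he, _⟩
    · rwa [he] at h2'
    · rw [he] at h2'; linarith
  have hfneq : f n = (g : C₀(Γ,ℂ)) n - μ := by
    rw [hf, ZeroAtInftyContinuousMap.coe_sub]
    simp [smul_basis_apply]
  rw [hfneq] at hfn
  exact sc_neg_of hfn ((apply_le_norm _ n).trans (le_of_eq (sphere_norm g))) hμ

include hΔiso in
/-- preimages of antipodes of basis vectors have pinned coordinate -/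
lemma neg_pre_coord (n : Γ) (μ : ℂ) (hμ : ‖μ‖ = 1) (g : sphere (0 : C₀(Γ,ℂ)) 1)
    (hg : (Δ g : X) = -(Δ (bvec n μ hμ) : X)) : (g : C₀(Γ,ℂ)) n = -μ := by
  apply coord_pin g n μ (le_of_eq hμ)
  have h1 : ‖(Δ g : X) - (Δ (bvec n μ hμ) : X)‖ = 2 := by
    rw [hg]
    have h0 : -(Δ (bvec n μ hμ) : X) - (Δ (bvec n μ hμ) : X)
        = -((Δ (bvec n μ hμ) : X) + (Δ (bvec n μ hμ) : X)) := by abel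
    rw [h0, norm_neg, ← two_smul ℂ, norm_smul]
    have : ‖(2:ℂ)‖ = 2 := by norm_num
    rw [this, sphere_norm]
    norm_num
  have h2' := iso_norm Δ hΔiso g (bvec n μ hμ)
  rw [h1] at h2'
  have h3' : (2:ℝ) = ‖(g : C₀(Γ,ℂ)) - μ • stdBasis n‖ := by rw [h2', bvec_val]
  exact le_of_eq h3'

end Main
section Main2

open TingleyC0

variable {Γ : Type*} [TopologicalSpace Γ] [DiscreteTopology Γ] [DecidableEq Γ]
  {X : Type*} [NormedAddCommGroup X] [NormedSpace ℂ X]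
  (Δ : sphere (0 : C₀(Γ, ℂ)) 1 → sphere (0 : X) 1)
  (hΔiso : Isometry Δ) (hΔsurj : Function.Surjective Δ)

set_option linter.unusedSectionVars false

lemma c0_sub_apply (f h : C₀(Γ,ℂ)) (γ : Γ) : (f - h) γ = f γ - h γ := by
  rw [ZeroAtInftyContinuousMap.coe_sub]; rfl

lemma add_apply' (f h : C₀(Γ,ℂ)) (γ : Γ) : (f + h) γ = f γ + h γ := by
  rw [ZeroAtInftyContinuousMap.coe_add]; rfl

lemma coord_le_of_norm_le {f : C₀(Γ,ℂ)} {C : ℝ} (h : ‖f‖ ≤ C) (γ : Γ) : ‖f γ‖ ≤ C :=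
  (apply_le_norm f γ).trans h

include hΔiso hΔsurj in
/-- `‖Δz + Δy‖ = ‖z - Jm y‖` -/
lemma add_norm_via (z y : sphere (0 : C₀(Γ,ℂ)) 1) :
    ‖(Δ z : X) + (Δ y : X)‖ = ‖(z : C₀(Γ,ℂ)) - ((Jm Δ hΔsurj y) : C₀(Γ,ℂ))‖ := by
  have h1 : (Δ z : X) + (Δ y : X) = (Δ z : X) - (Δ (Jm Δ hΔsurj y) : X) := by
    rw [Jm_spec, sub_neg_eq_add]
  rw [h1, iso_norm Δ hΔiso]

include hΔiso hΔsurj in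
lemma master (n : Γ) (lam : ℂ) (hlam : ‖lam‖ = 1) (g : sphere (0 : C₀(Γ,ℂ)) 1)
    (hg : (Δ g : X) = -(Δ (bvec n lam hlam) : X))
    (T : Finset Γ) (hnT : n ∉ T) (hTne : T.Nonempty)
    (c : Γ → ℂ) (hc : ∀ m ∈ T, ‖c m‖ = 1)
    {ε₀ : ℝ} (hε₀ : 0 < ε₀) (hε₁ : ε₀ ≤ 1)
    (hsmall : ∀ m ∈ T, ‖(g : C₀(Γ,ℂ)) m - c m‖ ≤ 1 - ε₀) :
    ∃ l, l ∉ T ∧ l ≠ n ∧ ‖(g : C₀(Γ,ℂ)) l‖ = 1 := by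
  classical
  set E' := C₀(Γ,ℂ)
  set F : Finset Γ := insert n T with hF
  set cq : Γ → ℂ := fun γ => if γ = n then -lam else c γ with hcq
  have hq1 : ∀ γ ∈ F, ‖cq γ‖ = 1 := by
    intro γ hγ
    by_cases h : γ = n
    · simp [hcq, h, hlam]
    · rw [hF, Finset.mem_insert] at hγ
      rcases hγ with h' | h'
      · exact absurd h' h
      · simp only [hcq, if_neg h]; exact hc γ h'
  have hqnorm : ‖usum F cq‖ = 1 := norm_usum F cq ⟨n, Finset.mem_insert_self n T⟩ hq1
  set q : sphere (0 : C₀(Γ,ℂ)) 1 := sph (usum F cq) hqnorm with hqdef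
  have hqval : (q : C₀(Γ,ℂ)) = usum F cq := rfl
  set g₂ := Jm Δ hΔsurj q with hg₂def
  have hg₂ : (Δ g₂ : X) = -(Δ q : X) := Jm_spec Δ hΔsurj q
  -- pin coordinates of g₂ on T
  have hpinT : ∀ m ∈ T, (g₂ : C₀(Γ,ℂ)) m = -(c m) := by
    intro m hm
    have hmn : m ≠ n := fun h => hnT (h ▸ hm)
    set ym := bvec m (c m) (hc m hm) with hym
    set gm := Jm Δ hΔsurj ym with hgm
    have hgmm : (gm : C₀(Γ,ℂ)) m = -(c m) :=
      neg_pre_coord Δ hΔiso m (c m) (hc m hm) gm (Jm_spec Δ hΔsurj ym)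
    apply coord_pin g₂ m (c m) (le_of_eq (hc m hm))
    -- ‖g₂ - (c m) • e m‖ = ‖Δ q + Δ ym‖ = ‖q - gm‖ ≥ |q m - gm m| = 2
    have e1 : ‖(g₂ : C₀(Γ,ℂ)) - (ym : C₀(Γ,ℂ))‖ = ‖(Δ q : X) + (Δ ym : X)‖ := by
      rw [← iso_norm Δ hΔiso g₂ ym, hg₂]
      have : -(Δ q : X) - (Δ ym : X) = -((Δ q : X) + (Δ ym : X)) := by abel
      rw [this, norm_neg]
    have e2 : ‖(Δ q : X) + (Δ ym : X)‖ = ‖(q : C₀(Γ,ℂ)) - (gm : C₀(Γ,ℂ))‖ :=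
      add_norm_via Δ hΔiso hΔsurj q ym
    have e3 : (2:ℝ) ≤ ‖(q : C₀(Γ,ℂ)) - (gm : C₀(Γ,ℂ))‖ := by
      have hq_m : (q : C₀(Γ,ℂ)) m = c m := by
        rw [hqval]
        rw [usum_apply_mem (by rw [hF]; exact Finset.mem_insert_of_mem hm)]
        simp [hcq, hmn]
      have := apply_le_norm ((q : C₀(Γ,ℂ)) - (gm : C₀(Γ,ℂ))) m
      rw [c0_sub_apply, hq_m, hgmm, sub_neg_eq_add] at this
      have h2cm : ‖c m + c m‖ = 2 := by
        have : c m + c m = (2:ℂ) * c m := by ring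
        rw [this, norm_mul, hc m hm]
        norm_num
      rw [h2cm] at this
      exact this
    rw [← bvec_val m (c m) (hc m hm), ← hym]
    calc (2:ℝ) ≤ ‖(q : C₀(Γ,ℂ)) - (gm : C₀(Γ,ℂ))‖ := e3
      _ = ‖(Δ q : X) + (Δ ym : X)‖ := e2.symm
      _ = ‖(g₂ : C₀(Γ,ℂ)) - (ym : C₀(Γ,ℂ))‖ := e1.symm
  -- pin coordinate n of g₂ : g₂ n = lam
  have hpinN : (g₂ : C₀(Γ,ℂ)) n = lam := by
    have hnl : ‖-lam‖ = 1 := by rwa [norm_neg]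
    set yn := bvec n (-lam) hnl with hyn
    set gn := Jm Δ hΔsurj yn with hgn
    have hgnn : (gn : C₀(Γ,ℂ)) n = lam := by
      have := neg_pre_coord Δ hΔiso n (-lam) hnl gn (Jm_spec Δ hΔsurj yn)
      rwa [neg_neg] at this
    have := coord_pin g₂ n (-lam) (le_of_eq hnl) ?_
    · rwa [neg_neg] at this
    have e1 : ‖(g₂ : C₀(Γ,ℂ)) - (yn : C₀(Γ,ℂ))‖ = ‖(Δ q : X) + (Δ yn : X)‖ := by
      rw [← iso_norm Δ hΔiso g₂ yn, hg₂]
      have : -(Δ q : X) - (Δ yn : X) = -((Δ q : X) + (Δ yn : X)) := by abel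
      rw [this, norm_neg]
    have e2 : ‖(Δ q : X) + (Δ yn : X)‖ = ‖(q : C₀(Γ,ℂ)) - (gn : C₀(Γ,ℂ))‖ :=
      add_norm_via Δ hΔiso hΔsurj q yn
    have e3 : (2:ℝ) ≤ ‖(q : C₀(Γ,ℂ)) - (gn : C₀(Γ,ℂ))‖ := by
      have hq_n : (q : C₀(Γ,ℂ)) n = -lam := by
        rw [hqval, usum_apply_mem (by rw [hF]; exact Finset.mem_insert_self n T)]
        simp [hcq]
      have := apply_le_norm ((q : C₀(Γ,ℂ)) - (gn : C₀(Γ,ℂ))) n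
      rw [c0_sub_apply, hq_n, hgnn] at this
      have h2cm : ‖-lam - lam‖ = 2 := by
        have : -lam - lam = (-2:ℂ) * lam := by ring
        rw [this, norm_mul, hlam]
        norm_num
      rw [h2cm] at this
      exact this
    rw [← bvec_val n (-lam) hnl, ← hyn]
    calc (2:ℝ) ≤ ‖(q : C₀(Γ,ℂ)) - (gn : C₀(Γ,ℂ))‖ := e3
      _ = ‖(Δ q : X) + (Δ yn : X)‖ := e2.symm
      _ = ‖(g₂ : C₀(Γ,ℂ)) - (yn : C₀(Γ,ℂ))‖ := e1.symm
  -- key : 1 ≤ ‖g - q‖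
  obtain ⟨m₁, hm₁⟩ := hTne
  have hkey : (1:ℝ) ≤ ‖(g : C₀(Γ,ℂ)) - (q : C₀(Γ,ℂ))‖ := by
    have e0 : ‖(g : C₀(Γ,ℂ)) - (q : C₀(Γ,ℂ))‖
        = ‖(Δ g : X) - (Δ q : X)‖ := (iso_norm Δ hΔiso g q).symm
    have e1 : ‖(Δ g : X) - (Δ q : X)‖ = ‖(Δ q : X) + (Δ (bvec n lam hlam) : X)‖ := by
      rw [hg]
      have : -(Δ (bvec n lam hlam) : X) - (Δ q : X)
          = -((Δ q : X) + (Δ (bvec n lam hlam) : X)) := by abel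
      rw [this, norm_neg]
    have e2 : ‖(Δ q : X) + (Δ (bvec n lam hlam) : X)‖
        = ‖((bvec n lam hlam) : C₀(Γ,ℂ)) - (g₂ : C₀(Γ,ℂ))‖ := by
      rw [add_comm ((Δ q : X)) _]
      exact add_norm_via Δ hΔiso hΔsurj (bvec n lam hlam) q
    have e3 : (1:ℝ) ≤ ‖((bvec n lam hlam) : C₀(Γ,ℂ)) - (g₂ : C₀(Γ,ℂ))‖ := by
      have hmn : m₁ ≠ n := fun h => hnT (h ▸ hm₁)
      have := apply_le_norm (((bvec n lam hlam) : C₀(Γ,ℂ)) - (g₂ : C₀(Γ,ℂ))) m₁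
      rw [c0_sub_apply, bvec_val, smul_basis_apply, if_neg hmn, hpinT m₁ hm₁, zero_sub, neg_neg,
        hc m₁ hm₁] at this
      exact this
    rw [e0, e1, e2]
    exact e3
  -- now apply the existence lemma
  have hgneg : (g : C₀(Γ,ℂ)) n = -lam := neg_pre_coord Δ hΔiso n lam hlam g hg
  set f : C₀(Γ,ℂ) := (g : C₀(Γ,ℂ)) - (q : C₀(Γ,ℂ)) with hfdef
  have hfn : f n = 0 := by
    rw [hfdef, c0_sub_apply, hgneg, hqval,
      usum_apply_mem (by rw [hF]; exact Finset.mem_insert_self n T)]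
    simp [hcq]
  have hfT : ∀ m ∈ T, ‖f m‖ ≤ 1 - ε₀ := by
    intro m hm
    have hmn : m ≠ n := fun h => hnT (h ▸ hm)
    rw [hfdef, c0_sub_apply, hqval,
      usum_apply_mem (by rw [hF]; exact Finset.mem_insert_of_mem hm)]
    simp only [hcq, if_neg hmn]
    exact hsmall m hm
  have hfoff : ∀ γ, γ ∉ F → f γ = (g : C₀(Γ,ℂ)) γ := by
    intro γ hγ
    rw [hfdef, c0_sub_apply, hqval, usum_apply_not_mem hγ, sub_zero]
  have hb : ∀ γ, ‖f γ‖ ≤ 1 := by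
    intro γ
    by_cases h1 : γ = n
    · rw [h1, hfn]; simp
    · by_cases h2 : γ ∈ T
      · exact (hfT γ h2).trans (by linarith)
      · have : γ ∉ F := by
          rw [hF, Finset.mem_insert]; push_neg; exact ⟨h1, h2⟩
        rw [hfoff γ this]
        exact coord_le_of_norm_le (le_of_eq (sphere_norm g)) γ
  have hhyp : ∀ ε : ℝ, 0 < ε → ε ≤ ε₀ → ∃ γ, γ ∉ F ∧ 1 - ε < ‖f γ‖ := by
    intro ε hε hεε₀
    have hC : (0:ℝ) ≤ 1 - ε := by linarith
    have hlt : 1 - ε < ‖f‖ := by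
      have h' : 1 - ε < 1 := by linarith
      exact lt_of_lt_of_le h' hkey
    obtain ⟨γ, hγ⟩ := exists_gt_of_lt_norm f hC hlt
    refine ⟨γ, ?_, hγ⟩
    intro hγF
    rw [hF, Finset.mem_insert] at hγF
    rcases hγF with h1 | h2
    · rw [h1, hfn] at hγ; simp at hγ; linarith
    · have := hfT γ h2
      linarith
  obtain ⟨l, hlF, hl1⟩ := exists_eq_one_off f F hε₀ hb hhyp
  have hlT : l ∉ T := fun h => hlF (by rw [hF]; exact Finset.mem_insert_of_mem h)
  have hln : l ≠ n := fun h => hlF (by rw [hF, h]; exact Finset.mem_insert_self n T)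
  refine ⟨l, hlT, hln, ?_⟩
  rw [← hfoff l hlF]
  exact hl1

end Main2
section Main3

open TingleyC0

variable {Γ : Type*} [TopologicalSpace Γ] [DiscreteTopology Γ] [DecidableEq Γ]
  {X : Type*} [NormedAddCommGroup X] [NormedSpace ℂ X]
  (Δ : sphere (0 : C₀(Γ, ℂ)) 1 → sphere (0 : X) 1)
  (hΔiso : Isometry Δ) (hΔsurj : Function.Surjective Δ)

set_option linter.unusedSectionVars false

include hΔiso hΔsurj in
/-- Antipodality for scaled basis vectors: `Δ(-λeₙ) = -Δ(λeₙ)`. -/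
lemma basis_antipodal (n : Γ) (lam : ℂ) (hlam : ‖lam‖ = 1)
    (y' : sphere (0 : C₀(Γ,ℂ)) 1) (hy' : (y' : C₀(Γ,ℂ)) = -(lam • stdBasis n)) :
    (Δ y' : X) = -(Δ (bvec n lam hlam) : X) := by
  classical
  set g := Jm Δ hΔsurj (bvec n lam hlam) with hgdef
  have hg : (Δ g : X) = -(Δ (bvec n lam hlam) : X) := Jm_spec Δ hΔsurj (bvec n lam hlam)
  suffices hval : (g : C₀(Γ,ℂ)) = -(lam • stdBasis n) by
    have : y' = g := Subtype.ext (by rw [hy', hval])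
    rw [this, hg]
  have hgn : (g : C₀(Γ,ℂ)) n = -lam := neg_pre_coord Δ hΔiso n lam hlam g hg
  have hzero : ∀ m, m ≠ n → (g : C₀(Γ,ℂ)) m = 0 := by
    by_contra hcon
    push_neg at hcon
    obtain ⟨m₀, hm₀n, hm₀⟩ := hcon
    -- base : some coordinate ≠ n has modulus 1
    have base : ∃ l, l ≠ n ∧ ‖(g : C₀(Γ,ℂ)) l‖ = 1 := by
      set ρ : ℝ := ‖(g : C₀(Γ,ℂ)) m₀‖ with hρdef
      have hρ : 0 < ρ := norm_pos_iff.2 hm₀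
      have hρ1 : ρ ≤ 1 := coord_le_of_norm_le (le_of_eq (sphere_norm g)) m₀
      set ν : ℂ := (ρ:ℂ)⁻¹ * (g : C₀(Γ,ℂ)) m₀ with hνdef
      have hν : ‖ν‖ = 1 := by
        rw [hνdef, norm_mul, norm_inv, Complex.norm_real, Real.norm_eq_abs, abs_of_pos hρ,
          ← hρdef]
        exact inv_mul_cancel₀ (ne_of_gt hρ)
      have hsm : ‖(g : C₀(Γ,ℂ)) m₀ - ν‖ = 1 - ρ := by
        have heq : (g : C₀(Γ,ℂ)) m₀ - ν = (1 - (ρ:ℂ)⁻¹) * (g : C₀(Γ,ℂ)) m₀ := by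
          rw [hνdef]; ring
        rw [heq, norm_mul, ← hρdef]
        have h1 : (1 - (ρ:ℂ)⁻¹) = (((1 - ρ⁻¹) : ℝ) : ℂ) := by push_cast; ring
        rw [h1, Complex.norm_real, Real.norm_eq_abs]
        have hmc := mul_inv_cancel₀ (ne_of_gt hρ)
        have hρinv : 1 ≤ ρ⁻¹ := by nlinarith [inv_pos.mpr hρ]
        rw [abs_of_nonpos (by linarith)]
        have : -(1 - ρ⁻¹) * ρ = ρ⁻¹ * ρ - ρ := by ring
        rw [this, inv_mul_cancel₀ (ne_of_gt hρ)]
      obtain ⟨l, _, hln, hl⟩ := master Δ hΔiso hΔsurj n lam hlam g hg {m₀}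
        (by simp [Ne.symm hm₀n]) ⟨m₀, Finset.mem_singleton_self m₀⟩
        (fun _ => ν) (by intro m hm; exact hν) hρ hρ1
        (by intro m hm; rw [Finset.mem_singleton] at hm; rw [hm, hsm])
      exact ⟨l, hln, hl⟩
    -- build arbitrarily large sets of unimodular coordinates
    have build : ∀ j : ℕ, ∃ T : Finset Γ, n ∉ T ∧ (∀ m ∈ T, ‖(g : C₀(Γ,ℂ)) m‖ = 1)
        ∧ T.card = j + 1 := by
      intro j
      induction j with
      | zero =>
        obtain ⟨l, hln, hl⟩ := base
        refine ⟨{l}, by simp [Ne.symm hln], ?_, by simp⟩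
        intro m hm
        rw [Finset.mem_singleton] at hm
        rw [hm]; exact hl
      | succ j ih =>
        obtain ⟨T, hnT, hT, hcard⟩ := ih
        have hTne : T.Nonempty := Finset.card_pos.1 (by rw [hcard]; omega)
        obtain ⟨l, hlT, hln, hl⟩ := master Δ hΔiso hΔsurj n lam hlam g hg T hnT hTne
          (fun m => (g : C₀(Γ,ℂ)) m) hT one_pos le_rfl
          (by intro m hm; simp)
        refine ⟨insert l T, ?_, ?_, ?_⟩
        · rw [Finset.mem_insert]; push_neg; exact ⟨Ne.symm hln, hnT⟩
        · intro m hm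
          rw [Finset.mem_insert] at hm
          rcases hm with h | h
          · rw [h]; exact hl
          · exact hT m h
        · rw [Finset.card_insert_of_notMem hlT, hcard]
    -- contradiction with finiteness
    set K := (finite_large (g : C₀(Γ,ℂ))).toFinset with hK
    obtain ⟨T, hnT, hT, hcard⟩ := build K.card
    have hsub : T ⊆ K := by
      intro m hm
      rw [hK, Set.Finite.mem_toFinset]
      show (1:ℝ)/2 ≤ ‖(g : C₀(Γ,ℂ)) m‖
      rw [hT m hm]; norm_num
    have := Finset.card_le_card hsub
    omega
  -- conclude g = -(lam • stdBasis n)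
  apply DFunLike.ext
  intro γ
  by_cases h : γ = n
  · subst h
    rw [hgn, ZeroAtInftyContinuousMap.coe_neg]
    simp [smul_basis_apply]
  · rw [hzero γ h, ZeroAtInftyContinuousMap.coe_neg]
    simp [smul_basis_apply, h]

end Main3
section Main4

open TingleyC0

variable {Γ : Type*} [TopologicalSpace Γ] [DiscreteTopology Γ] [DecidableEq Γ]
  {X : Type*} [NormedAddCommGroup X] [NormedSpace ℂ X]
  (Δ : sphere (0 : C₀(Γ, ℂ)) 1 → sphere (0 : X) 1)
  (hΔiso : Isometry Δ) (hΔsurj : Function.Surjective Δ)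

set_option linter.unusedSectionVars false

lemma usum_neg (F : Finset Γ) (c : Γ → ℂ) : -usum F c = usum F (fun γ => -(c γ)) := by
  apply DFunLike.ext
  intro γ
  rw [ZeroAtInftyContinuousMap.coe_neg]
  show -(usum F c γ) = _
  rw [usum_apply, usum_apply]
  by_cases h : γ ∈ F <;> simp [h]

lemma norm_usum_sub_basis (F : Finset Γ) (c : Γ → ℂ) (hc : ∀ γ ∈ F, ‖c γ‖ = 1)
    (m : Γ) (hm : m ∉ F) (ν : ℂ) (hν : ‖ν‖ = 1) : ‖ν • stdBasis m - usum F c‖ = 1 := by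
  refine le_antisymm ((norm_le_iff _ zero_le_one).2 ?_) ?_
  · intro γ
    rw [c0_sub_apply, smul_basis_apply, usum_apply]
    by_cases h1 : γ = m
    · rw [if_pos h1, if_neg (h1 ▸ hm)]; simp [hν]
    · rw [if_neg h1]
      by_cases h2 : γ ∈ F
      · rw [if_pos h2]; simp [hc γ h2]
      · rw [if_neg h2]; simp
  · have := apply_le_norm (ν • stdBasis m - usum F c) m
    rw [c0_sub_apply, smul_basis_apply, if_pos rfl, usum_apply_not_mem hm, sub_zero, hν] at this
    exact this

lemma norm_usum_add_basis_le (F : Finset Γ) (c : Γ → ℂ) (hc : ∀ γ ∈ F, ‖c γ‖ = 1)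
    (m : Γ) (hm : m ∉ F) (ν : ℂ) (hν : ‖ν‖ = 1) : ‖usum F c + ν • stdBasis m‖ ≤ 1 := by
  refine (norm_le_iff _ zero_le_one).2 ?_
  intro γ
  rw [add_apply', smul_basis_apply, usum_apply]
  by_cases h1 : γ = m
  · rw [if_pos h1, if_neg (h1 ▸ hm)]; simp [hν]
  · rw [if_neg h1]
    by_cases h2 : γ ∈ F
    · rw [if_pos h2]; simp [hc γ h2]
    · rw [if_neg h2]; simp

include hΔiso hΔsurj in
/-- Antipodality for unimodular finitely supported vectors. -/
lemma usum_antipodal (F : Finset Γ) (hFne : F.Nonempty) (c : Γ → ℂ)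
    (hc : ∀ γ ∈ F, ‖c γ‖ = 1)
    (u u' : sphere (0 : C₀(Γ,ℂ)) 1) (hu : (u : C₀(Γ,ℂ)) = usum F c)
    (hu' : (u' : C₀(Γ,ℂ)) = -usum F c) :
    (Δ u' : X) = -(Δ u : X) := by
  classical
  set h := Jm Δ hΔsurj u with hhdef
  have hh : (Δ h : X) = -(Δ u : X) := Jm_spec Δ hΔsurj u
  suffices hval : (h : C₀(Γ,ℂ)) = -usum F c by
    have : u' = h := Subtype.ext (by rw [hu', hval])
    rw [this, hh]
  have hpin : ∀ γ ∈ F, (h : C₀(Γ,ℂ)) γ = -(c γ) := by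
    intro γ hγ
    apply coord_pin h γ (c γ) (le_of_eq (hc γ hγ))
    have hbneg : ‖-((c γ) • stdBasis γ)‖ = 1 := by
      rw [norm_neg]; exact norm_bvec γ (c γ) (hc γ hγ)
    set y' : sphere (0 : C₀(Γ,ℂ)) 1 := sph (-((c γ) • stdBasis γ)) hbneg with hy'def
    have hanti : (Δ y' : X) = -(Δ (bvec γ (c γ) (hc γ hγ)) : X) :=
      basis_antipodal Δ hΔiso hΔsurj γ (c γ) (hc γ hγ) y' rfl
    have e1 : ‖(h : C₀(Γ,ℂ)) - (c γ) • stdBasis γ‖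
        = ‖(Δ u : X) + (Δ (bvec γ (c γ) (hc γ hγ)) : X)‖ := by
      have h1 : (Δ h : X) - (Δ (bvec γ (c γ) (hc γ hγ)) : X)
          = -((Δ u : X) + (Δ (bvec γ (c γ) (hc γ hγ)) : X)) := by rw [hh]; abel
      rw [← bvec_val γ (c γ) (hc γ hγ), ← iso_norm Δ hΔiso h (bvec γ (c γ) (hc γ hγ)), h1,
        norm_neg]
    have e2 : ‖(Δ u : X) + (Δ (bvec γ (c γ) (hc γ hγ)) : X)‖
        = ‖(u : C₀(Γ,ℂ)) - (y' : C₀(Γ,ℂ))‖ := by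
      have h1 : (Δ u : X) - (Δ y' : X) = (Δ u : X) + (Δ (bvec γ (c γ) (hc γ hγ)) : X) := by
        rw [hanti, sub_neg_eq_add]
      rw [← h1, iso_norm Δ hΔiso u y']
    have e3 : (2:ℝ) ≤ ‖(u : C₀(Γ,ℂ)) - (y' : C₀(Γ,ℂ))‖ := by
      have hyv : (y' : C₀(Γ,ℂ)) γ = -(c γ) := by
        show (-((c γ) • stdBasis γ)) γ = -(c γ)
        rw [ZeroAtInftyContinuousMap.coe_neg]
        show -((c γ • stdBasis γ) γ) = _
        rw [smul_basis_apply, if_pos rfl]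
      have hval : ‖((u : C₀(Γ,ℂ)) - (y' : C₀(Γ,ℂ))) γ‖ = 2 := by
        rw [c0_sub_apply, hu, usum_apply_mem hγ, hyv, sub_neg_eq_add]
        have he : c γ + c γ = (2:ℂ) * c γ := by ring
        rw [he, norm_mul, hc γ hγ]; norm_num
      linarith [apply_le_norm ((u : C₀(Γ,ℂ)) - (y' : C₀(Γ,ℂ))) γ, hval.ge,
        hval.le]
    rw [e1, e2]
    exact e3
  have hzero : ∀ γ, γ ∉ F → (h : C₀(Γ,ℂ)) γ = 0 := by
    intro γ hγ
    have key : ∀ lam : ℂ, ‖lam‖ = 1 → ‖(h : C₀(Γ,ℂ)) γ + lam‖ ≤ 1 := by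
      intro lam hlam
      have hnl : ‖-lam‖ = 1 := by rwa [norm_neg]
      have hbneg : ‖-((-lam) • stdBasis γ)‖ = 1 := by
        rw [norm_neg]; exact norm_bvec γ (-lam) hnl
      set y' : sphere (0 : C₀(Γ,ℂ)) 1 := sph (-((-lam) • stdBasis γ)) hbneg with hy'def
      have hanti : (Δ y' : X) = -(Δ (bvec γ (-lam) hnl) : X) :=
        basis_antipodal Δ hΔiso hΔsurj γ (-lam) hnl y' rfl
      have e1 : ‖(h : C₀(Γ,ℂ)) - (-lam) • stdBasis γ‖
          = ‖(Δ u : X) + (Δ (bvec γ (-lam) hnl) : X)‖ := by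
        have h1 : (Δ h : X) - (Δ (bvec γ (-lam) hnl) : X)
            = -((Δ u : X) + (Δ (bvec γ (-lam) hnl) : X)) := by rw [hh]; abel
        rw [← bvec_val γ (-lam) hnl, ← iso_norm Δ hΔiso h (bvec γ (-lam) hnl), h1, norm_neg]
      have e2 : ‖(Δ u : X) + (Δ (bvec γ (-lam) hnl) : X)‖ ≤ 1 := by
        have h1 : (Δ u : X) - (Δ y' : X) = (Δ u : X) + (Δ (bvec γ (-lam) hnl) : X) := by
          rw [hanti, sub_neg_eq_add]
        rw [← h1, iso_norm Δ hΔiso u y']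
        have h2 : (u : C₀(Γ,ℂ)) - (y' : C₀(Γ,ℂ)) = usum F c + (-lam) • stdBasis γ := by
          rw [hu]
          show usum F c - (-((-lam) • stdBasis γ)) = _
          rw [sub_neg_eq_add]
        rw [h2]
        exact norm_usum_add_basis_le F c hc γ hγ (-lam) hnl
      have e3 := apply_le_norm ((h : C₀(Γ,ℂ)) - (-lam) • stdBasis γ) γ
      rw [c0_sub_apply, smul_basis_apply, if_pos rfl] at e3
      have e4 : ‖(h : C₀(Γ,ℂ)) γ + lam‖ ≤ ‖(h : C₀(Γ,ℂ)) - (-lam) • stdBasis γ‖ := by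
        have he : (h : C₀(Γ,ℂ)) γ - (-lam) = (h : C₀(Γ,ℂ)) γ + lam := by ring
        rwa [he] at e3
      calc ‖(h : C₀(Γ,ℂ)) γ + lam‖ ≤ ‖(h : C₀(Γ,ℂ)) - (-lam) • stdBasis γ‖ := e4
        _ = ‖(Δ u : X) + (Δ (bvec γ (-lam) hnl) : X)‖ := e1
        _ ≤ 1 := e2
    have key' : ∀ lam : ℂ, ‖lam‖ = 1 → ‖(h : C₀(Γ,ℂ)) γ + lam‖ ≤ 1 + 0 := by
      intro lam hlam; rw [add_zero]; exact key lam hlam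
    have := sc_small_of key'
    exact norm_le_zero_iff.1 this
  apply DFunLike.ext
  intro γ
  rw [ZeroAtInftyContinuousMap.coe_neg]
  show (h : C₀(Γ,ℂ)) γ = -(usum F c γ)
  by_cases hγ : γ ∈ F
  · rw [hpin γ hγ, usum_apply_mem hγ]
  · rw [hzero γ hγ, usum_apply_not_mem hγ, neg_zero]

include hΔiso hΔsurj in
/-- `‖Δz + Δu‖ = ‖z + u‖` for `u` unimodular finitely supported. -/
lemma rel_add (z : sphere (0 : C₀(Γ,ℂ)) 1) (F : Finset Γ) (hFne : F.Nonempty) (c : Γ → ℂ)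
    (hc : ∀ γ ∈ F, ‖c γ‖ = 1) (u : sphere (0 : C₀(Γ,ℂ)) 1) (hu : (u : C₀(Γ,ℂ)) = usum F c) :
    ‖(Δ z : X) + (Δ u : X)‖ = ‖(z : C₀(Γ,ℂ)) + (u : C₀(Γ,ℂ))‖ := by
  have hnorm : ‖-usum F c‖ = 1 := by rw [norm_neg]; exact norm_usum F c hFne hc
  set u' : sphere (0 : C₀(Γ,ℂ)) 1 := sph (-usum F c) hnorm with hu'def
  have hanti : (Δ u' : X) = -(Δ u : X) :=
    usum_antipodal Δ hΔiso hΔsurj F hFne c hc u u' hu rfl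
  have h1 : (Δ z : X) + (Δ u : X) = (Δ z : X) - (Δ u' : X) := by
    rw [hanti, sub_neg_eq_add]
  rw [h1, iso_norm Δ hΔiso z u']
  have h2 : (z : C₀(Γ,ℂ)) - (u' : C₀(Γ,ℂ)) = (z : C₀(Γ,ℂ)) + (u : C₀(Γ,ℂ)) := by
    show (z : C₀(Γ,ℂ)) - (-usum F c) = _
    rw [sub_neg_eq_add, hu]
  rw [h2]

end Main4
section Main5

open TingleyC0

variable {Γ : Type*} [TopologicalSpace Γ] [DiscreteTopology Γ] [DecidableEq Γ]
  {X : Type*} [NormedAddCommGroup X] [NormedSpace ℂ X]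
  (Δ : sphere (0 : C₀(Γ, ℂ)) 1 → sphere (0 : X) 1)
  (hΔiso : Isometry Δ) (hΔsurj : Function.Surjective Δ)

set_option linter.unusedSectionVars false

lemma gf_val_le {gf : X →L[ℂ] ℂ} (hg : ‖gf‖ ≤ 1) {x : X} (hx : ‖x‖ ≤ 1) : ‖gf x‖ ≤ 1 := by
  calc ‖gf x‖ ≤ ‖gf‖ * ‖x‖ := gf.le_opNorm x
    _ ≤ 1 * 1 := mul_le_mul hg hx (norm_nonneg x) zero_le_one
    _ = 1 := by ring

lemma mid_one {x y : X} (hx : ‖x‖ ≤ 1) (hy : ‖y‖ ≤ 1) (gf : X →L[ℂ] ℂ) (hg : ‖gf‖ ≤ 1)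
    (h : gf x + gf y = 2) : gf x = 1 ∧ gf y = 1 :=
  sc_one_of h (gf_val_le hg hx) (gf_val_le hg hy)

lemma exists_pair_functional {x y : X} (hx : ‖x‖ ≤ 1) (hy : ‖y‖ ≤ 1) (h2 : ‖x + y‖ = 2) :
    ∃ gf : X →L[ℂ] ℂ, ‖gf‖ ≤ 1 ∧ gf x = 1 ∧ gf y = 1 := by
  have hne : x + y ≠ 0 := by
    intro h; rw [h] at h2; simp at h2
  obtain ⟨gf, hg1, hgx⟩ := exists_dual_vector ℂ (x + y) (norm_ne_zero_iff.mpr hne)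
  have hsum : gf x + gf y = 2 := by
    rw [← map_add, hgx, h2]
    norm_num
  obtain ⟨h1, h2'⟩ := mid_one hx hy gf (le_of_eq hg1) hsum
  exact ⟨gf, le_of_eq hg1, h1, h2'⟩

include hΔiso hΔsurj in
/-- a norm-one functional norming `Δ(ν e_m)` vanishes on `Δ u` for all unimodular `u`
supported off `m`. -/
lemma vanish (m : Γ) (ν : ℂ) (hν : ‖ν‖ = 1) (b : sphere (0 : C₀(Γ,ℂ)) 1)
    (hb : (b : C₀(Γ,ℂ)) = ν • stdBasis m)
    (gf : X →L[ℂ] ℂ) (hg : ‖gf‖ ≤ 1) (hgb : gf (Δ b : X) = 1)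
    (F : Finset Γ) (hFne : F.Nonempty) (hmF : m ∉ F) (c : Γ → ℂ) (hc : ∀ γ ∈ F, ‖c γ‖ = 1)
    (u : sphere (0 : C₀(Γ,ℂ)) 1) (hu : (u : C₀(Γ,ℂ)) = usum F c) : gf (Δ u : X) = 0 := by
  have hre : ∀ (c' : Γ → ℂ), (∀ γ ∈ F, ‖c' γ‖ = 1) →
      ∀ (w : sphere (0 : C₀(Γ,ℂ)) 1), (w : C₀(Γ,ℂ)) = usum F c' →
      0 ≤ (gf (Δ w : X)).re := by
    intro c' hc' w hw
    have hdist : ‖(b : C₀(Γ,ℂ)) - (w : C₀(Γ,ℂ))‖ = 1 := by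
      rw [hb, hw]; exact norm_usum_sub_basis F c' hc' m hmF ν hν
    have h1 : ‖gf ((Δ b : X) - (Δ w : X))‖ ≤ 1 := by
      apply gf_val_le hg
      rw [iso_norm Δ hΔiso b w, hdist]
    have heq : gf (Δ w : X) = 1 - gf ((Δ b : X) - (Δ w : X)) := by
      rw [map_sub, hgb]; ring
    have hre1 : (gf ((Δ b : X) - (Δ w : X))).re ≤ 1 := by
      have := Complex.abs_re_le_norm (gf ((Δ b : X) - (Δ w : X)))
      have h2 := abs_le.1 (this.trans h1)
      exact h2.2
    rw [heq]
    simp only [Complex.sub_re, Complex.one_re]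
    linarith
  have h1 : 0 ≤ (gf (Δ u : X)).re := hre c hc u hu
  have hnormneg : ‖-usum F c‖ = 1 := by rw [norm_neg]; exact norm_usum F c hFne hc
  set uneg : sphere (0 : C₀(Γ,ℂ)) 1 := sph (-usum F c) hnormneg with hunegdef
  have hanti : (Δ uneg : X) = -(Δ u : X) :=
    usum_antipodal Δ hΔiso hΔsurj F hFne c hc u uneg hu rfl
  have h2 : 0 ≤ (gf (Δ uneg : X)).re := by
    apply hre (fun γ => -(c γ)) (by intro γ hγ; rw [norm_neg]; exact hc γ hγ) uneg
    show -usum F c = _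
    exact usum_neg F c
  have h2' : (gf (Δ u : X)).re ≤ 0 := by
    rw [hanti, map_neg] at h2
    simp only [Complex.neg_re] at h2
    linarith
  have hre0 : (gf (Δ u : X)).re = 0 := le_antisymm h2' h1
  apply sc_zero_of hre0
  have heq : gf (Δ u : X) + 1 = gf ((Δ u : X) + (Δ b : X)) := by rw [map_add, hgb]
  rw [heq]
  apply gf_val_le hg
  rw [add_comm ((Δ u : X)) ((Δ b : X)), rel_add Δ hΔiso hΔsurj b F hFne c hc u hu]
  rw [hu, hb, add_comm]
  exact norm_usum_add_basis_le F c hc m hmF ν hν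

end Main5
section Main6

open TingleyC0

variable {Γ : Type*} [TopologicalSpace Γ] [DiscreteTopology Γ] [DecidableEq Γ]
  {X : Type*} [NormedAddCommGroup X] [NormedSpace ℂ X]
  (Δ : sphere (0 : C₀(Γ, ℂ)) 1 → sphere (0 : X) 1)
  (hΔiso : Isometry Δ) (hΔsurj : Function.Surjective Δ)

set_option linter.unusedSectionVars false

lemma usum_singleton (γ : Γ) (c : Γ → ℂ) : usum {γ} c = c γ • stdBasis γ := by
  rw [usum, Finset.sum_singleton]

lemma usum_congr_coeff (F : Finset Γ) (c c' : Γ → ℂ) (h : ∀ γ ∈ F, c γ = c' γ) :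
    usum F c = usum F c' := by
  apply DFunLike.ext
  intro γ
  rw [usum_apply, usum_apply]
  by_cases hγ : γ ∈ F
  · rw [if_pos hγ, if_pos hγ, h γ hγ]
  · rw [if_neg hγ, if_neg hγ]

include hΔiso hΔsurj in
lemma pin_coord (F G : Finset Γ) (hGne : G.Nonempty) (hdisjFG : ∀ γ ∈ F, γ ∉ G)
    (c : Γ → ℂ) (hcF : ∀ γ ∈ F, ‖c γ‖ = 1) (hcG : ∀ γ ∈ G, ‖c γ‖ = 1)
    (a b w : sphere (0 : C₀(Γ,ℂ)) 1)
    (ha : (a : C₀(Γ,ℂ)) = usum F c) (hb : (b : C₀(Γ,ℂ)) = usum G c)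
    (hwv : (Δ w : X) = (Δ a : X) + (Δ b : X)) (γ : Γ) (hγ : γ ∈ F) :
    (w : C₀(Γ,ℂ)) γ = c γ := by
  have hcγ : ‖c γ‖ = 1 := hcF γ hγ
  set p := bvec γ (c γ) hcγ with hpdef
  have hpu : (p : C₀(Γ,ℂ)) = usum {γ} c := by rw [usum_singleton]; rfl
  have hFne : F.Nonempty := ⟨γ, hγ⟩
  -- ‖Δa + Δp‖ = 2
  have h2 : ‖(Δ a : X) + (Δ p : X)‖ = 2 := by
    rw [rel_add Δ hΔiso hΔsurj a {γ} ⟨γ, Finset.mem_singleton_self γ⟩ c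
      (by intro x hx; rw [Finset.mem_singleton] at hx; rw [hx]; exact hcγ) p hpu]
    refine le_antisymm ?_ ?_
    · calc ‖(a : C₀(Γ,ℂ)) + (p : C₀(Γ,ℂ))‖ ≤ ‖(a : C₀(Γ,ℂ))‖ + ‖(p : C₀(Γ,ℂ))‖ :=
        norm_add_le _ _
        _ = 2 := by rw [sphere_norm, sphere_norm]; norm_num
    · have := apply_le_norm ((a : C₀(Γ,ℂ)) + (p : C₀(Γ,ℂ))) γ
      rw [add_apply', ha, usum_apply_mem hγ] at this
      have hpγ : (p : C₀(Γ,ℂ)) γ = c γ := by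
        show (c γ • stdBasis γ) γ = c γ
        rw [smul_basis_apply, if_pos rfl]
      rw [hpγ] at this
      have hn2 : ‖c γ + c γ‖ = 2 := by
        have he : c γ + c γ = (2:ℂ) * c γ := by ring
        rw [he, norm_mul, hcγ]; norm_num
      rw [hn2] at this
      rwa [← ha] at this
  obtain ⟨gf, hgf1, hgfa, hgfp⟩ := exists_pair_functional
    (le_of_eq (sphere_norm (Δ a))) (le_of_eq (sphere_norm (Δ p))) h2
  have hgfb : gf (Δ b : X) = 0 :=
    vanish Δ hΔiso hΔsurj γ (c γ) hcγ p rfl gf hgf1 hgfp G hGne (hdisjFG γ hγ) c hcG b hb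
  have hgfw : gf (Δ w : X) = 1 := by
    rw [hwv, map_add, hgfa, hgfb, add_zero]
  -- 2 ≤ ‖Δw + Δp‖ = ‖w + cγ e γ‖ ⇒ coordinate pinned
  have h3 : (2:ℝ) ≤ ‖(Δ w : X) + (Δ p : X)‖ := by
    have hval : gf ((Δ w : X) + (Δ p : X)) = 2 := by
      rw [map_add, hgfw, hgfp]; norm_num
    have := gf.le_opNorm ((Δ w : X) + (Δ p : X))
    rw [hval] at this
    have h2n : ‖(2:ℂ)‖ = 2 := by norm_num
    rw [h2n] at this
    nlinarith [norm_nonneg ((Δ w : X) + (Δ p : X)), norm_nonneg gf]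
  have h4 : (2:ℝ) ≤ ‖(w : C₀(Γ,ℂ)) - (-(c γ)) • stdBasis γ‖ := by
    have := rel_add Δ hΔiso hΔsurj w {γ} ⟨γ, Finset.mem_singleton_self γ⟩ c
      (by intro x hx; rw [Finset.mem_singleton] at hx; rw [hx]; exact hcγ) p hpu
    rw [this] at h3
    have heq : (w : C₀(Γ,ℂ)) + (p : C₀(Γ,ℂ)) = (w : C₀(Γ,ℂ)) - (-(c γ)) • stdBasis γ := by
      show (w : C₀(Γ,ℂ)) + (c γ • stdBasis γ) = _
      rw [show ((-(c γ)) • stdBasis γ : C₀(Γ,ℂ)) = -(c γ • stdBasis γ) from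
        neg_smul (c γ) (stdBasis γ), sub_neg_eq_add]
    rwa [heq] at h3
  have := coord_pin w γ (-(c γ)) (by rw [norm_neg]; exact le_of_eq hcγ) h4
  rwa [neg_neg] at this

include hΔiso hΔsurj in
/-- Additivity step: `Δ(a + b) = Δa + Δb` for disjointly supported unimodular vectors. -/
lemma add_step (F G : Finset Γ) (hFne : F.Nonempty) (hGne : G.Nonempty)
    (hdisj : ∀ γ ∈ F, γ ∉ G)
    (c : Γ → ℂ) (hcF : ∀ γ ∈ F, ‖c γ‖ = 1) (hcG : ∀ γ ∈ G, ‖c γ‖ = 1)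
    (a b s : sphere (0 : C₀(Γ,ℂ)) 1)
    (ha : (a : C₀(Γ,ℂ)) = usum F c) (hb : (b : C₀(Γ,ℂ)) = usum G c)
    (hs : (s : C₀(Γ,ℂ)) = usum (F ∪ G) c) :
    (Δ s : X) = (Δ a : X) + (Δ b : X) := by
  classical
  have hcFG : ∀ γ ∈ F ∪ G, ‖c γ‖ = 1 := by
    intro γ hγ
    rcases Finset.mem_union.1 hγ with h | h
    · exact hcF γ h
    · exact hcG γ h
  have hw : ‖(Δ a : X) + (Δ b : X)‖ = 1 := by
    rw [rel_add Δ hΔiso hΔsurj a G hGne c hcG b hb, ha, hb]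
    have husum : usum F c + usum G c = usum (F ∪ G) c := by
      apply DFunLike.ext
      intro γ
      rw [add_apply', usum_apply, usum_apply, usum_apply]
      by_cases h1 : γ ∈ F
      · rw [if_pos h1, if_neg (hdisj γ h1), if_pos (Finset.mem_union_left G h1), add_zero]
      · by_cases h2 : γ ∈ G
        · rw [if_neg h1, if_pos h2, if_pos (Finset.mem_union_right F h2), zero_add]
        · rw [if_neg h1, if_neg h2, if_neg (by
            intro hc'; rcases Finset.mem_union.1 hc' with h | h
            · exact h1 h
            · exact h2 h), add_zero]
    rw [husum]
    exact norm_usum (F ∪ G) c ⟨hFne.choose, Finset.mem_union_left G hFne.choose_spec⟩ hcFG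
  obtain ⟨w, hwpre⟩ := hΔsurj ⟨(Δ a : X) + (Δ b : X), by rwa [mem_sphere_zero_iff_norm]⟩
  have hwv : (Δ w : X) = (Δ a : X) + (Δ b : X) := congrArg Subtype.val hwpre
  -- pin coordinates
  have hpinF : ∀ γ ∈ F, (w : C₀(Γ,ℂ)) γ = c γ :=
    fun γ hγ => pin_coord Δ hΔiso hΔsurj F G hGne hdisj c hcF hcG a b w ha hb hwv γ hγ
  have hpinG : ∀ γ ∈ G, (w : C₀(Γ,ℂ)) γ = c γ := by
    intro γ hγ
    have hdisj' : ∀ x ∈ G, x ∉ F := fun x hx hxF => hdisj x hxF hx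
    have hwv' : (Δ w : X) = (Δ b : X) + (Δ a : X) := by rw [hwv, add_comm]
    exact pin_coord Δ hΔiso hΔsurj G F hFne hdisj' c hcG hcF b a w hb ha hwv' γ hγ
  -- tail kill
  have hzero : ∀ γ, γ ∉ F ∪ G → (w : C₀(Γ,ℂ)) γ = 0 := by
    intro γ hγFG
    by_contra hne
    have hγF : γ ∉ F := fun h => hγFG (Finset.mem_union_left G h)
    have hγG : γ ∉ G := fun h => hγFG (Finset.mem_union_right F h)
    set ρ : ℝ := ‖(w : C₀(Γ,ℂ)) γ‖ with hρdef
    have hρ : 0 < ρ := norm_pos_iff.2 hne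
    set ν : ℂ := (ρ:ℂ)⁻¹ * (w : C₀(Γ,ℂ)) γ with hνdef
    have hν : ‖ν‖ = 1 := by
      rw [hνdef, norm_mul, norm_inv, Complex.norm_real, Real.norm_eq_abs, abs_of_pos hρ, ← hρdef]
      exact inv_mul_cancel₀ (ne_of_gt hρ)
    set c' : Γ → ℂ := Function.update c γ (-ν) with hc'def
    have hc'G : ∀ x ∈ insert γ G, ‖c' x‖ = 1 := by
      intro x hx
      rcases Finset.mem_insert.1 hx with h | h
      · rw [h, hc'def, Function.update_self, norm_neg, hν]
      · have hxγ : x ≠ γ := fun hxe => hγG (hxe ▸ h)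
        rw [hc'def, Function.update_of_ne hxγ]
        exact hcG x h
    have hc'F : ∀ x ∈ F, ‖c' x‖ = 1 := by
      intro x hx
      have hxγ : x ≠ γ := fun hxe => hγF (hxe ▸ hx)
      rw [hc'def, Function.update_of_ne hxγ]
      exact hcF x hx
    have ha' : (a : C₀(Γ,ℂ)) = usum F c' := by
      rw [ha]
      apply usum_congr_coeff
      intro x hx
      have hxγ : x ≠ γ := fun hxe => hγF (hxe ▸ hx)
      rw [hc'def, Function.update_of_ne hxγ]
    have hbt : ‖usum (insert γ G) c'‖ = 1 :=
      norm_usum _ _ ⟨γ, Finset.mem_insert_self γ G⟩ hc'G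
    set bt : sphere (0 : C₀(Γ,ℂ)) 1 := sph (usum (insert γ G) c') hbt with hbtdef
    have hdisj2 : ∀ x ∈ F, x ∉ insert γ G := by
      intro x hx hmem
      rcases Finset.mem_insert.1 hmem with h | h
      · exact hγF (h ▸ hx)
      · exact hdisj x hx h
    have hw2 : ‖(Δ a : X) + (Δ bt : X)‖ = 1 := by
      rw [rel_add Δ hΔiso hΔsurj a (insert γ G) ⟨γ, Finset.mem_insert_self γ G⟩ c' hc'G bt rfl,
        ha']
      show ‖usum F c' + usum (insert γ G) c'‖ = 1
      have husum : usum F c' + usum (insert γ G) c' = usum (F ∪ insert γ G) c' := by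
        apply DFunLike.ext
        intro x
        rw [add_apply', usum_apply, usum_apply, usum_apply]
        by_cases h1 : x ∈ F
        · rw [if_pos h1, if_neg (hdisj2 x h1), if_pos (Finset.mem_union_left _ h1), add_zero]
        · by_cases h2 : x ∈ insert γ G
          · rw [if_neg h1, if_pos h2, if_pos (Finset.mem_union_right _ h2), zero_add]
          · rw [if_neg h1, if_neg h2, if_neg (by
              intro hc''; rcases Finset.mem_union.1 hc'' with h | h
              · exact h1 h
              · exact h2 h), add_zero]
      rw [husum]
      apply norm_usum
      · exact ⟨γ, Finset.mem_union_right _ (Finset.mem_insert_self γ G)⟩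
      · intro x hx
        rcases Finset.mem_union.1 hx with h | h
        · exact hc'F x h
        · exact hc'G x h
    obtain ⟨w2, hw2pre⟩ := hΔsurj ⟨(Δ a : X) + (Δ bt : X), by rwa [mem_sphere_zero_iff_norm]⟩
    have hw2v : (Δ w2 : X) = (Δ a : X) + (Δ bt : X) := congrArg Subtype.val hw2pre
    have hpin2 : (w2 : C₀(Γ,ℂ)) γ = -ν := by
      have hdisj3 : ∀ x ∈ insert γ G, x ∉ F := by
        intro x hx hxF
        exact hdisj2 x hxF hx
      have hw2v' : (Δ w2 : X) = (Δ bt : X) + (Δ a : X) := by rw [hw2v, add_comm]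
      have := pin_coord Δ hΔiso hΔsurj (insert γ G) F hFne hdisj3 c' hc'G hc'F bt a w2
        rfl ha' hw2v' γ (Finset.mem_insert_self γ G)
      rw [this, hc'def, Function.update_self]
    -- ‖w - w2‖ = ‖Δb - Δbt‖ = ‖b - bt‖ = 1 but coordinate gives 1 + ρ
    have hdist : ‖(w : C₀(Γ,ℂ)) - (w2 : C₀(Γ,ℂ))‖ = 1 := by
      rw [← iso_norm Δ hΔiso w w2, hwv, hw2v]
      have he : (Δ a : X) + (Δ b : X) - ((Δ a : X) + (Δ bt : X)) = (Δ b : X) - (Δ bt : X) := by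
        abel
      rw [he, iso_norm Δ hΔiso b bt, hb]
      show ‖usum G c - usum (insert γ G) c'‖ = 1
      refine le_antisymm ((norm_le_iff _ zero_le_one).2 ?_) ?_
      · intro x
        rw [c0_sub_apply, usum_apply, usum_apply]
        by_cases h1 : x ∈ G
        · have hxγ : x ≠ γ := fun hxe => hγG (hxe ▸ h1)
          rw [if_pos h1, if_pos (Finset.mem_insert_of_mem h1), hc'def,
            Function.update_of_ne hxγ, sub_self]
          norm_num
        · by_cases h2 : x = γ
          · rw [if_neg h1, if_pos (by rw [h2]; exact Finset.mem_insert_self γ G), zero_sub,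
              norm_neg, h2, hc'def, Function.update_self, norm_neg, hν]
          · rw [if_neg h1, if_neg (by
              intro hc''; rcases Finset.mem_insert.1 hc'' with h | h
              · exact h2 h
              · exact h1 h), sub_self]
            norm_num
      · have := apply_le_norm (usum G c - usum (insert γ G) c') γ
        rw [c0_sub_apply, usum_apply_not_mem hγG,
          usum_apply_mem (Finset.mem_insert_self γ G), zero_sub, norm_neg, hc'def,
          Function.update_self, norm_neg, hν] at this
        exact this
    have hcoord := apply_le_norm ((w : C₀(Γ,ℂ)) - (w2 : C₀(Γ,ℂ))) γ
    rw [c0_sub_apply, hpin2, sub_neg_eq_add, hdist] at hcoord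
    have hbig : ‖(w : C₀(Γ,ℂ)) γ + ν‖ = 1 + ρ := by
      have he : (w : C₀(Γ,ℂ)) γ + ν = ((1 : ℂ) + (ρ:ℂ)⁻¹) * (w : C₀(Γ,ℂ)) γ := by
        rw [hνdef]; ring
      rw [he, norm_mul, ← hρdef]
      have h1 : ((1:ℂ) + (ρ:ℂ)⁻¹) = (((1 + ρ⁻¹) : ℝ) : ℂ) := by push_cast; ring
      rw [h1, Complex.norm_real, Real.norm_eq_abs, abs_of_pos (by positivity)]
      rw [add_mul, one_mul, inv_mul_cancel₀ (ne_of_gt hρ)]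
      ring
    rw [hbig] at hcoord
    linarith
  -- conclude
  have hwfinal : (w : C₀(Γ,ℂ)) = usum (F ∪ G) c := by
    apply DFunLike.ext
    intro γ
    rw [usum_apply]
    by_cases h1 : γ ∈ F ∪ G
    · rw [if_pos h1]
      rcases Finset.mem_union.1 h1 with h | h
      · exact hpinF γ h
      · exact hpinG γ h
    · rw [if_neg h1]
      exact hzero γ h1
  have : s = w := Subtype.ext (by rw [hs, hwfinal])
  rw [this, hwv]

end Main6
section Main7

open TingleyC0

variable {Γ : Type*} [TopologicalSpace Γ] [DiscreteTopology Γ] [DecidableEq Γ]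
  {X : Type*} [NormedAddCommGroup X] [NormedSpace ℂ X]
  (Δ : sphere (0 : C₀(Γ, ℂ)) 1 → sphere (0 : X) 1)
  (hΔiso : Isometry Δ) (hΔsurj : Function.Surjective Δ)

set_option linter.unusedSectionVars false

include hΔiso hΔsurj in
/-- Full additivity on unimodular finitely supported vectors. -/
lemma sum_additive (F : Finset Γ) (hFne : F.Nonempty) (c : Γ → ℂ)
    (hc : ∀ γ ∈ F, ‖c γ‖ = 1)
    (xs : Γ → sphere (0 : C₀(Γ,ℂ)) 1)
    (hxs : ∀ γ ∈ F, (xs γ : C₀(Γ,ℂ)) = c γ • stdBasis γ)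
    (s : sphere (0 : C₀(Γ,ℂ)) 1) (hs : (s : C₀(Γ,ℂ)) = usum F c) :
    (Δ s : X) = ∑ γ ∈ F, (Δ (xs γ) : X) := by
  classical
  induction F using Finset.induction generalizing s with
  | empty => exact absurd hFne (by simp)
  | @insert γ F hγF ih =>
    by_cases hF : F = ∅
    · subst hF
      have hsval : (s : C₀(Γ,ℂ)) = (xs γ : C₀(Γ,ℂ)) := by
        rw [hs, hxs γ (Finset.mem_insert_self γ ∅), ← usum_singleton]
        rfl
      have : s = xs γ := Subtype.ext hsval
      rw [this]
      simp
    · have hFne' : F.Nonempty := Finset.nonempty_iff_ne_empty.2 hF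
      have hcF : ∀ x ∈ F, ‖c x‖ = 1 := fun x hx => hc x (Finset.mem_insert_of_mem hx)
      have hcγ : ‖c γ‖ = 1 := hc γ (Finset.mem_insert_self γ F)
      have hnorm : ‖usum F c‖ = 1 := norm_usum F c hFne' hcF
      set a : sphere (0 : C₀(Γ,ℂ)) 1 := sph (usum F c) hnorm with hadef
      have hIH : (Δ a : X) = ∑ x ∈ F, (Δ (xs x) : X) :=
        ih hFne' hcF (fun x hx => hxs x (Finset.mem_insert_of_mem hx)) a rfl
      have hdisj : ∀ x ∈ ({γ} : Finset Γ), x ∉ F := by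
        intro x hx
        rw [Finset.mem_singleton] at hx
        rw [hx]; exact hγF
      have hc1 : ∀ x ∈ ({γ} : Finset Γ), ‖c x‖ = 1 := by
        intro x hx; rw [Finset.mem_singleton] at hx; rw [hx]; exact hcγ
      have hxγ : ((xs γ) : C₀(Γ,ℂ)) = usum {γ} c := by
        rw [usum_singleton]; exact hxs γ (Finset.mem_insert_self γ F)
      have hsu : (s : C₀(Γ,ℂ)) = usum ({γ} ∪ F) c := by
        rw [hs, ← Finset.insert_eq]
      have hstep := add_step Δ hΔiso hΔsurj {γ} F ⟨γ, Finset.mem_singleton_self γ⟩ hFne'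
        hdisj c hc1 hcF (xs γ) a s hxγ rfl hsu
      rw [hstep, hIH, Finset.sum_insert hγF]

end Main7
section Main8

open TingleyC0

variable {Γ : Type*} [TopologicalSpace Γ] [DiscreteTopology Γ] [DecidableEq Γ]
  {X : Type*} [NormedAddCommGroup X] [NormedSpace ℂ X]
  (Δ : sphere (0 : C₀(Γ, ℂ)) 1 → sphere (0 : X) 1)
  (hΔiso : Isometry Δ) (hΔsurj : Function.Surjective Δ)

set_option linter.unusedSectionVars false
set_option maxHeartbeats 1000000

include hΔiso hΔsurj in
lemma sp_step (n : Γ) (ζ₀ : ℂ) (hζ₀ : ‖ζ₀‖ = 1) (ε : ℂ) (hε : ‖ε‖ = 1)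
    (hε1 : ‖ε - 1‖ ≤ 1/2) :
    ∃ ζ : ℂ, ∃ hζ : ‖ζ‖ = 1, (Δ (bvec n ζ hζ) : X) = ε • (Δ (bvec n ζ₀ hζ₀) : X) := by
  classical
  set v₀ : X := (Δ (bvec n ζ₀ hζ₀) : X) with hv₀
  have hv₀n : ‖v₀‖ = 1 := sphere_norm _
  have hxnorm : ‖ε • v₀‖ = 1 := by rw [norm_smul, hε, hv₀n]; norm_num
  obtain ⟨z, hzpre⟩ := hΔsurj ⟨ε • v₀, by rwa [mem_sphere_zero_iff_norm]⟩
  have hz : (Δ z : X) = ε • v₀ := congrArg Subtype.val hzpre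
  -- tail bound 1/2
  have htail : ∀ m, m ≠ n → ‖(z : C₀(Γ,ℂ)) m‖ ≤ 1/2 := by
    intro m hmn
    have key : ∀ lam : ℂ, ‖lam‖ = 1 → ‖(z : C₀(Γ,ℂ)) m + lam‖ ≤ 1 + 1/2 := by
      intro lam hlam
      have hnl : ‖-lam‖ = 1 := by rwa [norm_neg]
      have hd : ‖(z : C₀(Γ,ℂ)) - (-lam) • stdBasis m‖ ≤ 1 + 1/2 := by
        have e1 : ‖(z : C₀(Γ,ℂ)) - ((bvec m (-lam) hnl) : C₀(Γ,ℂ))‖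
            = ‖(Δ z : X) - (Δ (bvec m (-lam) hnl) : X)‖ := (iso_norm Δ hΔiso _ _).symm
        have e2 : ‖(Δ z : X) - (Δ (bvec m (-lam) hnl) : X)‖
            ≤ ‖ε - 1‖ + ‖v₀ - (Δ (bvec m (-lam) hnl) : X)‖ := by
          rw [hz]
          have he : ε • v₀ - (Δ (bvec m (-lam) hnl) : X)
              = (ε - 1) • v₀ + (v₀ - (Δ (bvec m (-lam) hnl) : X)) := by
            rw [sub_smul, one_smul]; abel
          rw [he]
          calc ‖(ε - 1) • v₀ + (v₀ - (Δ (bvec m (-lam) hnl) : X))‖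
              ≤ ‖(ε - 1) • v₀‖ + ‖v₀ - (Δ (bvec m (-lam) hnl) : X)‖ := norm_add_le _ _
            _ = ‖ε - 1‖ + ‖v₀ - (Δ (bvec m (-lam) hnl) : X)‖ := by
                rw [norm_smul, hv₀n, mul_one]
        have e3 : ‖v₀ - (Δ (bvec m (-lam) hnl) : X)‖ = 1 := by
          rw [hv₀, iso_norm Δ hΔiso]
          show ‖ζ₀ • stdBasis n - (-lam) • stdBasis m‖ = 1
          refine le_antisymm ((norm_le_iff _ zero_le_one).2 ?_) ?_
          · intro γ
            rw [c0_sub_apply, smul_basis_apply, smul_basis_apply]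
            by_cases h1 : γ = n
            · rw [if_pos h1, if_neg (show ¬ γ = m by rw [h1]; exact Ne.symm hmn)]
              simp [hζ₀]
            · rw [if_neg h1]
              by_cases h2 : γ = m
              · rw [if_pos h2]; simp [hlam]
              · rw [if_neg h2]; simp
          · have := apply_le_norm (ζ₀ • stdBasis n - (-lam) • stdBasis m) n
            rw [c0_sub_apply, smul_basis_apply, if_pos rfl, smul_basis_apply,
              if_neg (Ne.symm hmn), sub_zero, hζ₀] at this
            exact this
        calc ‖(z : C₀(Γ,ℂ)) - (-lam) • stdBasis m‖
            = ‖(z : C₀(Γ,ℂ)) - ((bvec m (-lam) hnl) : C₀(Γ,ℂ))‖ := rfl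
          _ = ‖(Δ z : X) - (Δ (bvec m (-lam) hnl) : X)‖ := e1
          _ ≤ ‖ε - 1‖ + ‖v₀ - (Δ (bvec m (-lam) hnl) : X)‖ := e2
          _ = ‖ε - 1‖ + 1 := by rw [e3]
          _ ≤ 1/2 + 1 := by linarith
          _ = 1 + 1/2 := by ring
      have hcoord := apply_le_norm ((z : C₀(Γ,ℂ)) - (-lam) • stdBasis m) m
      rw [c0_sub_apply, smul_basis_apply, if_pos rfl] at hcoord
      have he : (z : C₀(Γ,ℂ)) m - (-lam) = (z : C₀(Γ,ℂ)) m + lam := by ring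
      rw [he] at hcoord
      exact hcoord.trans hd
    have := sc_small_of key
    linarith
  -- the n-th coordinate is unimodular
  have hζabs : ‖(z : C₀(Γ,ℂ)) n‖ = 1 := by
    have hb : ∀ γ, ‖(z : C₀(Γ,ℂ)) γ‖ ≤ 1 :=
      fun γ => coord_le_of_norm_le (le_of_eq (sphere_norm z)) γ
    have hhyp : ∀ e : ℝ, 0 < e → e ≤ 1/4 → ∃ γ, γ ∉ (∅ : Finset Γ) ∧ 1 - e < ‖(z : C₀(Γ,ℂ)) γ‖ := by
      intro e he he4
      have hC : (0:ℝ) ≤ 1 - e := by linarith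
      have hlt : 1 - e < ‖(z : C₀(Γ,ℂ))‖ := by
        rw [sphere_norm z]; linarith
      obtain ⟨γ, hγ⟩ := exists_gt_of_lt_norm _ hC hlt
      exact ⟨γ, by simp, hγ⟩
    obtain ⟨γ₁, _, hγ₁⟩ := exists_eq_one_off (z : C₀(Γ,ℂ)) ∅ (by norm_num : (0:ℝ) < 1/4) hb hhyp
    by_cases h : γ₁ = n
    · rwa [h] at hγ₁
    · have := htail γ₁ h
      rw [hγ₁] at this
      norm_num at this
  set ζ : ℂ := (z : C₀(Γ,ℂ)) n with hζdef
  -- tail kill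
  have hzero : ∀ m, m ≠ n → (z : C₀(Γ,ℂ)) m = 0 := by
    intro m hmn
    by_contra hne
    set ρ : ℝ := ‖(z : C₀(Γ,ℂ)) m‖ with hρdef
    have hρ : 0 < ρ := norm_pos_iff.2 hne
    have hρhalf : ρ ≤ 1/2 := htail m hmn
    set ν : ℂ := (ρ:ℂ)⁻¹ * (z : C₀(Γ,ℂ)) m with hνdef
    have hν : ‖ν‖ = 1 := by
      rw [hνdef, norm_mul, norm_inv, Complex.norm_real, Real.norm_eq_abs, abs_of_pos hρ, ← hρdef]
      exact inv_mul_cancel₀ (ne_of_gt hρ)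
    have hνneg : ‖-ν‖ = 1 := by rwa [norm_neg]
    set cc : Γ → ℂ := fun γ => if γ = n then ζ else -ν with hccdef
    have hccn : cc n = ζ := by rw [hccdef]; simp
    have hccm : cc m = -ν := by rw [hccdef]; simp [hmn]
    have hccF : ∀ x ∈ ({n} : Finset Γ), ‖cc x‖ = 1 := by
      intro x hx; rw [Finset.mem_singleton] at hx; rw [hx, hccn]; exact hζabs
    have hccG : ∀ x ∈ ({m} : Finset Γ), ‖cc x‖ = 1 := by
      intro x hx; rw [Finset.mem_singleton] at hx; rw [hx, hccm]; exact hνneg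
    have hccU : ∀ x ∈ ({n} ∪ {m} : Finset Γ), ‖cc x‖ = 1 := by
      intro x hx
      rcases Finset.mem_union.1 hx with h | h
      · exact hccF x h
      · exact hccG x h
    have hUnorm : ‖usum ({n} ∪ {m}) cc‖ = 1 :=
      norm_usum _ _ ⟨n, Finset.mem_union_left _ (Finset.mem_singleton_self n)⟩ hccU
    set xU : sphere (0 : C₀(Γ,ℂ)) 1 := sph (usum ({n} ∪ {m}) cc) hUnorm with hxUdef
    have hb1 : ((bvec n ζ hζabs) : C₀(Γ,ℂ)) = usum {n} cc := by
      rw [usum_singleton, hccn]; rfl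
    have hb2 : ((bvec m (-ν) hνneg) : C₀(Γ,ℂ)) = usum {m} cc := by
      rw [usum_singleton, hccm]; rfl
    have hdisj : ∀ x ∈ ({n} : Finset Γ), x ∉ ({m} : Finset Γ) := by
      intro x hx
      rw [Finset.mem_singleton] at hx
      rw [hx, Finset.mem_singleton]
      exact Ne.symm hmn
    have hxUadd : (Δ xU : X) = (Δ (bvec n ζ hζabs) : X) + (Δ (bvec m (-ν) hνneg) : X) :=
      add_step Δ hΔiso hΔsurj {n} {m} ⟨n, Finset.mem_singleton_self n⟩
        ⟨m, Finset.mem_singleton_self m⟩ hdisj cc hccF hccG _ _ xU hb1 hb2 rfl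
    -- ‖Δz + ΔxU‖ = 2
    have h2 : ‖(Δ z : X) + (Δ xU : X)‖ = 2 := by
      rw [rel_add Δ hΔiso hΔsurj z ({n} ∪ {m}) ⟨n, Finset.mem_union_left _
        (Finset.mem_singleton_self n)⟩ cc hccU xU rfl]
      refine le_antisymm ?_ ?_
      · calc ‖(z : C₀(Γ,ℂ)) + (xU : C₀(Γ,ℂ))‖ ≤ ‖(z : C₀(Γ,ℂ))‖ + ‖(xU : C₀(Γ,ℂ))‖ :=
          norm_add_le _ _
          _ = 2 := by rw [sphere_norm, sphere_norm]; norm_num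
      · have := apply_le_norm ((z : C₀(Γ,ℂ)) + (xU : C₀(Γ,ℂ))) n
        have hxUn : (xU : C₀(Γ,ℂ)) n = ζ := by
          show usum ({n} ∪ {m}) cc n = ζ
          rw [usum_apply_mem (Finset.mem_union_left _ (Finset.mem_singleton_self n)), hccn]
        rw [add_apply', hxUn, ← hζdef] at this
        have hn2 : ‖ζ + ζ‖ = 2 := by
          have he : ζ + ζ = (2:ℂ) * ζ := by ring
          rw [he, norm_mul, hζabs]; norm_num
        rw [hn2] at this
        exact this
    -- midpoint
    set xm : X := (2⁻¹ : ℂ) • ((Δ z : X) + (Δ xU : X)) with hxmdef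
    have hxmnorm : ‖xm‖ = 1 := by
      rw [hxmdef, norm_smul, h2]
      norm_num
    obtain ⟨p, hppre⟩ := hΔsurj ⟨xm, by rwa [mem_sphere_zero_iff_norm]⟩
    have hp : (Δ p : X) = xm := congrArg Subtype.val hppre
    -- ‖p - z‖ = (1+ρ)/2
    have hpz : ‖(p : C₀(Γ,ℂ)) - (z : C₀(Γ,ℂ))‖ = (1+ρ)/2 := by
      rw [← iso_norm Δ hΔiso p z, hp, hxmdef]
      have he : (2⁻¹ : ℂ) • ((Δ z : X) + (Δ xU : X)) - (Δ z : X)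
          = (2⁻¹ : ℂ) • ((Δ xU : X) - (Δ z : X)) := by
        module
      rw [he, norm_smul]
      have h1 : ‖((2:ℂ))⁻¹‖ = 2⁻¹ := by norm_num
      rw [h1, iso_norm Δ hΔiso xU z]
      have hval : ‖(xU : C₀(Γ,ℂ)) - (z : C₀(Γ,ℂ))‖ = 1 + ρ := by
        refine le_antisymm ((norm_le_iff _ (by linarith)).2 ?_) ?_
        · intro γ
          rw [c0_sub_apply]
          show ‖usum ({n} ∪ {m}) cc γ - (z : C₀(Γ,ℂ)) γ‖ ≤ 1 + ρ
          by_cases h1' : γ = n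
          · rw [h1', usum_apply_mem (Finset.mem_union_left _ (Finset.mem_singleton_self n)),
              hccn, ← hζdef, sub_self, norm_zero]
            linarith
          · by_cases h2' : γ = m
            · rw [h2', usum_apply_mem (Finset.mem_union_right _ (Finset.mem_singleton_self m)),
                hccm]
              have : -ν - (z : C₀(Γ,ℂ)) m = -(ν + (z : C₀(Γ,ℂ)) m) := by ring
              rw [this, norm_neg]
              calc ‖ν + (z : C₀(Γ,ℂ)) m‖ ≤ ‖ν‖ + ‖(z : C₀(Γ,ℂ)) m‖ := norm_add_le _ _
                _ = 1 + ρ := by rw [hν, hρdef]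
            · rw [usum_apply_not_mem (by
                intro hc'; rcases Finset.mem_union.1 hc' with h | h
                · exact h1' (Finset.mem_singleton.1 h)
                · exact h2' (Finset.mem_singleton.1 h)), zero_sub, norm_neg]
              have := coord_le_of_norm_le (le_of_eq (sphere_norm z)) γ
              linarith
        · have := apply_le_norm ((xU : C₀(Γ,ℂ)) - (z : C₀(Γ,ℂ))) m
          have hxUm : (xU : C₀(Γ,ℂ)) m = -ν := by
            show usum ({n} ∪ {m}) cc m = -ν
            rw [usum_apply_mem (Finset.mem_union_right _ (Finset.mem_singleton_self m)), hccm]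
          rw [c0_sub_apply, hxUm] at this
          have hzm : (z : C₀(Γ,ℂ)) m = (ρ:ℂ) * ν := by
            rw [hνdef, ← mul_assoc, mul_inv_cancel₀ (by
              simp only [ne_eq, Complex.ofReal_eq_zero]
              exact ne_of_gt hρ), one_mul]
          have hval2 : ‖-ν - (z : C₀(Γ,ℂ)) m‖ = 1 + ρ := by
            have he2 : -ν - (z : C₀(Γ,ℂ)) m = -((1 + (ρ:ℂ)) * ν) := by
              rw [hzm]; ring
            rw [he2, norm_neg, norm_mul, hν, mul_one]
            have : ((1:ℂ) + (ρ:ℂ)) = (((1+ρ):ℝ) : ℂ) := by push_cast; ring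
            rw [this, Complex.norm_real, Real.norm_eq_abs, abs_of_pos (by linarith)]
          rw [hval2] at this
          exact this
      rw [hval]
      ring
    -- ‖p - ν e_m‖ ≥ 3/2
    have hbm : ‖ν • stdBasis (Γ := Γ) m‖ = 1 := norm_bvec m ν hν
    have hpm : (3:ℝ)/2 ≤ ‖(p : C₀(Γ,ℂ)) - ((bvec m ν hν) : C₀(Γ,ℂ))‖ := by
      rw [← iso_norm Δ hΔiso p (bvec m ν hν), hp]
      -- functional at Δ(bvec m ν)
      have hdual : ∃ gf : X →L[ℂ] ℂ, ‖gf‖ ≤ 1 ∧ gf (Δ (bvec m ν hν) : X) = 1 := by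
        have h2' : ‖(Δ (bvec m ν hν) : X) + (Δ (bvec m ν hν) : X)‖ = 2 := by
          rw [← two_smul ℂ, norm_smul, sphere_norm]
          norm_num
        obtain ⟨gf, h1', h2'', _⟩ := exists_pair_functional (le_of_eq (sphere_norm _))
          (le_of_eq (sphere_norm _)) h2'
        exact ⟨gf, h1', h2''⟩
      obtain ⟨gf, hgf1, hgfb⟩ := hdual
      have hgfv₀ : gf v₀ = 0 := by
        rw [hv₀]
        apply vanish Δ hΔiso hΔsurj m ν hν (bvec m ν hν) rfl gf hgf1 hgfb {n}
          ⟨n, Finset.mem_singleton_self n⟩ (by rw [Finset.mem_singleton]; exact hmn)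
          (fun _ => ζ₀) (by intro x hx; exact hζ₀) (bvec n ζ₀ hζ₀)
        rw [usum_singleton]; rfl
      have hgfb1 : gf (Δ (bvec n ζ hζabs) : X) = 0 := by
        apply vanish Δ hΔiso hΔsurj m ν hν (bvec m ν hν) rfl gf hgf1 hgfb {n}
          ⟨n, Finset.mem_singleton_self n⟩ (by rw [Finset.mem_singleton]; exact hmn)
          (fun _ => ζ) (by intro x hx; exact hζabs) (bvec n ζ hζabs)
        rw [usum_singleton]; rfl
      have hgfb2 : gf (Δ (bvec m (-ν) hνneg) : X) = -1 := by
        have hanti : (Δ (bvec m (-ν) hνneg) : X) = -(Δ (bvec m ν hν) : X) := by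
          apply basis_antipodal Δ hΔiso hΔsurj m ν hν (bvec m (-ν) hνneg)
          show (-ν) • stdBasis m = -(ν • stdBasis m)
          exact neg_smul ν (stdBasis m)
        rw [hanti, map_neg, hgfb]
      have hgfz : gf (Δ z : X) = 0 := by
        rw [hz, map_smul, hgfv₀, smul_zero]
      have hgfxU : gf (Δ xU : X) = -1 := by
        rw [hxUadd, map_add, hgfb1, hgfb2, zero_add]
      have hgfxm : gf xm = -(1/2 : ℂ) := by
        rw [hxmdef, map_smul, map_add, hgfz, hgfxU, zero_add]
        norm_num
      have hval : gf (xm - (Δ (bvec m ν hν) : X)) = -(3/2 : ℂ) := by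
        rw [map_sub, hgfxm, hgfb]
        norm_num
      have := gf_val_le hgf1 (x := xm - (Δ (bvec m ν hν) : X))
      have hge := gf.le_opNorm (xm - (Δ (bvec m ν hν) : X))
      rw [hval] at hge
      have hn32 : ‖-(3/2 : ℂ)‖ = 3/2 := by norm_num
      rw [hn32] at hge
      nlinarith [norm_nonneg (xm - (Δ (bvec m ν hν) : X)), norm_nonneg gf]
    -- coordinate bound at m
    have hcmax : ‖(p : C₀(Γ,ℂ)) - ((bvec m ν hν) : C₀(Γ,ℂ))‖
        ≤ max ‖((p : C₀(Γ,ℂ)) - ((bvec m ν hν) : C₀(Γ,ℂ))) m‖ 1 := by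
      apply norm_le_max_of _ m zero_le_one
      intro γ hγ
      rw [c0_sub_apply]
      show ‖(p : C₀(Γ,ℂ)) γ - (ν • stdBasis m) γ‖ ≤ 1
      rw [smul_basis_apply, if_neg hγ, sub_zero]
      exact coord_le_of_norm_le (le_of_eq (sphere_norm p)) γ
    have hpmcoord : (3:ℝ)/2 ≤ ‖(p : C₀(Γ,ℂ)) m - ν‖ := by
      have h1 : ‖((p : C₀(Γ,ℂ)) - ((bvec m ν hν) : C₀(Γ,ℂ))) m‖ = ‖(p : C₀(Γ,ℂ)) m - ν‖ := by
        rw [c0_sub_apply]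
        show ‖(p : C₀(Γ,ℂ)) m - (ν • stdBasis m) m‖ = _
        rw [smul_basis_apply, if_pos rfl]
      rcases max_cases ‖((p : C₀(Γ,ℂ)) - ((bvec m ν hν) : C₀(Γ,ℂ))) m‖ 1 with ⟨he, _⟩ | ⟨he, _⟩
      · rw [← h1]
        rw [he] at hcmax
        linarith [hpm.trans hcmax]
      · have := hpm.trans hcmax
        rw [he] at this
        linarith
    -- contradiction
    have hfin1 : ‖(p : C₀(Γ,ℂ)) m - (z : C₀(Γ,ℂ)) m‖ ≤ (1+ρ)/2 := by
      have := apply_le_norm ((p : C₀(Γ,ℂ)) - (z : C₀(Γ,ℂ))) m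
      rw [c0_sub_apply, hpz] at this
      exact this
    have hfin2 : ‖(z : C₀(Γ,ℂ)) m - ν‖ = 1 - ρ := by
      have hzm : (z : C₀(Γ,ℂ)) m = (ρ:ℂ) * ν := by
        rw [hνdef, ← mul_assoc, mul_inv_cancel₀ (by
          simp only [ne_eq, Complex.ofReal_eq_zero]
          exact ne_of_gt hρ), one_mul]
      have he : (z : C₀(Γ,ℂ)) m - ν = -((1 - (ρ:ℂ)) * ν) := by
        rw [hzm]; ring
      rw [he, norm_neg, norm_mul, hν, mul_one]
      have : ((1:ℂ) - (ρ:ℂ)) = (((1-ρ):ℝ) : ℂ) := by push_cast; ring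
      rw [this, Complex.norm_real, Real.norm_eq_abs, abs_of_nonneg (by linarith)]
    have : ‖(p : C₀(Γ,ℂ)) m - ν‖ ≤ (1+ρ)/2 + (1 - ρ) := by
      calc ‖(p : C₀(Γ,ℂ)) m - ν‖
          = ‖((p : C₀(Γ,ℂ)) m - (z : C₀(Γ,ℂ)) m) + ((z : C₀(Γ,ℂ)) m - ν)‖ := by ring_nf
        _ ≤ ‖(p : C₀(Γ,ℂ)) m - (z : C₀(Γ,ℂ)) m‖ + ‖(z : C₀(Γ,ℂ)) m - ν‖ := norm_add_le _ _
        _ ≤ (1+ρ)/2 + (1 - ρ) := by rw [hfin2]; linarith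
    linarith
  -- conclude z = bvec n ζ
  have hzval : (z : C₀(Γ,ℂ)) = ζ • stdBasis n := by
    apply DFunLike.ext
    intro γ
    rw [smul_basis_apply]
    by_cases h : γ = n
    · rw [if_pos h, h, ← hζdef]
    · rw [if_neg h]
      exact hzero γ h
  refine ⟨ζ, hζabs, ?_⟩
  have : bvec n ζ hζabs = z := Subtype.ext (by rw [hzval]; rfl)
  rw [this, hz, hv₀]

end Main8
section Main9

open TingleyC0

variable {Γ : Type*} [TopologicalSpace Γ] [DiscreteTopology Γ] [DecidableEq Γ]
  {X : Type*} [NormedAddCommGroup X] [NormedSpace ℂ X]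
  (Δ : sphere (0 : C₀(Γ, ℂ)) 1 → sphere (0 : X) 1)
  (hΔiso : Isometry Δ) (hΔsurj : Function.Surjective Δ)

set_option linter.unusedSectionVars false
set_option maxHeartbeats 1000000

lemma norm_one_c : ‖(1:ℂ)‖ = 1 := by norm_num

include hΔiso hΔsurj in
lemma sp_full (n : Γ) (ε : ℂ) (hε : ‖ε‖ = 1) :
    ∃ ζ : ℂ, ∃ hζ : ‖ζ‖ = 1, (Δ (bvec n ζ hζ) : X) = ε • (Δ (bvec n 1 norm_one_c) : X) := by
  classical
  set θ : ℝ := Complex.arg ε with hθ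
  set r : ℂ := Complex.exp ((θ/16 : ℝ) * Complex.I) with hr
  have hrn : ‖r‖ = 1 := by
    rw [hr]
    exact Complex.norm_exp_ofReal_mul_I _
  have hrabs : ‖((θ/16 : ℝ) * Complex.I : ℂ)‖ = |θ|/16 := by
    rw [norm_mul, Complex.norm_I, mul_one, Complex.norm_real, Real.norm_eq_abs, abs_div]
    norm_num
  have hθpi : |θ| ≤ Real.pi := Complex.abs_arg_le_pi ε
  have hr1 : ‖r - 1‖ ≤ 1/2 := by
    have h1 : ‖((θ/16 : ℝ) * Complex.I : ℂ)‖ ≤ 1 := by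
      rw [hrabs]
      have := Real.pi_le_four
      nlinarith
    have h2 := Complex.norm_exp_sub_one_le h1
    rw [hr]
    rw [hrabs] at h2
    have := Real.pi_le_four
    calc ‖Complex.exp (((θ:ℝ)/16 : ℝ) * Complex.I) - 1‖ ≤ 2 * (|θ|/16) := h2
      _ ≤ 2 * (4/16) := by nlinarith
      _ = 1/2 := by norm_num
  have hiter : ∀ j : ℕ, ∃ ζ : ℂ, ∃ hζ : ‖ζ‖ = 1,
      (Δ (bvec n ζ hζ) : X) = (r ^ j) • (Δ (bvec n 1 norm_one_c) : X) := by
    intro j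
    induction j with
    | zero =>
      refine ⟨1, norm_one_c, ?_⟩
      rw [pow_zero, one_smul]
    | succ j ih =>
      obtain ⟨ζj, hζj, hj⟩ := ih
      obtain ⟨ζ, hζ, hstep⟩ := sp_step Δ hΔiso hΔsurj n ζj hζj r hrn hr1
      refine ⟨ζ, hζ, ?_⟩
      rw [hstep, hj, smul_smul, ← pow_succ']
  obtain ⟨ζ, hζ, hfin⟩ := hiter 16
  refine ⟨ζ, hζ, ?_⟩
  rw [hfin]
  congr 1
  rw [hr, ← Complex.exp_nat_mul]
  have he : ((16:ℕ) : ℂ) * (((θ/16 : ℝ) : ℂ) * Complex.I) = (θ : ℂ) * Complex.I := by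
    push_cast
    ring
  rw [he]
  have := Complex.norm_mul_exp_arg_mul_I ε
  rw [← hθ] at this
  have habs : ‖ε‖ = 1 := by exact hε
  rw [habs] at this
  simpa using this

include hΔiso hΔsurj in
lemma exists_biorth (n : Γ) :
    ∃ gf : X →L[ℂ] ℂ, ‖gf‖ ≤ 1 ∧ gf (Δ (bvec n 1 norm_one_c) : X) = 1 ∧
      ∀ (m : Γ), m ≠ n → ∀ (μ : ℂ) (hμ : ‖μ‖ = 1), gf (Δ (bvec m μ hμ) : X) = 0 := by
  have h2 : ‖(Δ (bvec n 1 norm_one_c) : X) + (Δ (bvec n 1 norm_one_c) : X)‖ = 2 := by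
    rw [← two_smul ℂ, norm_smul, sphere_norm]
    norm_num
  obtain ⟨gf, h1, hb, _⟩ := exists_pair_functional (le_of_eq (sphere_norm _))
    (le_of_eq (sphere_norm _)) h2
  refine ⟨gf, h1, hb, ?_⟩
  intro m hm μ hμ
  apply vanish Δ hΔiso hΔsurj n 1 norm_one_c (bvec n 1 norm_one_c) rfl gf h1 hb {m}
    ⟨m, Finset.mem_singleton_self m⟩ (by rw [Finset.mem_singleton]; exact Ne.symm hm)
    (fun _ => μ) (by intro x hx; exact hμ) (bvec m μ hμ)
  rw [usum_singleton]; rfl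

lemma sc_decomp {c : ℂ} (h : ‖c‖ ≤ 1) :
    ∃ γ γ' : ℂ, ‖γ‖ = 1 ∧ ‖γ'‖ = 1 ∧ c = (γ + γ')/2 := by
  by_cases hc : c = 0
  · exact ⟨1, -1, by norm_num, by norm_num, by rw [hc]; norm_num⟩
  · set ρ : ℝ := ‖c‖ with hρdef
    have hρ : 0 < ρ := norm_pos_iff.2 hc
    set u : ℂ := (ρ:ℂ)⁻¹ * c with hudef
    have hu : ‖u‖ = 1 := by
      rw [hudef, norm_mul, norm_inv, Complex.norm_real, Real.norm_eq_abs, abs_of_pos hρ, ← hρdef]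
      exact inv_mul_cancel₀ (ne_of_gt hρ)
    set t : ℝ := Real.sqrt (1 - ρ^2) with htdef
    have ht : t^2 = 1 - ρ^2 := Real.sq_sqrt (by nlinarith)
    set a : ℂ := (ρ:ℂ) + (t:ℝ) * Complex.I with hadef
    set a' : ℂ := (ρ:ℂ) - (t:ℝ) * Complex.I with ha'def
    have hnsq : ∀ b : ℂ, Complex.normSq b = 1 → ‖b‖ = 1 := by
      intro b hb
      have h2 := Complex.sq_norm b
      rw [hb] at h2
      nlinarith [norm_nonneg b]
    have han : ‖a‖ = 1 := by
      apply hnsq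
      rw [hadef, Complex.normSq_add_mul_I]
      nlinarith
    have han' : ‖a'‖ = 1 := by
      apply hnsq
      have he : a' = (ρ:ℂ) + ((-t : ℝ):ℂ) * Complex.I := by
        rw [ha'def]; push_cast; ring
      rw [he, Complex.normSq_add_mul_I]
      nlinarith
    refine ⟨a * u, a' * u, by rw [norm_mul, han, hu, one_mul],
      by rw [norm_mul, han', hu, one_mul], ?_⟩
    have hsum : a + a' = ((2*ρ : ℝ) : ℂ) := by
      rw [hadef, ha'def]
      push_cast
      ring
    have hcu : c = (ρ:ℂ) * u := by
      rw [hudef, ← mul_assoc, mul_inv_cancel₀ (by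
        simp only [ne_eq, Complex.ofReal_eq_zero]; exact ne_of_gt hρ), one_mul]
    rw [← add_mul, hsum, hcu]
    push_cast
    ring

include hΔiso hΔsurj in
lemma unimodular_sum (k : ℕ) (hk : 0 < k) (n : Fin k → Γ) (hn : Function.Injective n)
    (y : Fin k → sphere (0 : C₀(Γ,ℂ)) 1) (hy : ∀ j, (y j : C₀(Γ,ℂ)) = stdBasis (n j))
    (ε : Fin k → ℂ) (hε : ∀ j, ‖ε j‖ = 1) :
    ‖∑ j, ε j • (Δ (y j) : X)‖ = 1 := by
  classical
  have hyb : ∀ j, y j = bvec (n j) 1 norm_one_c := by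
    intro j
    apply Subtype.ext
    rw [hy j]
    show stdBasis (n j) = (1:ℂ) • stdBasis (n j)
    rw [one_smul]
  have hsp := fun j => sp_full Δ hΔiso hΔsurj (n j) (ε j) (hε j)
  choose ζ hζ heq using hsp
  have hsum1 : ∑ j, ε j • (Δ (y j) : X) = ∑ j, (Δ (bvec (n j) (ζ j) (hζ j)) : X) := by
    apply Finset.sum_congr rfl
    intro j _
    rw [hyb j, ← heq j]
  rw [hsum1]
  -- package into usum
  set c : Γ → ℂ := fun γ => if h : ∃ j, n j = γ then ζ h.choose else 1 with hcdef
  have hcnj : ∀ j, c (n j) = ζ j := by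
    intro j
    have h : ∃ j', n j' = n j := ⟨j, rfl⟩
    rw [hcdef]
    simp only [dif_pos h]
    congr 1
    exact hn h.choose_spec
  have hcall : ∀ γ, ‖c γ‖ = 1 := by
    intro γ
    rw [hcdef]
    by_cases h : ∃ j, n j = γ
    · simp only [dif_pos h]; exact hζ _
    · simp only [dif_neg h]; norm_num
  set F : Finset Γ := Finset.image n Finset.univ with hF
  have hFne : F.Nonempty := by
    rw [hF]
    apply Finset.Nonempty.image
    exact Finset.univ_nonempty_iff.mpr (Fin.pos_iff_nonempty.mp hk)
  set xs : Γ → sphere (0 : C₀(Γ,ℂ)) 1 := fun γ => bvec γ (c γ) (hcall γ) with hxs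
  have hnorm : ‖usum F c‖ = 1 := norm_usum F c hFne (fun γ _ => hcall γ)
  have hadd := sum_additive Δ hΔiso hΔsurj F hFne c (fun γ _ => hcall γ) xs
    (fun γ _ => rfl) (sph (usum F c) hnorm) rfl
  have himg : ∑ γ ∈ F, (Δ (xs γ) : X) = ∑ j, (Δ (xs (n j)) : X) := by
    rw [hF]
    apply Finset.sum_image
    intro x _ y _ h
    exact hn h
  have hxsnj : ∀ j, xs (n j) = bvec (n j) (ζ j) (hζ j) := by
    intro j
    apply Subtype.ext
    show c (n j) • stdBasis (n j) = ζ j • stdBasis (n j)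
    rw [hcnj j]
  have : ∑ j, (Δ (bvec (n j) (ζ j) (hζ j)) : X) = (Δ (sph (usum F c) hnorm) : X) := by
    rw [hadd, himg]
    apply Finset.sum_congr rfl
    intro j _
    rw [hxsnj j]
  rw [this]
  exact sphere_norm _

end Main9
section Main10

open TingleyC0

variable {Γ : Type*} [TopologicalSpace Γ] [DiscreteTopology Γ] [DecidableEq Γ]
  {X : Type*} [NormedAddCommGroup X] [NormedSpace ℂ X]
  (Δ : sphere (0 : C₀(Γ, ℂ)) 1 → sphere (0 : X) 1)
  (hΔiso : Isometry Δ) (hΔsurj : Function.Surjective Δ)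

set_option linter.unusedSectionVars false
set_option maxHeartbeats 1000000

include hΔiso hΔsurj in
lemma upper_bound (k : ℕ) (hk : 0 < k) (n : Fin k → Γ) (hn : Function.Injective n)
    (y : Fin k → sphere (0 : C₀(Γ,ℂ)) 1) (hy : ∀ j, (y j : C₀(Γ,ℂ)) = stdBasis (n j)) :
    ∀ (m : ℕ) (α : Fin k → ℂ), (∀ j, ‖α j‖ ≤ 1) → (∀ j : Fin k, m ≤ (j:ℕ) → ‖α j‖ = 1) →
      ‖∑ j, α j • (Δ (y j) : X)‖ ≤ 1 := by
  intro m
  induction m with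
  | zero =>
    intro α h1 h2
    exact le_of_eq (unimodular_sum Δ hΔiso hΔsurj k hk n hn y hy α
      (fun j => h2 j (Nat.zero_le _)))
  | succ m ih =>
    intro α h1 h2
    by_cases hmk : m < k
    · set jm : Fin k := ⟨m, hmk⟩ with hjm
      obtain ⟨γ, γ', hγ, hγ', hdec⟩ := sc_decomp (h1 jm)
      set αp : Fin k → ℂ := Function.update α jm γ with hαp
      set αm : Fin k → ℂ := Function.update α jm γ' with hαm
      have hp1 : ∀ j, ‖αp j‖ ≤ 1 := by
        intro j
        by_cases h : j = jm
        · rw [hαp, h, Function.update_self]; exact le_of_eq hγ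
        · rw [hαp, Function.update_of_ne h]; exact h1 j
      have hm1 : ∀ j, ‖αm j‖ ≤ 1 := by
        intro j
        by_cases h : j = jm
        · rw [hαm, h, Function.update_self]; exact le_of_eq hγ'
        · rw [hαm, Function.update_of_ne h]; exact h1 j
      have hp2 : ∀ j : Fin k, m ≤ (j:ℕ) → ‖αp j‖ = 1 := by
        intro j hj
        by_cases h : j = jm
        · rw [hαp, h, Function.update_self]; exact hγ
        · rw [hαp, Function.update_of_ne h]
          apply h2
          have : (j:ℕ) ≠ m := by
            intro hc
            exact h (Fin.ext hc)
          omega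
      have hm2 : ∀ j : Fin k, m ≤ (j:ℕ) → ‖αm j‖ = 1 := by
        intro j hj
        by_cases h : j = jm
        · rw [hαm, h, Function.update_self]; exact hγ'
        · rw [hαm, Function.update_of_ne h]
          apply h2
          have : (j:ℕ) ≠ m := by
            intro hc
            exact h (Fin.ext hc)
          omega
      have hsplit : (∑ j, α j • (Δ (y j) : X))
          = (2⁻¹ : ℂ) • ((∑ j, αp j • (Δ (y j) : X)) + (∑ j, αm j • (Δ (y j) : X))) := by
        rw [← Finset.sum_add_distrib, Finset.smul_sum]
        apply Finset.sum_congr rfl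
        intro j _
        by_cases h : j = jm
        · subst h
          rw [hαp, hαm, Function.update_self, Function.update_self, hdec]
          module
        · rw [hαp, hαm, Function.update_of_ne h, Function.update_of_ne h]
          module
      rw [hsplit, norm_smul]
      have h12 : ‖(2⁻¹ : ℂ)‖ = 2⁻¹ := by norm_num
      rw [h12]
      have hb := norm_add_le (∑ j, αp j • (Δ (y j) : X)) (∑ j, αm j • (Δ (y j) : X))
      have hbp := ih αp hp1 hp2
      have hbm := ih αm hm1 hm2
      linarith
    · apply ih α h1
      intro j hj
      exact absurd hj (not_le.2 (lt_of_lt_of_le j.isLt (not_lt.1 hmk)))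

include hΔiso hΔsurj in
lemma m_orthogonal (k : ℕ) (hk : 0 < k) (n : Fin k → Γ) (hn : Function.Injective n)
    (y : Fin k → sphere (0 : C₀(Γ,ℂ)) 1) (hy : ∀ j, (y j : C₀(Γ,ℂ)) = stdBasis (n j))
    (α : Fin k → ℂ) (Hne : (Finset.univ : Finset (Fin k)).Nonempty) :
    ‖∑ j, α j • (Δ (y j) : X)‖ = Finset.univ.sup' Hne (fun j => ‖α j‖) := by
  classical
  have hyb : ∀ j, y j = bvec (n j) 1 norm_one_c := by
    intro j
    apply Subtype.ext
    rw [hy j]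
    show stdBasis (n j) = (1:ℂ) • stdBasis (n j)
    rw [one_smul]
  set M : ℝ := Finset.univ.sup' Hne (fun j => ‖α j‖) with hM
  obtain ⟨jstar, _, hjstar⟩ := Finset.exists_mem_eq_sup' Hne (fun j => ‖α j‖)
  have hlower : ∀ j₀ : Fin k, ‖α j₀‖ ≤ ‖∑ j, α j • (Δ (y j) : X)‖ := by
    intro j₀
    obtain ⟨gf, hgf1, hgfn, hgf0⟩ := exists_biorth Δ hΔiso hΔsurj (n j₀)
    have hval : gf (∑ j, α j • (Δ (y j) : X)) = α j₀ := by
      rw [map_sum]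
      have he : ∀ j, gf (α j • (Δ (y j) : X)) = α j * gf ((Δ (y j) : X)) := by
        intro j
        rw [map_smul]
        rfl
      rw [Finset.sum_congr rfl (fun j _ => he j)]
      rw [Finset.sum_eq_single j₀]
      · rw [hyb j₀, hgfn, mul_one]
      · intro j _ hj
        rw [hyb j, hgf0 (n j) (fun hc => hj (hn hc)) 1 norm_one_c, mul_zero]
      · intro hc
        exact absurd (Finset.mem_univ j₀) hc
    calc ‖α j₀‖ = ‖gf (∑ j, α j • (Δ (y j) : X))‖ := by rw [hval]
      _ ≤ ‖gf‖ * ‖∑ j, α j • (Δ (y j) : X)‖ := gf.le_opNorm _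
      _ ≤ 1 * ‖∑ j, α j • (Δ (y j) : X)‖ := by
          apply mul_le_mul_of_nonneg_right hgf1 (norm_nonneg _)
      _ = ‖∑ j, α j • (Δ (y j) : X)‖ := one_mul _
  by_cases hM0 : M = 0
  · have hα0 : ∀ j, α j = 0 := by
      intro j
      have := Finset.le_sup' (fun j => ‖α j‖) (Finset.mem_univ j)
      rw [← hM, hM0] at this
      exact norm_le_zero_iff.1 this
    have : (∑ j, α j • (Δ (y j) : X)) = 0 := by
      apply Finset.sum_eq_zero
      intro j _
      rw [hα0 j, zero_smul]
    rw [this, hM0, norm_zero]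
  · have hMpos : 0 < M := by
      have h0 : 0 ≤ M := le_trans (norm_nonneg (α jstar)) (le_of_eq hjstar.symm)
      exact lt_of_le_of_ne h0 (Ne.symm hM0)
    refine le_antisymm ?_ ?_
    · set β : Fin k → ℂ := fun j => (M:ℂ)⁻¹ * α j with hβ
      have hβ1 : ∀ j, ‖β j‖ ≤ 1 := by
        intro j
        rw [hβ]
        simp only []
        rw [norm_mul, norm_inv, Complex.norm_real, Real.norm_eq_abs, abs_of_pos hMpos]
        rw [inv_mul_le_iff₀ hMpos, mul_one]
        exact Finset.le_sup' (fun j => ‖α j‖) (Finset.mem_univ j)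
      have hupper := upper_bound Δ hΔiso hΔsurj k hk n hn y hy k β hβ1
        (fun j hj => absurd hj (not_le.2 j.isLt))
      have hsmul : (∑ j, α j • (Δ (y j) : X)) = (M:ℂ) • (∑ j, β j • (Δ (y j) : X)) := by
        rw [Finset.smul_sum]
        apply Finset.sum_congr rfl
        intro j _
        rw [hβ]
        simp only []
        rw [smul_smul, ← mul_assoc, mul_inv_cancel₀ (by
          simp only [ne_eq, Complex.ofReal_eq_zero]; exact ne_of_gt hMpos), one_mul]
      rw [hsmul, norm_smul, Complex.norm_real, Real.norm_eq_abs, abs_of_pos hMpos]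
      calc M * ‖∑ j, β j • (Δ (y j) : X)‖ ≤ M * 1 :=
        mul_le_mul_of_nonneg_left hupper (le_of_lt hMpos)
        _ = M := mul_one M
    · rw [hM, hjstar]
      exact hlower jstar

include hΔiso hΔsurj in
lemma part_one (k : ℕ) (hk : 0 < k) (n : Fin k → Γ) (hn : Function.Injective n)
    (α : Fin k → ℂ) (hα : ∀ j, ‖α j‖ = 1)
    (x : Fin k → sphere (0 : C₀(Γ,ℂ)) 1)
    (hx : ∀ j, (x j : C₀(Γ,ℂ)) = α j • stdBasis (n j))
    (s : sphere (0 : C₀(Γ,ℂ)) 1) (hs : (s : C₀(Γ,ℂ)) = ∑ j, α j • stdBasis (n j)) :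
    ∑ j, (Δ (x j) : X) = (Δ s : X) := by
  classical
  set c : Γ → ℂ := fun γ => if h : ∃ j, n j = γ then α h.choose else 1 with hcdef
  have hcnj : ∀ j, c (n j) = α j := by
    intro j
    have h : ∃ j', n j' = n j := ⟨j, rfl⟩
    rw [hcdef]
    simp only [dif_pos h]
    congr 1
    exact hn h.choose_spec
  have hcall : ∀ γ, ‖c γ‖ = 1 := by
    intro γ
    rw [hcdef]
    by_cases h : ∃ j, n j = γ
    · simp only [dif_pos h]; exact hα _
    · simp only [dif_neg h]; norm_num
  set F : Finset Γ := Finset.image n Finset.univ with hF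
  have hFne : F.Nonempty := by
    rw [hF]
    apply Finset.Nonempty.image
    exact Finset.univ_nonempty_iff.mpr (Fin.pos_iff_nonempty.mp hk)
  have husum : usum F c = ∑ j, α j • stdBasis (n j) := by
    rw [usum, hF]
    rw [Finset.sum_image (fun a _ b _ h => hn h)]
    apply Finset.sum_congr rfl
    intro j _
    rw [hcnj j]
  set xs : Γ → sphere (0 : C₀(Γ,ℂ)) 1 := fun γ => bvec γ (c γ) (hcall γ) with hxs
  have hnorm : ‖usum F c‖ = 1 := norm_usum F c hFne (fun γ _ => hcall γ)
  have hseq : s = sph (usum F c) hnorm := by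
    apply Subtype.ext
    rw [hs]
    show _ = usum F c
    rw [husum]
  have hadd := sum_additive Δ hΔiso hΔsurj F hFne c (fun γ _ => hcall γ) xs
    (fun γ _ => rfl) (sph (usum F c) hnorm) rfl
  have himg : ∑ γ ∈ F, (Δ (xs γ) : X) = ∑ j, (Δ (xs (n j)) : X) := by
    rw [hF]
    apply Finset.sum_image
    intro a _ b _ h
    exact hn h
  have hxsnj : ∀ j, xs (n j) = x j := by
    intro j
    apply Subtype.ext
    show c (n j) • stdBasis (n j) = _
    rw [hcnj j, hx j]
  rw [hseq, hadd, himg]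
  apply Finset.sum_congr rfl
  intro j _
  rw [hxsnj j]

end Main10

/-- For distinct coordinates `n₁, …, n_k`, `Δ` is additive on unimodular combinations of the
basis vectors, and the family `{Δ(e_{n_j})}` is completely `M`-orthogonal. -/
theorem additivity_and_complete_M_orthogonality {Γ : Type*} [TopologicalSpace Γ]
    [DiscreteTopology Γ] [DecidableEq Γ] [Infinite Γ]
    {X : Type*} [NormedAddCommGroup X] [NormedSpace ℂ X] [CompleteSpace X]
    (Δ : sphere (0 : C₀(Γ, ℂ)) 1 → sphere (0 : X) 1)
    (hΔiso : Isometry Δ) (hΔsurj : Function.Surjective Δ)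
    (k : ℕ) (hk : 0 < k) (n : Fin k → Γ) (hn : Function.Injective n) :
    (∀ α : Fin k → ℂ, (∀ j, ‖α j‖ = 1) →
      ∀ x : Fin k → sphere (0 : C₀(Γ, ℂ)) 1, (∀ j, (x j : C₀(Γ, ℂ)) = α j • stdBasis (n j)) →
      ∀ s : sphere (0 : C₀(Γ, ℂ)) 1, (s : C₀(Γ, ℂ)) = ∑ j, α j • stdBasis (n j) →
        ∑ j, (Δ (x j) : X) = (Δ s : X)) ∧
    (∀ y : Fin k → sphere (0 : C₀(Γ, ℂ)) 1, (∀ j, (y j : C₀(Γ, ℂ)) = stdBasis (n j)) →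
      ∀ α : Fin k → ℂ, ‖∑ j, α j • (Δ (y j) : X)‖ =
        Finset.univ.sup' (Finset.univ_nonempty_iff.mpr (Fin.pos_iff_nonempty.mp hk))
          (fun j => ‖α j‖)) := by
  constructor
  · intro α hα x hx s hs
    exact part_one Δ hΔiso hΔsurj k hk n hn α hα x hx s hs
  · intro y hy α
    exact m_orthogonal Δ hΔiso hΔsurj k hk n hn y hy α _
end

section
/- In the three dimensional complex space ℓ∞³, the elements x = (1, 1/2, 0) and y = (0, (√3 i)/2, 1) are M-orthogonal (‖x ± y‖ = max{‖x‖, ‖y‖} = 1) but not completely M-orthogonal (there exist α, β ∈ ℂ with ‖αx + βy‖ ≠ max{|α|, |β|}). -/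
lemma norm_vec3 (a b c : ℂ) : ‖![a,b,c]‖ = max ‖a‖ (max ‖b‖ ‖c‖) := by
  simp [Pi.norm_def]
  rw [show (Finset.univ : Finset (Fin 3)) = {0,1,2} by decide]
  simp [Finset.sup_insert]

lemma s3 : Real.sqrt 3 ^ 2 = 3 := Real.sq_sqrt (by norm_num)

lemma norm_mid (t : ℝ) (ht : t^2 = 1) :
    ‖(1/2 : ℂ) + (t:ℂ) * ((Real.sqrt 3 : ℂ) * Complex.I / 2)‖ = 1 := by
  rw [Complex.norm_def]
  rw [show (1:ℝ) = Real.sqrt 1 by simp]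
  congr 1
  simp [Complex.normSq_apply, Complex.add_re, Complex.add_im, Complex.div_re,
    Complex.div_im, Complex.mul_re, Complex.mul_im]
  nlinarith [s3]

/-- In `ℓ∞³ = (ℂ³, ‖·‖∞)`, the elements `x = (1, 1/2, 0)` and `y = (0, (√3 i)/2, 1)` are
`M`-orthogonal but not completely `M`-orthogonal. -/
theorem M_orthogonal_not_completely_M_orthogonal :
    let x : Fin 3 → ℂ := ![1, 1/2, 0]
    let y : Fin 3 → ℂ := ![0, (Real.sqrt 3 : ℂ) * Complex.I / 2, 1]
    ‖x‖ = 1 ∧ ‖y‖ = 1 ∧ ‖x + y‖ = max ‖x‖ ‖y‖ ∧ ‖x - y‖ = max ‖x‖ ‖y‖ ∧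
      ∃ α β : ℂ, ‖α • x + β • y‖ ≠ max ‖α‖ ‖β‖ := by
  intro x y
  have hs : ‖((Real.sqrt 3 : ℂ) * Complex.I / 2)‖ = Real.sqrt 3 / 2 := by
    simp [abs_of_nonneg (Real.sqrt_nonneg 3)]
  have hs2 : Real.sqrt 3 / 2 ≤ 1 := by nlinarith [s3, Real.sqrt_nonneg 3]
  have hx : ‖x‖ = 1 := by
    show ‖![(1:ℂ), 1/2, 0]‖ = 1
    rw [norm_vec3]; norm_num
  have hy : ‖y‖ = 1 := by
    show ‖![(0:ℂ), (Real.sqrt 3 : ℂ) * Complex.I / 2, 1]‖ = 1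
    rw [norm_vec3, hs]; rw [max_eq_right, max_eq_right] <;> norm_num [hs2]
  refine ⟨hx, hy, ?_, ?_, ?_⟩
  · have hxy : x + y = ![1, 1/2 + (Real.sqrt 3 : ℂ) * Complex.I / 2, 1] := by
      show (![1, 1/2, 0] + ![0, (Real.sqrt 3 : ℂ) * Complex.I / 2, 1]) = _
      funext i; fin_cases i <;> simp
    rw [hxy, norm_vec3, hx, hy]
    rw [show (1/2 : ℂ) + (Real.sqrt 3 : ℂ) * Complex.I / 2
        = 1/2 + ((1:ℝ):ℂ) * ((Real.sqrt 3 : ℂ) * Complex.I / 2) by push_cast; ring]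
    rw [norm_mid 1 (by norm_num)]
    norm_num
  · have hxy : x - y = ![1, 1/2 - (Real.sqrt 3 : ℂ) * Complex.I / 2, -1] := by
      show (![1, 1/2, 0] - ![0, (Real.sqrt 3 : ℂ) * Complex.I / 2, 1]) = _
      funext i; fin_cases i <;> simp
    rw [hxy, norm_vec3, hx, hy]
    rw [show (1/2 : ℂ) - (Real.sqrt 3 : ℂ) * Complex.I / 2
        = 1/2 + ((-1:ℝ):ℂ) * ((Real.sqrt 3 : ℂ) * Complex.I / 2) by push_cast; ring]
    rw [norm_mid (-1) (by norm_num)]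
    norm_num
  · refine ⟨1, -Complex.I, ?_⟩
    have hv : (1:ℂ) • x + (-Complex.I) • y = ![1, 1/2 + (Real.sqrt 3 : ℂ)/2, -Complex.I] := by
      show (1:ℂ) • ![(1:ℂ), 1/2, 0] + (-Complex.I) • ![0, (Real.sqrt 3 : ℂ) * Complex.I / 2, 1] = _
      funext i
      fin_cases i <;> simp [smul_eq_mul] <;> ring_nf <;> simp [Complex.I_sq] <;> ring
    rw [hv, norm_vec3]
    have h2 : ‖(1/2 : ℂ) + (Real.sqrt 3 : ℂ)/2‖ = 1/2 + Real.sqrt 3 / 2 := by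
      rw [show (1/2 : ℂ) + (Real.sqrt 3 : ℂ)/2 = ((1/2 + Real.sqrt 3/2 : ℝ) : ℂ) by push_cast; ring]
      rw [Complex.norm_real, Real.norm_of_nonneg (by positivity)]
    have h3 : (1:ℝ) < Real.sqrt 3 := by nlinarith [s3, Real.sqrt_nonneg 3]
    rw [h2]
    simp only [norm_one, norm_neg, Complex.norm_I]
    intro h
    rw [max_self] at h
    have hlt : (1:ℝ) < max 1 (max (1/2 + Real.sqrt 3/2) 1) :=
      lt_max_of_lt_right (lt_max_of_lt_left (by linarith))
    rw [h] at hlt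
    exact lt_irrefl _ hlt
end
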